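/- arXiv:2004.00424 — 12 statements merged into one kernel-verified Lean document; each statement's English description precedes it below -/
import Mathlib

section
/- If h : (-a,a) → ℝ is any C^1 function with h'(0) = 1 satisfying Schröder's equation h(D(x)) = λ h(x) for all x ∈ (-a,a), then for every x ∈ (-a,a) the infinite product ∏_{i=0}^{∞} D'(D^i(x))/λ converges and h'(x) = ∏_{i=0}^{∞} D'(D^i(x))/λ. -/
/-- If `h` is any `C¹` function on `(-a,a)` with `h'(0) = 1` satisfying Schröder's
equation `h (D x) = λ h x`, then for every `x ∈ (-a,a)` the infinite product
`∏_{i=0}^∞ D'(Dⁱ(x))/λ` converges and equals `h'(x)`. -/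
theorem deriv_conjugation_eq_infinite_prod
    (a ε : ℝ) (ha : 0 < a) (hε : 0 < ε) (D : ℝ → ℝ) (lam : ℝ)
    (hD : ContDiffOn ℝ 1 D (Set.Ioo (-a) a))
    (hHolder : ∃ k > 0, ∀ y ∈ Set.Ioo (-a) a, ∀ z ∈ Set.Ioo (-a) a,
      |deriv D z - deriv D y| ≤ k * |z - y| ^ ε)
    (hD0 : D 0 = 0)
    (hlam : deriv D 0 = lam) (hlam0 : 0 < lam) (hlam1 : lam < 1)
    (hcontract : ∀ x ∈ Set.Ioo (-a) a, x ≠ 0 → |D x| < |x|)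
    (h : ℝ → ℝ)
    (hh : ContDiffOn ℝ 1 h (Set.Ioo (-a) a))
    (hh'0 : deriv h 0 = 1)
    (hSch : ∀ x ∈ Set.Ioo (-a) a, h (D x) = lam * h x) :
    ∀ x ∈ Set.Ioo (-a) a,
      Filter.Tendsto (fun n : ℕ => ∏ i ∈ Finset.range n, deriv D (D^[i] x) / lam)
        Filter.atTop (nhds (deriv h x)) := by
  intro x hx
  set s := Set.Ioo (-a) a with hs_def
  have hs : IsOpen s := isOpen_Ioo
  have hmem_iff : ∀ z : ℝ, z ∈ s ↔ |z| < a := by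
    intro z; rw [hs_def, Set.mem_Ioo, abs_lt]
  have h0s : (0 : ℝ) ∈ s := by rw [hmem_iff]; simpa using ha
  -- D maps s into s, and |D z| ≤ |z|
  have hDle : ∀ z ∈ s, |D z| ≤ |z| := by
    intro z hz
    by_cases hz0 : z = 0
    · simp [hz0, hD0]
    · exact (hcontract z hz hz0).le
  have hDmem : ∀ z ∈ s, D z ∈ s := by
    intro z hz
    rw [hmem_iff]
    exact lt_of_le_of_lt (hDle z hz) ((hmem_iff z).mp hz)
  -- the orbit
  set y : ℕ → ℝ := fun n => D^[n] x with hy_def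
  have hy0 : y 0 = x := rfl
  have hysucc : ∀ n, y (n + 1) = D (y n) := by
    intro n; simp [hy_def, Function.iterate_succ_apply']
  have hymem : ∀ n, y n ∈ s := by
    intro n; induction n with
    | zero => simpa [hy0] using hx
    | succ n ih => rw [hysucc]; exact hDmem _ ih
  have hyabs_le : ∀ n, |y (n + 1)| ≤ |y n| := by
    intro n; rw [hysucc]; exact hDle _ (hymem n)
  have hyanti : Antitone (fun n => |y n|) :=
    antitone_nat_of_succ_le hyabs_le
  have hyle0 : ∀ n, |y n| ≤ |x| := by
    intro n; simpa [hy0] using hyanti (Nat.zero_le n)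
  -- convergence of the orbit to 0
  have hbdd : BddBelow (Set.range fun n => |y n|) :=
    ⟨0, by rintro t ⟨n, rfl⟩; exact abs_nonneg _⟩
  set L : ℝ := ⨅ n, |y n| with hL_def
  have hLle : ∀ n, L ≤ |y n| := fun n => ciInf_le hbdd n
  have hL0 : 0 ≤ L := le_ciInf fun n => abs_nonneg _
  have hLzero : L = 0 := by
    by_contra hLne
    have hLpos : 0 < L := lt_of_le_of_ne hL0 (Ne.symm hLne)
    set K : Set ℝ := abs ⁻¹' Set.Icc L |x| with hK_def
    have hKclosed : IsClosed K := isClosed_Icc.preimage continuous_abs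
    have hKsub : K ⊆ Set.Icc (-|x|) |x| := by
      intro z hz
      rcases hz with ⟨_, h2⟩
      constructor <;> [linarith [neg_abs_le z, abs_nonneg z]; linarith [le_abs_self z]]
    have hKcomp : IsCompact K := isCompact_Icc.of_isClosed_subset hKclosed hKsub
    have hKs : K ⊆ s := by
      intro z hz
      rw [hmem_iff]
      exact lt_of_le_of_lt hz.2 ((hmem_iff x).mp hx)
    have hKne : K.Nonempty := ⟨x, ⟨by simpa [hy0] using hLle 0, le_rfl⟩⟩
    have hKnz : ∀ z ∈ K, z ≠ 0 := by
      intro z hz hz0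
      rw [hz0] at hz
      have := hz.1
      simp at this
      linarith
    have hgcont : ContinuousOn (fun z => |D z| / |z|) K := by
      apply ContinuousOn.div
      · exact continuous_abs.comp_continuousOn ((hD.continuousOn).mono hKs)
      · exact continuous_abs.continuousOn
      · intro z hz; exact abs_ne_zero.mpr (hKnz z hz)
    obtain ⟨z, hzK, hzmax⟩ := hKcomp.exists_isMaxOn hKne hgcont
    set c : ℝ := |D z| / |z| with hc_def
    have hzpos : 0 < |z| := abs_pos.mpr (hKnz z hzK)
    have hc1 : c < 1 := by
      rw [hc_def, div_lt_one hzpos]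
      exact hcontract z (hKs hzK) (hKnz z hzK)
    have hc0 : 0 ≤ c := div_nonneg (abs_nonneg _) (abs_nonneg _)
    have hbound : ∀ n, |y n| ≤ c ^ n * |x| := by
      intro n; induction n with
      | zero => simp [hy0]
      | succ n ih =>
        have hynK : y n ∈ K := ⟨hLle n, hyle0 n⟩
        have hynpos : 0 < |y n| := abs_pos.mpr (hKnz _ hynK)
        have : |y (n + 1)| = (|D (y n)| / |y n|) * |y n| := by
          rw [hysucc]; field_simp
        calc |y (n + 1)| = (|D (y n)| / |y n|) * |y n| := this
          _ ≤ c * |y n| := by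
              exact mul_le_mul_of_nonneg_right (hzmax hynK) hynpos.le
          _ ≤ c * (c ^ n * |x|) := by
              exact mul_le_mul_of_nonneg_left ih hc0
          _ = c ^ (n + 1) * |x| := by ring
    have htend : Filter.Tendsto (fun n => c ^ n * |x|) Filter.atTop (nhds 0) := by
      have := (tendsto_pow_atTop_nhds_zero_of_lt_one hc0 hc1).mul_const |x|
      simpa using this
    have : L ≤ 0 := ge_of_tendsto htend (Filter.Eventually.of_forall fun n =>
      le_trans (hLle n) (hbound n))
    linarith
  have hyabs_tend : Filter.Tendsto (fun n => |y n|) Filter.atTop (nhds 0) := by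
    have := tendsto_atTop_ciInf hyanti hbdd
    rwa [← hL_def, hLzero] at this
  have hytend : Filter.Tendsto y Filter.atTop (nhds 0) := by
    rw [tendsto_zero_iff_abs_tendsto_zero]
    exact hyabs_tend
  -- key derivative identity
  have hkey : ∀ z ∈ s, deriv h z = deriv h (D z) * (deriv D z / lam) := by
    intro z hz
    have hDdiff : DifferentiableAt ℝ D z :=
      (hD.contDiffAt (hs.mem_nhds hz)).differentiableAt one_ne_zero
    have hhdiff : DifferentiableAt ℝ h (D z) :=
      (hh.contDiffAt (hs.mem_nhds (hDmem z hz))).differentiableAt one_ne_zero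
    have heq : (fun w => h (D w)) =ᶠ[nhds z] (fun w => lam * h w) := by
      filter_upwards [hs.mem_nhds hz] with w hw
      exact hSch w hw
    have h1 : deriv (fun w => h (D w)) z = deriv h (D z) * deriv D z :=
      deriv_comp z hhdiff hDdiff
    have h2 : deriv (fun w => lam * h w) z = lam * deriv h z := by
      simp [deriv_const_mul_field]
    have h3 : deriv h (D z) * deriv D z = lam * deriv h z := by
      rw [← h1, ← h2]; exact heq.deriv_eq
    field_simp
    linarith [h3]
  -- product identity
  have hprod : ∀ n, deriv h x
      = deriv h (y n) * ∏ i ∈ Finset.range n, deriv D (y i) / lam := by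
    intro n; induction n with
    | zero => simp [hy0]
    | succ n ih =>
      rw [Finset.prod_range_succ, ih, hkey (y n) (hymem n), ← hysucc]
      ring
  -- continuity of deriv h at 0
  have hcontderiv : ContinuousOn (deriv h) s :=
    hh.continuousOn_deriv_of_isOpen hs le_rfl
  have hcontAt : ContinuousAt (deriv h) 0 :=
    hcontderiv.continuousAt (hs.mem_nhds h0s)
  have hG : Filter.Tendsto (fun n => deriv h (y n)) Filter.atTop (nhds 1) := by
    have := hcontAt.tendsto.comp hytend
    rwa [hh'0] at this
  have hne : ∀ᶠ n in Filter.atTop, deriv h (y n) ≠ 0 :=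
    hG.eventually_ne one_ne_zero
  have hdiv : Filter.Tendsto (fun n => deriv h x / deriv h (y n))
      Filter.atTop (nhds (deriv h x)) := by
    have := Filter.Tendsto.div (tendsto_const_nhds (x := deriv h x)) hG one_ne_zero
    rw [div_one] at this; exact this
  apply hdiv.congr'
  filter_upwards [hne] with n hn
  have hyi : ∀ i, D^[i] x = y i := fun i => rfl
  simp only [hyi]
  rw [hprod n]
  field_simp
end

section
/- The conjugation is unique: if h₁, h₂ : (-a,a) → ℝ are C^1 functions with h₁(0) = h₂(0) = 0 and h₁'(0) = h₂'(0) = 1, both satisfying Schröder's equation h(D(x)) = λ h(x) for all x ∈ (-a,a), then h₁(x) = h₂(x) for all x ∈ (-a,a). -/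
open Set Filter Topology

/-- **Uniqueness of the conjugation.** If `h₁, h₂` are `C¹` functions on `(-a,a)` with
`h₁ 0 = h₂ 0 = 0`, `h₁' 0 = h₂' 0 = 1`, both satisfying Schröder's equation
`h (D x) = λ h x` on `(-a,a)`, then `h₁ = h₂` on `(-a,a)`. -/
theorem conjugation_unique
    (a ε : ℝ) (ha : 0 < a) (hε : 0 < ε) (D : ℝ → ℝ) (lam : ℝ)
    (hD : ContDiffOn ℝ 1 D (Set.Ioo (-a) a))
    (hHolder : ∃ k > 0, ∀ y ∈ Set.Ioo (-a) a, ∀ z ∈ Set.Ioo (-a) a,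
      |deriv D z - deriv D y| ≤ k * |z - y| ^ ε)
    (hD0 : D 0 = 0)
    (hlam : deriv D 0 = lam) (hlam0 : 0 < lam) (hlam1 : lam < 1)
    (hcontract : ∀ x ∈ Set.Ioo (-a) a, x ≠ 0 → |D x| < |x|)
    (h₁ h₂ : ℝ → ℝ)
    (hh₁ : ContDiffOn ℝ 1 h₁ (Set.Ioo (-a) a))
    (hh₂ : ContDiffOn ℝ 1 h₂ (Set.Ioo (-a) a))
    (hh₁0 : h₁ 0 = 0) (hh₂0 : h₂ 0 = 0)
    (hh₁'0 : deriv h₁ 0 = 1) (hh₂'0 : deriv h₂ 0 = 1)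
    (hSch₁ : ∀ x ∈ Set.Ioo (-a) a, h₁ (D x) = lam * h₁ x)
    (hSch₂ : ∀ x ∈ Set.Ioo (-a) a, h₂ (D x) = lam * h₂ x) :
    ∀ x ∈ Set.Ioo (-a) a, h₁ x = h₂ x := by
  obtain ⟨k, hk, hHol⟩ := hHolder
  have hIoo : IsOpen (Set.Ioo (-a) a) := isOpen_Ioo
  have h0mem : (0:ℝ) ∈ Set.Ioo (-a) a := ⟨by linarith, ha⟩
  have hle : ∀ y ∈ Set.Ioo (-a) a, |D y| ≤ |y| := by
    intro y hy
    rcases eq_or_ne y 0 with rfl | hy0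
    · simp [hD0]
    · exact (hcontract y hy hy0).le
  have hDdiff : ∀ y ∈ Set.Ioo (-a) a, DifferentiableAt ℝ D y := fun y hy =>
    (hD.differentiableOn one_ne_zero).differentiableAt (hIoo.mem_nhds hy)
  -- key estimate via MVT and Hölder continuity of the derivative
  have hkey : ∀ y ∈ Set.Ioo (-a) a, |D y - lam * y| ≤ k * |y| ^ ε * |y| := by
    intro y hy
    rcases lt_trichotomy y 0 with hy0 | rfl | hy0
    · have hsub : Set.Icc y 0 ⊆ Set.Ioo (-a) a := fun t ht =>
        ⟨lt_of_lt_of_le hy.1 ht.1, lt_of_le_of_lt ht.2 ha⟩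
      have hsub' : Set.Ioo y 0 ⊆ Set.Ioo (-a) a := Set.Ioo_subset_Icc_self.trans hsub
      obtain ⟨c, hc, hceq⟩ := exists_hasDerivAt_eq_slope D (deriv D) hy0
        ((hD.continuousOn).mono hsub)
        (fun t ht => (hDdiff t (hsub' ht)).hasDerivAt)
      have hyne : y ≠ 0 := ne_of_lt hy0
      have hDy : D y - lam * y = (deriv D c - lam) * y := by
        rw [hceq, hD0]; field_simp; ring
      have hHc : |deriv D c - lam| ≤ k * |c| ^ ε := by
        have := hHol 0 h0mem c (hsub' hc)
        simpa [hlam] using this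
      have hcabs : |c| ≤ |y| := by
        rw [abs_of_neg hc.2, abs_of_neg hy0]
        linarith [hc.1]
      calc |D y - lam * y| = |deriv D c - lam| * |y| := by rw [hDy, abs_mul]
        _ ≤ (k * |c| ^ ε) * |y| := mul_le_mul_of_nonneg_right hHc (abs_nonneg y)
        _ ≤ k * |y| ^ ε * |y| := by
            exact mul_le_mul_of_nonneg_right
              (mul_le_mul_of_nonneg_left
                (Real.rpow_le_rpow (abs_nonneg c) hcabs hε.le) hk.le) (abs_nonneg y)
    · simp [hD0]
    · have hsub : Set.Icc 0 y ⊆ Set.Ioo (-a) a := fun t ht =>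
        ⟨lt_of_lt_of_le (by linarith) ht.1, lt_of_le_of_lt ht.2 hy.2⟩
      have hsub' : Set.Ioo 0 y ⊆ Set.Ioo (-a) a := Set.Ioo_subset_Icc_self.trans hsub
      obtain ⟨c, hc, hceq⟩ := exists_hasDerivAt_eq_slope D (deriv D) hy0
        ((hD.continuousOn).mono hsub)
        (fun t ht => (hDdiff t (hsub' ht)).hasDerivAt)
      have hyne : y ≠ 0 := ne_of_gt hy0
      have hDy : D y - lam * y = (deriv D c - lam) * y := by
        rw [hceq, hD0]; field_simp; ring
      have hHc : |deriv D c - lam| ≤ k * |c| ^ ε := by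
        have := hHol 0 h0mem c (hsub' hc)
        simpa [hlam] using this
      have hcabs : |c| ≤ |y| := by
        rw [abs_of_pos hc.1, abs_of_pos hy0]
        exact hc.2.le
      calc |D y - lam * y| = |deriv D c - lam| * |y| := by rw [hDy, abs_mul]
        _ ≤ (k * |c| ^ ε) * |y| := mul_le_mul_of_nonneg_right hHc (abs_nonneg y)
        _ ≤ k * |y| ^ ε * |y| := by
            exact mul_le_mul_of_nonneg_right
              (mul_le_mul_of_nonneg_left
                (Real.rpow_le_rpow (abs_nonneg c) hcabs hε.le) hk.le) (abs_nonneg y)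
  intro x hx
  have hxa : |x| < a := abs_lt.mpr ⟨hx.1, hx.2⟩
  set T : ℕ → ℝ := fun n => D^[n] x with hT
  set r : ℕ → ℝ := fun n => |T n| with hrdef
  have hT0 : T 0 = x := rfl
  have hTsucc : ∀ n, T (n+1) = D (T n) := fun n => Function.iterate_succ_apply' D n x
  have hr : ∀ n, r n = |T n| := fun _ => rfl
  have hTmem : ∀ n, T n ∈ Set.Ioo (-a) a ∧ r n ≤ |x| := by
    intro n; induction n with
    | zero => exact ⟨hx, le_of_eq (by rw [hr, hT0])⟩
    | succ n ih =>
      have h1 : r (n+1) ≤ r n := by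
        rw [hr, hr, hTsucc]; exact hle _ ih.1
      have h2 : r (n+1) ≤ |x| := h1.trans ih.2
      exact ⟨Set.mem_Ioo.mpr (abs_lt.mp (lt_of_le_of_lt h2 hxa)), h2⟩
  have hrnonneg : ∀ n, 0 ≤ r n := fun n => abs_nonneg _
  have hrsucc : ∀ n, r (n+1) ≤ r n := by
    intro n
    rw [hr, hr, hTsucc]; exact hle _ (hTmem n).1
  -- r tends to 0
  have hr0 : Filter.Tendsto r Filter.atTop (nhds 0) := by
    have hanti : Antitone r := antitone_nat_of_succ_le hrsucc
    have hbdd : BddBelow (Set.range r) := ⟨0, by rintro t ⟨n, rfl⟩; exact hrnonneg n⟩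
    have hL : Filter.Tendsto r Filter.atTop (nhds (⨅ n, r n)) := tendsto_atTop_ciInf hanti hbdd
    set L := ⨅ n, r n with hLdef
    obtain ⟨y, hy, φ, hφ, hφt⟩ := (isCompact_Icc (a := -|x|) (b := |x|)).tendsto_subseq
      (x := T) (fun n => Set.mem_Icc.mpr (abs_le.mp ((hTmem n).2)))
    have h1 : Filter.Tendsto (fun n => r (φ n)) Filter.atTop (nhds |y|) :=
      (continuous_abs.tendsto y).comp hφt
    have h2 : Filter.Tendsto (fun n => r (φ n)) Filter.atTop (nhds L) :=
      hL.comp hφ.tendsto_atTop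
    have hyL : |y| = L := tendsto_nhds_unique h1 h2
    have hymem : y ∈ Set.Ioo (-a) a := by
      have hxy : |y| ≤ |x| := abs_le.mpr (Set.mem_Icc.mp hy)
      exact Set.mem_Ioo.mpr (abs_lt.mp (lt_of_le_of_lt hxy hxa))
    have h3 : Filter.Tendsto (fun n => T (φ n + 1)) Filter.atTop (nhds (D y)) := by
      have hc : ContinuousAt D y := hD.continuousOn.continuousAt (hIoo.mem_nhds hymem)
      have heq : (fun n => T (φ n + 1)) = (fun n => D (T (φ n))) := by
        funext n; rw [hTsucc]
      rw [heq]
      exact hc.tendsto.comp hφt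
    have h4 : Filter.Tendsto (fun n => r (φ n + 1)) Filter.atTop (nhds |D y|) :=
      (continuous_abs.tendsto _).comp h3
    have h5 : Filter.Tendsto (fun n => r (φ n + 1)) Filter.atTop (nhds L) := by
      have : Filter.Tendsto (fun n => φ n + 1) Filter.atTop Filter.atTop :=
        (tendsto_add_atTop_nat 1).comp hφ.tendsto_atTop
      exact hL.comp this
    have hDyL : |D y| = L := tendsto_nhds_unique h4 h5
    rcases eq_or_ne y 0 with rfl | hy0
    · have hL0 : L = 0 := by simpa using hyL.symm
      rwa [hL0] at hL
    · have hc := hcontract y hymem hy0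
      rw [hDyL, hyL] at hc
      exact absurd hc (lt_irrefl L)
  -- eventually geometric decay with ratio μ
  set μ : ℝ := (1 + lam)/2 with hμdef
  have hμ0 : 0 < μ := by rw [hμdef]; linarith
  have hlamμ : lam < μ := by rw [hμdef]; linarith
  have hμ1 : μ < 1 := by rw [hμdef]; linarith
  set δ₀ : ℝ := ((μ - lam)/k) ^ (1/ε) with hδ₀def
  have hδ₀pos : 0 < δ₀ := Real.rpow_pos_of_pos (div_pos (by linarith) hk) _
  obtain ⟨N, hN⟩ := Filter.eventually_atTop.mp (hr0.eventually (gt_mem_nhds hδ₀pos))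
  have hDstep : ∀ n, r (n+1) ≤ (lam + k * r n ^ ε) * r n := by
    intro n
    have hmem := (hTmem n).1
    have hky := hkey (T n) hmem
    have h2 : |D (T n)| ≤ |lam * T n| + |D (T n) - lam * T n| := by
      calc |D (T n)| = |lam * T n + (D (T n) - lam * T n)| := by ring_nf
        _ ≤ _ := abs_add_le _ _
    rw [abs_mul, abs_of_pos hlam0] at h2
    have h6 : r (n+1) = |D (T n)| := by rw [hr, hTsucc]
    rw [h6, hr]
    nlinarith [hky, h2]
  have hstep : ∀ n, N ≤ n → r (n+1) ≤ μ * r n := by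
    intro n hn
    have h3 : k * r n ^ ε ≤ μ - lam := by
      have h4 : r n ^ ε ≤ δ₀ ^ ε := Real.rpow_le_rpow (hrnonneg n) (hN n hn).le hε.le
      have h5 : δ₀ ^ ε = (μ - lam)/k := by
        rw [hδ₀def,
          ← Real.rpow_mul (le_of_lt (div_pos (by linarith) hk)),
          one_div_mul_cancel hε.ne', Real.rpow_one]
      calc k * r n ^ ε ≤ k * ((μ - lam)/k) := by
            rw [← h5]; exact mul_le_mul_of_nonneg_left h4 hk.le
        _ = μ - lam := by field_simp
    calc r (n+1) ≤ (lam + k * r n ^ ε) * r n := hDstep n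
      _ ≤ μ * r n := by nlinarith [hrnonneg n]
  have hgeom : ∀ m, r (N + m) ≤ μ ^ m * r N := by
    intro m; induction m with
    | zero => simp
    | succ m ih =>
      have hs := hstep (N + m) (Nat.le_add_right N m)
      calc r (N + (m+1)) = r ((N + m) + 1) := by rw [Nat.add_succ]
        _ ≤ μ * r (N + m) := hs
        _ ≤ μ * (μ ^ m * r N) := mul_le_mul_of_nonneg_left ih hμ0.le
        _ = μ ^ (m+1) * r N := by ring
  set C : ℝ := |x| / μ ^ N with hCdef
  have hC0 : 0 ≤ C := by positivity
  have hrC : ∀ j, r j ≤ C * μ ^ j := by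
    intro j
    rcases le_or_gt N j with h | h
    · obtain ⟨m, rfl⟩ := Nat.exists_eq_add_of_le h
      have hCe : C * μ ^ (N + m) = μ ^ m * |x| := by
        rw [hCdef, pow_add]; field_simp
      rw [hCe]
      calc r (N + m) ≤ μ ^ m * r N := hgeom m
        _ ≤ μ ^ m * |x| := mul_le_mul_of_nonneg_left (hTmem N).2 (by positivity)
    · have h1 : μ ^ N ≤ μ ^ j := pow_le_pow_of_le_one hμ0.le hμ1.le h.le
      have h2 : |x| ≤ C * μ ^ j := by
        rw [hCdef, div_mul_eq_mul_div, le_div_iff₀ (by positivity)]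
        exact mul_le_mul_of_nonneg_left h1 (abs_nonneg x)
      exact (hTmem j).2.trans h2
  set q : ℝ := μ ^ ε with hqdef
  have hq0 : 0 ≤ q := Real.rpow_nonneg hμ0.le ε
  have hq1 : q < 1 := Real.rpow_lt_one hμ0.le hμ1 hε
  have hcj : ∀ j, (k/lam) * r j ^ ε ≤ (k/lam) * C ^ ε * q ^ j := by
    intro j
    have h1 : r j ^ ε ≤ (C * μ ^ j) ^ ε := Real.rpow_le_rpow (hrnonneg j) (hrC j) hε.le
    have h2 : (C * μ ^ j) ^ ε = C ^ ε * q ^ j := by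
      rw [Real.mul_rpow hC0 (by positivity), hqdef, ← Real.rpow_natCast μ j,
        ← Real.rpow_mul hμ0.le, mul_comm (j:ℝ) ε, Real.rpow_mul hμ0.le, Real.rpow_natCast]
    have h3 : (0:ℝ) ≤ k / lam := by positivity
    calc (k/lam) * r j ^ ε ≤ (k/lam) * (C ^ ε * q ^ j) := by
          rw [← h2]; exact mul_le_mul_of_nonneg_left h1 h3
      _ = (k/lam) * C ^ ε * q ^ j := by ring
  set S : ℝ := (k/lam) * C ^ ε * (1/(1-q)) with hSdef
  have hsum : ∀ n, ∑ j ∈ Finset.range n, (k/lam) * r j ^ ε ≤ S := by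
    intro n
    have hgs : ∑ j ∈ Finset.range n, q ^ j ≤ 1/(1-q) := by
      have h1q : 0 < 1 - q := by linarith
      rw [le_div_iff₀ h1q]
      have h2 : (∑ j ∈ Finset.range n, q ^ j) * (1 - q) = 1 - q ^ n := by
        linear_combination -(geom_sum_mul q n)
      rw [h2]
      linarith [pow_nonneg hq0 n]
    calc ∑ j ∈ Finset.range n, (k/lam) * r j ^ ε
        ≤ ∑ j ∈ Finset.range n, (k/lam) * C ^ ε * q ^ j :=
          Finset.sum_le_sum (fun j _ => hcj j)
      _ = (k/lam) * C ^ ε * ∑ j ∈ Finset.range n, q ^ j := by rw [← Finset.mul_sum]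
      _ ≤ S := by
          rw [hSdef]
          exact mul_le_mul_of_nonneg_left hgs (by positivity)
  have hlamn : ∀ n : ℕ, (0:ℝ) < lam ^ n := fun n => pow_pos hlam0 n
  have hB : ∀ n, r n / lam ^ n ≤ |x| * Real.exp S := by
    have key : ∀ n, r n / lam ^ n ≤ |x| * Real.exp (∑ j ∈ Finset.range n, (k/lam) * r j ^ ε) := by
      intro n; induction n with
      | zero => simp [hr, hT0]
      | succ n ih =>
        have h1 : r (n+1) ≤ (lam + k * r n ^ ε) * r n := hDstep n
        have h7 : r (n+1) / lam ^ (n+1) ≤ (1 + (k/lam) * r n ^ ε) * (r n / lam ^ n) := by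
          have heq : (lam + k * r n ^ ε) * r n / lam ^ (n+1)
              = (1 + (k/lam) * r n ^ ε) * (r n / lam ^ n) := by
            have hl : lam ≠ 0 := hlam0.ne'
            have hln : lam ^ n ≠ 0 := (hlamn n).ne'
            rw [pow_succ]
            field_simp
          rw [← heq]
          exact (div_le_div_iff_of_pos_right (hlamn (n+1))).mpr h1
        have hcn0 : (0:ℝ) ≤ (k/lam) * r n ^ ε := by positivity
        have hBn0 : (0:ℝ) ≤ r n / lam ^ n := div_nonneg (hrnonneg n) (hlamn n).le
        calc r (n+1) / lam ^ (n+1) ≤ (1 + (k/lam) * r n ^ ε) * (r n / lam ^ n) := h7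
          _ ≤ Real.exp ((k/lam) * r n ^ ε) * (r n / lam ^ n) := by
              apply mul_le_mul_of_nonneg_right _ hBn0
              linarith [Real.add_one_le_exp ((k/lam) * r n ^ ε)]
          _ ≤ Real.exp ((k/lam) * r n ^ ε)
              * (|x| * Real.exp (∑ j ∈ Finset.range n, (k/lam) * r j ^ ε)) :=
              mul_le_mul_of_nonneg_left ih (Real.exp_nonneg _)
          _ = |x| * Real.exp (∑ j ∈ Finset.range (n+1), (k/lam) * r j ^ ε) := by
              rw [Finset.sum_range_succ, Real.exp_add]; ring
    intro n
    exact (key n).trans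
      (mul_le_mul_of_nonneg_left (Real.exp_le_exp.mpr (hsum n)) (abs_nonneg x))
  set M : ℝ := |x| * Real.exp S with hMdef
  have hM0 : 0 ≤ M := by positivity
  -- Schröder for the difference
  have hφiter : ∀ n, h₁ (T n) - h₂ (T n) = lam ^ n * (h₁ x - h₂ x) := by
    intro n; induction n with
    | zero => rw [hT0]; ring
    | succ n ih =>
      have hmem := (hTmem n).1
      rw [hTsucc, hSch₁ _ hmem, hSch₂ _ hmem]
      calc lam * h₁ (T n) - lam * h₂ (T n) = lam * (h₁ (T n) - h₂ (T n)) := by ring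
        _ = lam * (lam ^ n * (h₁ x - h₂ x)) := by rw [ih]
        _ = lam ^ (n+1) * (h₁ x - h₂ x) := by ring
  -- the difference is o(y) at 0
  have hd₁ : HasDerivAt h₁ 1 0 := by
    have hda := ((hh₁.differentiableOn one_ne_zero).differentiableAt (hIoo.mem_nhds h0mem)).hasDerivAt
    rwa [hh₁'0] at hda
  have hd₂ : HasDerivAt h₂ 1 0 := by
    have hda := ((hh₂.differentiableOn one_ne_zero).differentiableAt (hIoo.mem_nhds h0mem)).hasDerivAt
    rwa [hh₂'0] at hda
  have hφd : HasDerivAt (fun y => h₁ y - h₂ y) 0 0 := by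
    have h := hd₁.sub hd₂; rwa [sub_self] at h
  have hlo : (fun y => h₁ y - h₂ y) =o[nhds 0] (fun y => y) := by
    have hiso := hasDerivAt_iff_isLittleO.mp hφd
    simpa [hh₁0, hh₂0] using hiso
  have habs : ∀ η > 0, |h₁ x - h₂ x| ≤ η * M := by
    intro η hη
    obtain ⟨δ, hδpos, hδ⟩ := Metric.eventually_nhds_iff.mp (hlo.def hη)
    obtain ⟨n, hn⟩ := (hr0.eventually (gt_mem_nhds hδpos)).exists
    have h1 : |h₁ (T n) - h₂ (T n)| ≤ η * r n := by
      have hdist : dist (T n) 0 < δ := by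
        rw [Real.dist_eq, sub_zero]; exact hn
      have h2 := hδ hdist
      rw [Real.norm_eq_abs, Real.norm_eq_abs] at h2
      exact h2
    have h3 : |h₁ x - h₂ x| = |h₁ (T n) - h₂ (T n)| / lam ^ n := by
      rw [hφiter n, abs_mul, abs_of_pos (hlamn n)]
      field_simp
    rw [h3]
    calc |h₁ (T n) - h₂ (T n)| / lam ^ n ≤ (η * r n) / lam ^ n :=
        (div_le_div_iff_of_pos_right (hlamn n)).mpr h1
      _ = η * (r n / lam ^ n) := by ring
      _ ≤ η * M := mul_le_mul_of_nonneg_left (hB n) hη.le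
  have hfinal : |h₁ x - h₂ x| ≤ 0 := by
    refine le_of_forall_pos_le_add (fun η' hη' => ?_)
    have h4 := habs (η' / (M + 1)) (by positivity)
    have h5 : (η' / (M + 1)) * M ≤ η' := by
      rw [div_mul_eq_mul_div, div_le_iff₀ (by linarith)]
      nlinarith
    linarith
  have h6 := abs_nonneg (h₁ x - h₂ x)
  have h7 : h₁ x - h₂ x = 0 := abs_eq_zero.mp (le_antisymm hfinal h6)
  linarith
end

section
/- Assume additionally that there are constants 0 < b̄ < b < 1 and k > 0 such that b̄ < D'(x) < b and |D(x)| ≤ b|x| for all x ∈ (-a,a), and that |log D'(z) − log D'(y)| ≤ k|z−y|^ε for all y, z ∈ (-a,a). Then the series f(x) = Σ_{j=0}^{∞} (log D'(D^j(x)) − log λ) converges absolutely and uniformly on (-a,a), f(0) = 0, and |f(y) − f(x)| ≤ (k/(1−b^ε)) |x−y|^ε for all x, y ∈ (-a,a); in particular f is ε-Hölder continuous on (-a,a). -/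
lemma abs_tsum_le_of_le {g u : ℕ → ℝ} (hg : Summable fun j => |g j|)
    (hu : Summable u) (h : ∀ j, |g j| ≤ u j) : |∑' j, g j| ≤ ∑' j, u j := by
  have h1 : ‖∑' j, g j‖ ≤ ∑' j, ‖g j‖ :=
    norm_tsum_le_tsum_norm (by simpa only [Real.norm_eq_abs] using hg)
  rw [Real.norm_eq_abs] at h1
  calc |∑' j, g j| ≤ ∑' j, ‖g j‖ := h1
    _ = ∑' j, |g j| := by simp only [Real.norm_eq_abs]
    _ ≤ ∑' j, u j := Summable.tsum_le_tsum h hg hu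

/-- Under the additional bounds `b̄ < D' < b < 1`, `|D x| ≤ b |x|` and the ε-Hölder
estimate `|log D'(z) − log D'(y)| ≤ k |z−y|^ε` on `(-a,a)`, the series
`f(x) = Σ_{j=0}^∞ (log D'(Dʲ(x)) − log λ)` converges absolutely and uniformly on
`(-a,a)`, `f(0) = 0`, and `|f(y) − f(x)| ≤ (k/(1−b^ε)) |x−y|^ε` on `(-a,a)`;
in particular `f` is ε-Hölder continuous on `(-a,a)`. -/
theorem log_series_absolutely_uniformly_convergent_and_holder
    (a ε : ℝ) (ha : 0 < a) (hε : 0 < ε) (D : ℝ → ℝ) (lam : ℝ)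
    (hD : ContDiffOn ℝ 1 D (Set.Ioo (-a) a))
    (hD0 : D 0 = 0)
    (hlam : deriv D 0 = lam) (hlam0 : 0 < lam) (hlam1 : lam < 1)
    (hcontract : ∀ x ∈ Set.Ioo (-a) a, x ≠ 0 → |D x| < |x|)
    (bbar b k : ℝ)
    (hbbar0 : 0 < bbar) (hbbarb : bbar < b) (hb1 : b < 1) (hk : 0 < k)
    (hderivD : ∀ x ∈ Set.Ioo (-a) a, bbar < deriv D x ∧ deriv D x < b)
    (hDb : ∀ x ∈ Set.Ioo (-a) a, |D x| ≤ b * |x|)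
    (hlogHolder : ∀ y ∈ Set.Ioo (-a) a, ∀ z ∈ Set.Ioo (-a) a,
      |Real.log (deriv D z) - Real.log (deriv D y)| ≤ k * |z - y| ^ ε) :
    (∀ x ∈ Set.Ioo (-a) a,
      Summable (fun j : ℕ => |Real.log (deriv D (D^[j] x)) - Real.log lam|)) ∧
    TendstoUniformlyOn
      (fun (n : ℕ) (x : ℝ) =>
        ∑ j ∈ Finset.range n, (Real.log (deriv D (D^[j] x)) - Real.log lam))
      (fun x : ℝ => ∑' j : ℕ, (Real.log (deriv D (D^[j] x)) - Real.log lam))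
      Filter.atTop (Set.Ioo (-a) a) ∧
    (∑' j : ℕ, (Real.log (deriv D (D^[j] (0 : ℝ))) - Real.log lam)) = 0 ∧
    (∀ x ∈ Set.Ioo (-a) a, ∀ y ∈ Set.Ioo (-a) a,
      |(∑' j : ℕ, (Real.log (deriv D (D^[j] y)) - Real.log lam)) -
        (∑' j : ℕ, (Real.log (deriv D (D^[j] x)) - Real.log lam))| ≤
        (k / (1 - b ^ ε)) * |x - y| ^ ε) := by
  set S := Set.Ioo (-a) a with hSdef
  have hb0 : (0:ℝ) < b := lt_trans hbbar0 hbbarb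
  have hbe0 : (0:ℝ) < b ^ ε := Real.rpow_pos_of_pos hb0 ε
  have hbe1 : b ^ ε < 1 := Real.rpow_lt_one hb0.le hb1 hε
  have habs : ∀ x ∈ S, |x| < a := fun x hx => abs_lt.2 ⟨hx.1, hx.2⟩
  have hmem : ∀ x : ℝ, |x| < a → x ∈ S := fun x hx => ⟨(abs_lt.1 hx).1, (abs_lt.1 hx).2⟩
  have h0S : (0:ℝ) ∈ S := ⟨neg_lt_zero.2 ha, ha⟩
  have hmaps : ∀ x ∈ S, D x ∈ S := by
    intro x hx
    apply hmem
    have h1 := hDb x hx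
    have h2 := habs x hx
    nlinarith [abs_nonneg x, abs_nonneg (D x)]
  have hiter : ∀ (j : ℕ) (x : ℝ), x ∈ S → D^[j] x ∈ S ∧ |D^[j] x| ≤ b ^ j * |x| := by
    intro j
    induction j with
    | zero => intro x hx; simpa using hx
    | succ n ih =>
      intro x hx
      obtain ⟨h1, h2⟩ := ih x hx
      rw [Function.iterate_succ_apply']
      refine ⟨hmaps _ h1, ?_⟩
      calc |D (D^[n] x)| ≤ b * |D^[n] x| := hDb _ h1
        _ ≤ b * (b ^ n * |x|) := by nlinarith
        _ = b ^ (n+1) * |x| := by ring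
  -- D is b-Lipschitz on S
  have hdiff : ∀ x ∈ S, HasDerivWithinAt D (deriv D x) S x := by
    intro x hx
    have : DifferentiableAt ℝ D x :=
      (hD.differentiableOn one_ne_zero).differentiableAt (isOpen_Ioo.mem_nhds hx)
    exact this.hasDerivAt.hasDerivWithinAt
  have hLip : ∀ x ∈ S, ∀ y ∈ S, |D y - D x| ≤ b * |y - x| := by
    intro x hx y hy
    have hbound : ∀ z ∈ S, ‖deriv D z‖ ≤ b := by
      intro z hz
      have h := hderivD z hz
      rw [Real.norm_eq_abs, abs_of_pos (lt_trans hbbar0 h.1)]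
      exact h.2.le
    have := Convex.norm_image_sub_le_of_norm_hasDerivWithin_le hdiff hbound
      (convex_Ioo _ _) hx hy
    simpa [Real.norm_eq_abs] using this
  have hiterLip : ∀ (j : ℕ), ∀ x ∈ S, ∀ y ∈ S,
      |D^[j] y - D^[j] x| ≤ b ^ j * |y - x| := by
    intro j
    induction j with
    | zero => intro x hx y hy; simp
    | succ n ih =>
      intro x hx y hy
      rw [Function.iterate_succ_apply', Function.iterate_succ_apply']
      calc |D (D^[n] y) - D (D^[n] x)| ≤ b * |D^[n] y - D^[n] x| :=
            hLip _ (hiter n x hx).1 _ (hiter n y hy).1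
        _ ≤ b * (b ^ n * |y - x|) := by
            have := ih x hx y hy; nlinarith
        _ = b ^ (n+1) * |y - x| := by ring
  have hpow : ∀ (j : ℕ) (c : ℝ), 0 ≤ c → ((b : ℝ) ^ j * c) ^ ε = (b ^ ε) ^ j * c ^ ε := by
    intro j c hc
    rw [Real.mul_rpow (by positivity) hc, ← Real.rpow_natCast b j,
      ← Real.rpow_natCast (b ^ ε) j, ← Real.rpow_mul hb0.le, ← Real.rpow_mul hb0.le,
      mul_comm ε (j : ℝ)]
  have hlog0 : Real.log (deriv D 0) = Real.log lam := by rw [hlam]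
  -- per-term bound at a point
  have hterm : ∀ x ∈ S, ∀ j : ℕ,
      |Real.log (deriv D (D^[j] x)) - Real.log lam| ≤ k * ((b ^ ε) ^ j * |x| ^ ε) := by
    intro x hx j
    obtain ⟨hjS, hjb⟩ := hiter j x hx
    have h := hlogHolder 0 h0S (D^[j] x) hjS
    rw [hlog0, sub_zero] at h
    refine h.trans ?_
    have h1 : |D^[j] x| ^ ε ≤ (b ^ j * |x|) ^ ε :=
      Real.rpow_le_rpow (abs_nonneg _) hjb hε.le
    rw [hpow j |x| (abs_nonneg x)] at h1
    nlinarith [Real.rpow_nonneg (abs_nonneg (D^[j] x)) ε]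
  -- per-term Hölder bound
  have htermH : ∀ x ∈ S, ∀ y ∈ S, ∀ j : ℕ,
      |(Real.log (deriv D (D^[j] y)) - Real.log lam) -
        (Real.log (deriv D (D^[j] x)) - Real.log lam)| ≤
      k * (b ^ ε) ^ j * |x - y| ^ ε := by
    intro x hx y hy j
    have h := hlogHolder (D^[j] x) (hiter j x hx).1 (D^[j] y) (hiter j y hy).1
    have h2 : |D^[j] y - D^[j] x| ^ ε ≤ (b ^ j * |y - x|) ^ ε :=
      Real.rpow_le_rpow (abs_nonneg _) (hiterLip j x hx y hy) hε.le
    rw [hpow j |y - x| (abs_nonneg _)] at h2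
    have hxy : |y - x| = |x - y| := abs_sub_comm _ _
    rw [hxy] at h2
    calc |(Real.log (deriv D (D^[j] y)) - Real.log lam) -
          (Real.log (deriv D (D^[j] x)) - Real.log lam)|
        = |Real.log (deriv D (D^[j] y)) - Real.log (deriv D (D^[j] x))| := by ring_nf
      _ ≤ k * |D^[j] y - D^[j] x| ^ ε := h
      _ ≤ k * ((b ^ ε) ^ j * |x - y| ^ ε) := by nlinarith [Real.rpow_nonneg (abs_nonneg (D^[j] y - D^[j] x)) ε]
      _ = k * (b ^ ε) ^ j * |x - y| ^ ε := by ring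
  have hgeo : Summable (fun j : ℕ => (b ^ ε) ^ j) :=
    summable_geometric_of_lt_one hbe0.le hbe1
  have hsummAbs : ∀ x ∈ S,
      Summable (fun j : ℕ => |Real.log (deriv D (D^[j] x)) - Real.log lam|) := by
    intro x hx
    refine Summable.of_nonneg_of_le (fun j => abs_nonneg _) (fun j => hterm x hx j) ?_
    simpa [mul_assoc] using (hgeo.mul_left (k * |x| ^ ε)).congr
      (fun j => by ring)
  refine ⟨hsummAbs, ?_, ?_, ?_⟩
  · -- uniform convergence via Weierstrass M-test
    refine tendstoUniformlyOn_tsum_nat (u := fun j => k * a ^ ε * (b ^ ε) ^ j)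
      ((hgeo.mul_left _)) ?_
    intro j x hx
    rw [Real.norm_eq_abs]
    refine (hterm x hx j).trans ?_
    have haε : |x| ^ ε ≤ a ^ ε :=
      Real.rpow_le_rpow (abs_nonneg _) (habs x hx).le hε.le
    calc k * ((b ^ ε) ^ j * |x| ^ ε) = (k * (b ^ ε) ^ j) * |x| ^ ε := by ring
      _ ≤ (k * (b ^ ε) ^ j) * a ^ ε := by
          exact mul_le_mul_of_nonneg_left haε (by positivity)
      _ = k * a ^ ε * (b ^ ε) ^ j := by ring
  · have hz : ∀ j : ℕ, D^[j] (0:ℝ) = 0 := fun j => Function.iterate_fixed hD0 j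
    have : (fun j : ℕ => Real.log (deriv D (D^[j] (0:ℝ))) - Real.log lam) = fun _ => 0 := by
      funext j; rw [hz j, hlam, sub_self]
    rw [this, tsum_zero]
  · intro x hx y hy
    have hsx : Summable (fun j : ℕ => Real.log (deriv D (D^[j] x)) - Real.log lam) :=
      (hsummAbs x hx).of_abs
    have hsy : Summable (fun j : ℕ => Real.log (deriv D (D^[j] y)) - Real.log lam) :=
      (hsummAbs y hy).of_abs
    rw [← Summable.tsum_sub hsy hsx]
    have hsb : Summable (fun j : ℕ => k * (b ^ ε) ^ j * |x - y| ^ ε) := by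
      refine (hgeo.mul_left (k * |x - y| ^ ε)).congr (fun j => by ring)
    have hsd : Summable (fun j : ℕ =>
        (Real.log (deriv D (D^[j] y)) - Real.log lam) -
        (Real.log (deriv D (D^[j] x)) - Real.log lam)) := hsy.sub hsx
    have habs_le : |∑' j : ℕ, ((Real.log (deriv D (D^[j] y)) - Real.log lam) -
        (Real.log (deriv D (D^[j] x)) - Real.log lam))| ≤
        ∑' j : ℕ, (k * (b ^ ε) ^ j * |x - y| ^ ε) :=
      abs_tsum_le_of_le hsd.abs hsb (fun j => htermH x hx y hy j)
    refine habs_le.trans ?_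
    have : ∑' j : ℕ, (k * (b ^ ε) ^ j * |x - y| ^ ε) =
        (k * |x - y| ^ ε) * ∑' j : ℕ, (b ^ ε) ^ j := by
      rw [← tsum_mul_left]; exact tsum_congr fun j => by ring
    rw [this, tsum_geometric_of_lt_one hbe0.le hbe1, div_eq_mul_inv]
    apply le_of_eq
    ring
end

section
/- For every x ∈ (-a,a), the sequence λ^{-n} D^n(x) converges as n → ∞ and its limit equals h(x), i.e. h(x) = lim_{n→∞} λ^{-n} D^n(x) (Koenigs' algorithm). -/
/-- **Koenigs' algorithm.** For the conjugation `h` (the unique `C¹` solution of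
Schröder's equation with `h 0 = 0`, `h' 0 = 1`), for every `x ∈ (-a,a)` the sequence
`λ^{-n} Dⁿ(x)` converges to `h x` as `n → ∞`. -/
theorem koenigs_algorithm
    (a ε : ℝ) (ha : 0 < a) (hε : 0 < ε) (D : ℝ → ℝ) (lam : ℝ)
    (hD : ContDiffOn ℝ 1 D (Set.Ioo (-a) a))
    (hHolder : ∃ k > 0, ∀ y ∈ Set.Ioo (-a) a, ∀ z ∈ Set.Ioo (-a) a,
      |deriv D z - deriv D y| ≤ k * |z - y| ^ ε)
    (hD0 : D 0 = 0)
    (hlam : deriv D 0 = lam) (hlam0 : 0 < lam) (hlam1 : lam < 1)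
    (hcontract : ∀ x ∈ Set.Ioo (-a) a, x ≠ 0 → |D x| < |x|)
    (h : ℝ → ℝ)
    (hh : ContDiffOn ℝ 1 h (Set.Ioo (-a) a))
    (hh0 : h 0 = 0) (hh'0 : deriv h 0 = 1)
    (hSch : ∀ x ∈ Set.Ioo (-a) a, h (D x) = lam * h x) :
    ∀ x ∈ Set.Ioo (-a) a,
      Filter.Tendsto (fun n : ℕ => D^[n] x / lam ^ n) Filter.atTop (nhds (h x)) := by
  intro x hx
  have hDle : ∀ y ∈ Set.Ioo (-a) a, |D y| ≤ |y| := by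
    intro y hy
    rcases eq_or_ne y 0 with rfl | hy0
    · simp [hD0]
    · exact (hcontract y hy hy0).le
  set u : ℕ → ℝ := fun n => D^[n] x with hu
  have hxa : |x| < a := abs_lt.mpr ⟨hx.1, hx.2⟩
  have hmem : ∀ n, u n ∈ Set.Ioo (-a) a ∧ |u n| ≤ |x| := by
    intro n
    induction n with
    | zero => exact ⟨hx, le_refl _⟩
    | succ n ih =>
      have h2 : u (n + 1) = D (u n) := Function.iterate_succ_apply' D n x
      have h1 : |D (u n)| ≤ |u n| := hDle _ ih.1
      refine ⟨?_, ?_⟩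
      · rw [h2]
        exact Set.mem_Ioo.mpr (abs_lt.mp (lt_of_le_of_lt (h1.trans ih.2) hxa))
      · rw [h2]; exact h1.trans ih.2
  have hanti : Antitone fun n => |u n| := by
    apply antitone_nat_of_succ_le
    intro n
    rw [show u (n + 1) = D (u n) from Function.iterate_succ_apply' D n x]
    exact hDle _ (hmem n).1
  have hbdd : BddBelow (Set.range fun n => |u n|) := by
    refine ⟨0, ?_⟩
    rintro r ⟨n, rfl⟩
    exact abs_nonneg _
  set L : ℝ := ⨅ n, |u n| with hLdef
  have hL : Filter.Tendsto (fun n => |u n|) Filter.atTop (nhds L) :=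
    tendsto_atTop_ciInf hanti hbdd
  have hLle : ∀ n, L ≤ |u n| := fun n => ciInf_le hbdd n
  have hLnn : 0 ≤ L := le_ciInf fun n => abs_nonneg _
  have hL0 : L = 0 := by
    by_contra hne
    have hLpos : 0 < L := lt_of_le_of_ne hLnn (Ne.symm hne)
    set K : Set ℝ := Set.Icc (-|x|) |x| ∩ {y | L ≤ |y|} with hKdef
    have hKsub : K ⊆ Set.Ioo (-a) a := by
      intro y hy
      exact Set.mem_Ioo.mpr (abs_lt.mp (lt_of_le_of_lt (abs_le.mpr ⟨hy.1.1, hy.1.2⟩) hxa))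
    have hKcomp : IsCompact K :=
      isCompact_Icc.inter_right (isClosed_le continuous_const continuous_abs)
    have hxK : x ∈ K := ⟨⟨neg_abs_le x, le_abs_self x⟩, hLle 0⟩
    have hgcont : ContinuousOn (fun y => |D y| / |y|) K := by
      apply ContinuousOn.div
      · exact ((hD.continuousOn).mono hKsub).abs
      · exact continuous_abs.continuousOn
      · intro y hy
        exact ne_of_gt (lt_of_lt_of_le hLpos hy.2)
    obtain ⟨y0, hy0K, hy0max⟩ := hKcomp.exists_isMaxOn ⟨x, hxK⟩ hgcont
    set m : ℝ := |D y0| / |y0| with hmdef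
    have hy00 : y0 ≠ 0 := by
      intro hc
      rw [hc] at hy0K
      simpa [hLpos.not_ge] using hy0K.2
    have hm1 : m < 1 := (div_lt_one (abs_pos.mpr hy00)).mpr (hcontract y0 (hKsub hy0K) hy00)
    have hm0 : 0 ≤ m := div_nonneg (abs_nonneg _) (abs_nonneg _)
    have hunK : ∀ n, u n ∈ K := fun n =>
      ⟨⟨neg_abs_le (u n) |>.trans' (neg_le_neg (hmem n).2), (le_abs_self (u n)).trans (hmem n).2⟩,
        hLle n⟩
    have hstep : ∀ n, |u (n + 1)| ≤ m * |u n| := by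
      intro n
      have hne0 : |u n| ≠ 0 := ne_of_gt (lt_of_lt_of_le hLpos (hLle n))
      have := hy0max (hunK n)
      have heq : |D (u n)| = |D (u n)| / |u n| * |u n| := (div_mul_cancel₀ _ hne0).symm
      rw [show u (n + 1) = D (u n) from Function.iterate_succ_apply' D n x, heq]
      exact mul_le_mul_of_nonneg_right this (abs_nonneg _)
    have hgeo : ∀ n, |u n| ≤ m ^ n * |x| := by
      intro n
      induction n with
      | zero => simp [hu]
      | succ n ih =>
        calc |u (n + 1)| ≤ m * |u n| := hstep n
          _ ≤ m * (m ^ n * |x|) := mul_le_mul_of_nonneg_left ih hm0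
          _ = m ^ (n + 1) * |x| := by ring
    have htend0 : Filter.Tendsto (fun n => m ^ n * |x|) Filter.atTop (nhds 0) := by
      simpa using (tendsto_pow_atTop_nhds_zero_of_lt_one hm0 hm1).mul_const |x|
    have : L ≤ 0 := le_of_tendsto_of_tendsto' hL htend0 hgeo
    linarith
  have huabs : Filter.Tendsto (fun n => |u n|) Filter.atTop (nhds 0) := hL0 ▸ hL
  have hu0 : Filter.Tendsto u Filter.atTop (nhds 0) := by
    have hlow : Filter.Tendsto (fun n => -|u n|) Filter.atTop (nhds 0) := by
      simpa using huabs.neg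
    exact tendsto_of_tendsto_of_tendsto_of_le_of_le hlow huabs
      (fun n => neg_abs_le _) (fun n => le_abs_self _)
  have hSchn : ∀ n, h (u n) = lam ^ n * h x := by
    intro n
    induction n with
    | zero => simp [hu]
    | succ n ih =>
      rw [show u (n + 1) = D (u n) from Function.iterate_succ_apply' D n x,
        hSch _ (hmem n).1, ih, pow_succ]
      ring
  -- slope of h at 0 tends to 1
  have h0mem : (0 : ℝ) ∈ Set.Ioo (-a) a := ⟨neg_lt_zero.mpr ha, ha⟩
  have hhat : ContDiffAt ℝ 1 h 0 := hh.contDiffAt (Ioo_mem_nhds h0mem.1 h0mem.2)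
  have hder : HasDerivAt h 1 0 := by
    have := (hhat.differentiableAt one_ne_zero).hasDerivAt
    rwa [hh'0] at this
  have hslope : Filter.Tendsto (fun y => h y / y) (nhdsWithin 0 {(0 : ℝ)}ᶜ) (nhds 1) := by
    have := hasDerivAt_iff_tendsto_slope.mp hder
    apply this.congr
    intro y
    simp [slope_def_field, hh0]
  by_cases hzero : ∃ k, u k = 0
  · obtain ⟨k, hk⟩ := hzero
    have hx0 : h x = 0 := by
      have := hSchn k
      rw [hk, hh0] at this
      have hlk : lam ^ k ≠ 0 := pow_ne_zero k (ne_of_gt hlam0)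
      field_simp at this
      exact (mul_eq_zero.mp this.symm).resolve_left hlk
    have hueq : ∀ n ≥ k, u n = 0 := by
      intro n hn
      have : u n = D^[n - k] (u k) := by
        rw [hu]
        simp only
        rw [← Function.iterate_add_apply]
        congr 1
        omega
      rw [this, hk, Function.iterate_fixed hD0]
    have heq : (fun n => u n / lam ^ n) =ᶠ[Filter.atTop] fun _ => (0 : ℝ) := by
      filter_upwards [Filter.eventually_ge_atTop k] with n hn
      rw [hueq n hn, zero_div]
    rw [hx0]
    exact Filter.Tendsto.congr' heq.symm tendsto_const_nhds
  · push_neg at hzero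
    have hu_ne : Filter.Tendsto u Filter.atTop (nhdsWithin 0 {(0 : ℝ)}ᶜ) :=
      tendsto_nhdsWithin_of_tendsto_nhds_of_eventually_within u hu0
        (Filter.Eventually.of_forall hzero)
    have hs : Filter.Tendsto (fun n => h (u n) / u n) Filter.atTop (nhds 1) :=
      hslope.comp hu_ne
    have heq : (fun n => u n / lam ^ n) =ᶠ[Filter.atTop]
        fun n => h x / (h (u n) / u n) := by
      filter_upwards [hs.eventually (eventually_ne_nhds one_ne_zero)] with n hsn
      have hun : u n ≠ 0 := hzero n
      have hlamn : lam ^ n ≠ 0 := pow_ne_zero n (ne_of_gt hlam0)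
      have h2 : h (u n) = lam ^ n * h x := hSchn n
      have hhx : h x ≠ 0 := by
        intro hc
        apply hsn
        rw [h2, hc, mul_zero, zero_div]
      rw [h2]
      field_simp
    have hfin : Filter.Tendsto (fun n => h x / (h (u n) / u n)) Filter.atTop (nhds (h x)) := by
      have := Filter.Tendsto.div (tendsto_const_nhds (x := h x)) hs one_ne_zero
      rw [div_one] at this
      exact this
    exact hfin.congr' heq.symm
end

section
/- Let 0 < r, 0 < d < 1, B > 0, and let D₁, D₂ : [0,B] → ℝ be strictly increasing C² functions with D₁(0) = D₂(0) = 0, r ≤ Dᵢ'(x) ≤ d for all x ∈ [0,B] (i = 1,2), and D₁(B) ≤ D₂(B). Let g₁, g₂ : [0,B] → ℝ be C¹ functions satisfying Julia's equations gᵢ(Dᵢ(x)) = Dᵢ'(x) gᵢ(x) for all x ∈ [0,B] with Dᵢ(x) ∈ [0,B] (i = 1,2). Then, writing ‖·‖_∞ for the supremum norm over [0,B], sup_{s ∈ [0,D₁(B)]} |g₁(s) − g₂(s)| ≤ ‖g₁‖_∞ ( ‖D₁' − D₂'‖_∞ + (1/r) ‖D₂''‖_∞ ‖D₁ − D₂‖_∞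 ) + (d/r) ‖g₂'‖_∞ ‖D₁ − D₂‖_∞ + d · sup_{x ∈ [0,B]} |g₁(x) − g₂(x)|. -/
/-- **Stability estimate (Lemma 4.2 of the paper).** Let `D₁, D₂ : [0,B] → ℝ` be
strictly increasing `C²` functions with `Dᵢ 0 = 0`, `r ≤ Dᵢ' ≤ d` on `[0,B]` and
`D₁ B ≤ D₂ B`, and let `g₁, g₂` be `C¹` solutions of the respective Julia equations
`gᵢ(Dᵢ(x)) = Dᵢ'(x) gᵢ(x)`.  Then
`sup_{s ∈ [0,D₁ B]} |g₁ s − g₂ s| ≤ ‖g₁‖_∞ (‖D₁' − D₂'‖_∞ + (1/r)‖D₂''‖_∞‖D₁ − D₂‖_∞)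
  + (d/r)‖g₂'‖_∞‖D₁ − D₂‖_∞ + d ⬝ sup_{[0,B]} |g₁ − g₂|`. -/
theorem julia_solutions_stability
    (B r d : ℝ) (hB : 0 < B) (hr : 0 < r) (hd0 : 0 < d) (hd1 : d < 1)
    (D₁ D₂ g₁ g₂ : ℝ → ℝ)
    (hD₁mono : StrictMonoOn D₁ (Set.Icc 0 B)) (hD₂mono : StrictMonoOn D₂ (Set.Icc 0 B))
    (hD₁ : ContDiffOn ℝ 2 D₁ (Set.Icc 0 B)) (hD₂ : ContDiffOn ℝ 2 D₂ (Set.Icc 0 B))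
    (hD₁0 : D₁ 0 = 0) (hD₂0 : D₂ 0 = 0)
    (hD₁' : ∀ x ∈ Set.Icc 0 B,
      r ≤ derivWithin D₁ (Set.Icc 0 B) x ∧ derivWithin D₁ (Set.Icc 0 B) x ≤ d)
    (hD₂' : ∀ x ∈ Set.Icc 0 B,
      r ≤ derivWithin D₂ (Set.Icc 0 B) x ∧ derivWithin D₂ (Set.Icc 0 B) x ≤ d)
    (hDB : D₁ B ≤ D₂ B)
    (hg₁ : ContDiffOn ℝ 1 g₁ (Set.Icc 0 B)) (hg₂ : ContDiffOn ℝ 1 g₂ (Set.Icc 0 B))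
    (hJ₁ : ∀ x ∈ Set.Icc 0 B, D₁ x ∈ Set.Icc 0 B →
      g₁ (D₁ x) = derivWithin D₁ (Set.Icc 0 B) x * g₁ x)
    (hJ₂ : ∀ x ∈ Set.Icc 0 B, D₂ x ∈ Set.Icc 0 B →
      g₂ (D₂ x) = derivWithin D₂ (Set.Icc 0 B) x * g₂ x) :
    ∀ s ∈ Set.Icc 0 (D₁ B),
      |g₁ s - g₂ s| ≤
        (⨆ x : Set.Icc (0 : ℝ) B, |g₁ x|) *
          ((⨆ x : Set.Icc (0 : ℝ) B,
              |derivWithin D₁ (Set.Icc 0 B) x - derivWithin D₂ (Set.Icc 0 B) x|) +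
            (1 / r) *
              (⨆ x : Set.Icc (0 : ℝ) B,
                |derivWithin (derivWithin D₂ (Set.Icc 0 B)) (Set.Icc 0 B) x|) *
              (⨆ x : Set.Icc (0 : ℝ) B, |D₁ x - D₂ x|)) +
        (d / r) * (⨆ x : Set.Icc (0 : ℝ) B, |derivWithin g₂ (Set.Icc 0 B) x|) *
          (⨆ x : Set.Icc (0 : ℝ) B, |D₁ x - D₂ x|) +
        d * (⨆ x : Set.Icc (0 : ℝ) B, |g₁ x - g₂ x|) := by
  intro s hs
  have hI : UniqueDiffOn ℝ (Set.Icc (0:ℝ) B) := uniqueDiffOn_Icc hB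
  have h0I : (0:ℝ) ∈ Set.Icc (0:ℝ) B := ⟨le_refl 0, hB.le⟩
  have hrd : r ≤ d := le_trans (hD₁' 0 h0I).1 (hD₁' 0 h0I).2
  have hcD₁ : ContinuousOn D₁ (Set.Icc 0 B) := hD₁.continuousOn
  have hcD₂ : ContinuousOn D₂ (Set.Icc 0 B) := hD₂.continuousOn
  have hcg₁ : ContinuousOn g₁ (Set.Icc 0 B) := hg₁.continuousOn
  have hcg₂ : ContinuousOn g₂ (Set.Icc 0 B) := hg₂.continuousOn
  have hcD₁' : ContinuousOn (derivWithin D₁ (Set.Icc 0 B)) (Set.Icc 0 B) :=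
    hD₁.continuousOn_derivWithin hI (by norm_num)
  have hcD₂' : ContinuousOn (derivWithin D₂ (Set.Icc 0 B)) (Set.Icc 0 B) :=
    hD₂.continuousOn_derivWithin hI (by norm_num)
  have hcg₂' : ContinuousOn (derivWithin g₂ (Set.Icc 0 B)) (Set.Icc 0 B) :=
    hg₂.continuousOn_derivWithin hI le_rfl
  have hdD₁ : DifferentiableOn ℝ D₁ (Set.Icc 0 B) := hD₁.differentiableOn (by norm_num)
  have hdD₂ : DifferentiableOn ℝ D₂ (Set.Icc 0 B) := hD₂.differentiableOn (by norm_num)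
  have hdg₂ : DifferentiableOn ℝ g₂ (Set.Icc 0 B) := hg₂.differentiableOn one_ne_zero
  have bdd : ∀ f : ℝ → ℝ, ContinuousOn f (Set.Icc 0 B) →
      BddAbove (Set.range fun x : Set.Icc (0:ℝ) B => |f x|) := by
    intro f hf
    have h := (isCompact_Icc.image_of_continuousOn hf.abs).bddAbove
    rwa [Set.image_eq_range] at h
  have leSup : ∀ f : ℝ → ℝ, ContinuousOn f (Set.Icc 0 B) → ∀ x ∈ Set.Icc (0:ℝ) B,
      |f x| ≤ ⨆ y : Set.Icc (0:ℝ) B, |f y| := by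
    intro f hf x hx
    exact le_ciSup (bdd f hf) ⟨x, hx⟩
  have supNonneg : ∀ f : ℝ → ℝ, ContinuousOn f (Set.Icc 0 B) →
      0 ≤ ⨆ y : Set.Icc (0:ℝ) B, |f y| := fun f hf =>
    le_trans (abs_nonneg _) (leSup f hf 0 h0I)
  -- D₁, D₂ map [0,B] into [0,B]
  have mapI : ∀ D : ℝ → ℝ, D 0 = 0 → StrictMonoOn D (Set.Icc 0 B) →
      DifferentiableOn ℝ D (Set.Icc 0 B) →
      (∀ x ∈ Set.Icc (0:ℝ) B, r ≤ derivWithin D (Set.Icc 0 B) x ∧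
        derivWithin D (Set.Icc 0 B) x ≤ d) →
      ∀ x ∈ Set.Icc (0:ℝ) B, D x ∈ Set.Icc (0:ℝ) B := by
    intro D hD0 hmono hdD hD' x hx
    have hb : ∀ y ∈ Set.Icc (0:ℝ) B, ‖derivWithin D (Set.Icc 0 B) y‖ ≤ d := by
      intro y hy
      rw [Real.norm_eq_abs, abs_le]
      exact ⟨le_trans (by linarith) (hD' y hy).1, (hD' y hy).2⟩
    have hmvt := (convex_Icc (0:ℝ) B).norm_image_sub_le_of_norm_derivWithin_le hdD hb hx h0I
    rw [hD0] at hmvt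
    simp only [zero_sub, norm_neg, Real.norm_eq_abs] at hmvt
    have hxB : |x| ≤ B := by rw [abs_of_nonneg hx.1]; exact hx.2
    have hDx0 : 0 ≤ D x := by
      rcases eq_or_lt_of_le hx.1 with h | h
      · rw [← h, hD0]
      · rw [← hD0]; exact (hmono h0I hx h).le
    refine ⟨hDx0, ?_⟩
    have : D x ≤ d * |x| := le_trans (le_abs_self _) hmvt
    nlinarith
  have hD₁mem : ∀ x ∈ Set.Icc (0:ℝ) B, D₁ x ∈ Set.Icc (0:ℝ) B :=
    mapI D₁ hD₁0 hD₁mono hdD₁ hD₁'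
  have hD₂mem : ∀ x ∈ Set.Icc (0:ℝ) B, D₂ x ∈ Set.Icc (0:ℝ) B :=
    mapI D₂ hD₂0 hD₂mono hdD₂ hD₂'
  -- find x with D₁ x = s
  have hsub : Set.Icc (D₁ 0) (D₁ B) ⊆ D₁ '' Set.Icc 0 B := intermediate_value_Icc hB.le hcD₁
  rw [hD₁0] at hsub
  obtain ⟨x, hx, hxs⟩ := hsub hs
  have hx1 := hD₁mem x hx
  have hx2 := hD₂mem x hx
  have eq1 := hJ₁ x hx hx1
  have eq2 := hJ₂ x hx hx2
  set a := derivWithin D₁ (Set.Icc 0 B) x with ha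
  set b := derivWithin D₂ (Set.Icc 0 B) x with hb
  have key : g₁ s - g₂ s =
      (a - b) * g₁ x + b * (g₁ x - g₂ x) + (g₂ (D₂ x) - g₂ (D₁ x)) := by
    rw [← hxs, eq1, eq2]; ring
  -- sup notations
  set Sg1 := ⨆ y : Set.Icc (0:ℝ) B, |g₁ y| with hSg1
  set S1 := ⨆ y : Set.Icc (0:ℝ) B,
    |derivWithin D₁ (Set.Icc 0 B) y - derivWithin D₂ (Set.Icc 0 B) y| with hS1
  set S2 := ⨆ y : Set.Icc (0:ℝ) B,
    |derivWithin (derivWithin D₂ (Set.Icc 0 B)) (Set.Icc 0 B) y| with hS2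
  set SD := ⨆ y : Set.Icc (0:ℝ) B, |D₁ y - D₂ y| with hSD
  set Sg2' := ⨆ y : Set.Icc (0:ℝ) B, |derivWithin g₂ (Set.Icc 0 B) y| with hSg2'
  set Sdiff := ⨆ y : Set.Icc (0:ℝ) B, |g₁ y - g₂ y| with hSdiff
  have A1 : |a - b| ≤ S1 := leSup _ (hcD₁'.sub hcD₂') x hx
  have A2 : |g₁ x| ≤ Sg1 := leSup _ hcg₁ x hx
  have A3 : |b| ≤ d := by
    rw [abs_le]
    exact ⟨le_trans (by linarith) (hD₂' x hx).1, (hD₂' x hx).2⟩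
  have A4 : |g₁ x - g₂ x| ≤ Sdiff := leSup _ (hcg₁.sub hcg₂) x hx
  have hSDx : |D₂ x - D₁ x| ≤ SD := by
    rw [abs_sub_comm]; exact leSup _ (hcD₁.sub hcD₂) x hx
  have hbnd : ∀ y ∈ Set.Icc (0:ℝ) B, ‖derivWithin g₂ (Set.Icc 0 B) y‖ ≤ Sg2' := by
    intro y hy; rw [Real.norm_eq_abs]; exact leSup _ hcg₂' y hy
  have A5 : |g₂ (D₂ x) - g₂ (D₁ x)| ≤ Sg2' * SD := by
    have hmvt := (convex_Icc (0:ℝ) B).norm_image_sub_le_of_norm_derivWithin_le hdg₂ hbnd hx2 hx1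
    rw [Real.norm_eq_abs, Real.norm_eq_abs] at hmvt
    rw [abs_sub_comm (g₂ (D₂ x)), abs_sub_comm (D₂ x)] at *
    exact le_trans hmvt (mul_le_mul_of_nonneg_left (leSup _ (hcD₁.sub hcD₂) x hx) (supNonneg _ hcg₂'))
  have hSg1n : 0 ≤ Sg1 := supNonneg _ hcg₁
  have hS1n : 0 ≤ S1 := Real.iSup_nonneg fun y => abs_nonneg _
  have hS2n : 0 ≤ S2 := Real.iSup_nonneg fun y => abs_nonneg _
  have hSDn : 0 ≤ SD := Real.iSup_nonneg fun y => abs_nonneg _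
  have hSg2n : 0 ≤ Sg2' := supNonneg _ hcg₂'
  have h1 : |a - b| * |g₁ x| ≤ S1 * Sg1 :=
    mul_le_mul A1 A2 (abs_nonneg _) hS1n
  have h2 : |b| * |g₁ x - g₂ x| ≤ d * Sdiff :=
    mul_le_mul A3 A4 (abs_nonneg _) hd0.le
  have hdiv : 1 ≤ d / r := (one_le_div hr).mpr hrd
  have hA : Sg2' * SD ≤ d / r * (Sg2' * SD) :=
    le_mul_of_one_le_left (mul_nonneg hSg2n hSDn) hdiv
  have hBpos : 0 ≤ Sg1 * (1 / r * S2 * SD) := by positivity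
  calc |g₁ s - g₂ s|
      = |(a - b) * g₁ x + b * (g₁ x - g₂ x) + (g₂ (D₂ x) - g₂ (D₁ x))| := by rw [key]
    _ ≤ |(a - b) * g₁ x| + |b * (g₁ x - g₂ x)| + |g₂ (D₂ x) - g₂ (D₁ x)| :=
        abs_add_three _ _ _
    _ = |a - b| * |g₁ x| + |b| * |g₁ x - g₂ x| + |g₂ (D₂ x) - g₂ (D₁ x)| := by
        rw [abs_mul, abs_mul]
    _ ≤ S1 * Sg1 + d * Sdiff + Sg2' * SD := by
        exact add_le_add (add_le_add h1 h2) A5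
    _ ≤ Sg1 * (S1 + 1 / r * S2 * SD) + d / r * Sg2' * SD + d * Sdiff := by
        nlinarith [hA, hBpos]
end

section
/- If g̃ : (-a,a) → ℝ satisfies Julia's equation g̃(D(x)) = D'(x) g̃(x) for all x ∈ (-a,a) and g̃ is differentiable at 0, then g̃(x) = g̃'(0) · h(x)/h'(x) for all x ∈ (-a,a). -/
open Set Filter Topology

/-- **Proposition 2.2.** If `g̃` satisfies Julia's equation `g̃(D x) = D'(x) g̃(x)` on
`(-a,a)` and is differentiable at `0`, then `g̃ x = g̃'(0) · h x / h' x` on `(-a,a)`,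
where `h` is the conjugation solving Schröder's equation. -/
theorem julia_solution_unique_up_to_constant
    (a ε : ℝ) (ha : 0 < a) (hε : 0 < ε) (D : ℝ → ℝ) (lam : ℝ)
    (hD : ContDiffOn ℝ 1 D (Set.Ioo (-a) a))
    (hHolder : ∃ k > 0, ∀ y ∈ Set.Ioo (-a) a, ∀ z ∈ Set.Ioo (-a) a,
      |deriv D z - deriv D y| ≤ k * |z - y| ^ ε)
    (hD0 : D 0 = 0)
    (hlam : deriv D 0 = lam) (hlam0 : 0 < lam) (hlam1 : lam < 1)
    (hcontract : ∀ x ∈ Set.Ioo (-a) a, x ≠ 0 → |D x| < |x|)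
    (h : ℝ → ℝ)
    (hh : ContDiffOn ℝ 1 h (Set.Ioo (-a) a))
    (hh0 : h 0 = 0) (hh'0 : deriv h 0 = 1)
    (hh'pos : ∀ x ∈ Set.Ioo (-a) a, 0 < deriv h x)
    (hSch : ∀ x ∈ Set.Ioo (-a) a, h (D x) = lam * h x)
    (gt : ℝ → ℝ)
    (hgt : ∀ x ∈ Set.Ioo (-a) a, gt (D x) = deriv D x * gt x)
    (hgtdiff : DifferentiableAt ℝ gt 0) :
    ∀ x ∈ Set.Ioo (-a) a, gt x = deriv gt 0 * (h x / deriv h x) := by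
  have hSopen : IsOpen (Set.Ioo (-a) a) := isOpen_Ioo
  have h0S : (0:ℝ) ∈ Set.Ioo (-a) a := ⟨by linarith, ha⟩
  have hmemabs : ∀ z : ℝ, |z| < a → z ∈ Set.Ioo (-a) a := by
    intro z hz
    rcases abs_lt.mp hz with ⟨h1, h2⟩
    exact ⟨h1, h2⟩
  -- D maps S into S
  have hmaps : ∀ z ∈ Set.Ioo (-a) a, D z ∈ Set.Ioo (-a) a := by
    intro z hz
    by_cases hz0 : z = 0
    · subst hz0; rw [hD0]; exact h0S
    · apply hmemabs
      calc |D z| < |z| := hcontract z hz hz0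
        _ < a := abs_lt.mpr ⟨hz.1, hz.2⟩
  have habsle : ∀ z ∈ Set.Ioo (-a) a, |D z| ≤ |z| := by
    intro z hz
    by_cases hz0 : z = 0
    · subst hz0; simp [hD0]
    · exact le_of_lt (hcontract z hz hz0)
  -- differentiability
  have hDdiff : ∀ z ∈ Set.Ioo (-a) a, HasDerivAt D (deriv D z) z := fun z hz =>
    (((hD.differentiableOn one_ne_zero) z hz).differentiableAt (hSopen.mem_nhds hz)).hasDerivAt
  have hhdiff : ∀ z ∈ Set.Ioo (-a) a, HasDerivAt h (deriv h z) z := fun z hz =>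
    (((hh.differentiableOn one_ne_zero) z hz).differentiableAt (hSopen.mem_nhds hz)).hasDerivAt
  -- h strictly monotone on S
  have hmono : StrictMonoOn h (Set.Ioo (-a) a) := by
    apply strictMonoOn_of_deriv_pos (convex_Ioo _ _) hh.continuousOn
    intro z hz
    rw [interior_Ioo] at hz
    exact hh'pos z hz
  have hhne : ∀ z ∈ Set.Ioo (-a) a, z ≠ 0 → h z ≠ 0 := by
    intro z hz hz0
    rcases lt_or_gt_of_ne hz0 with hlt | hgt'
    · have := hmono hz h0S hlt
      rw [hh0] at this; linarith
    · have := hmono h0S hz hgt'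
      rw [hh0] at this; linarith
  -- gt 0 = 0
  have hgt0 : gt 0 = 0 := by
    have := hgt 0 h0S
    rw [hD0, hlam] at this
    have h1 : (1 - lam) * gt 0 = 0 := by linarith
    rcases mul_eq_zero.mp h1 with h2 | h2
    · exfalso; linarith
    · exact h2
  -- derivative of Schröder: deriv h (D z) * deriv D z = lam * deriv h z
  have hDerivId : ∀ z ∈ Set.Ioo (-a) a, deriv h (D z) * deriv D z = lam * deriv h z := by
    intro z hz
    have h1 : HasDerivAt (h ∘ D) (deriv h (D z) * deriv D z) z :=
      (hhdiff (D z) (hmaps z hz)).comp z (hDdiff z hz)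
    have h2 : HasDerivAt (h ∘ D) (lam * deriv h z) z := by
      have h3 : HasDerivAt (fun w => lam * h w) (lam * deriv h z) z :=
        (hhdiff z hz).const_mul lam
      apply h3.congr_of_eventuallyEq
      filter_upwards [hSopen.mem_nhds hz] with w hw
      exact hSch w hw
    exact h1.unique h2
  -- key identity for F z = gt z * deriv h z
  have hFkey : ∀ z ∈ Set.Ioo (-a) a,
      gt (D z) * deriv h (D z) = lam * (gt z * deriv h z) := by
    intro z hz
    rw [hgt z hz]
    linear_combination gt z * hDerivId z hz
  intro x hx
  by_cases hx0 : x = 0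
  · subst hx0
    rw [hgt0, hh0]
    simp
  -- orbit
  set y : ℕ → ℝ := fun n => D^[n] x with hy
  have hyS : ∀ n, y n ∈ Set.Ioo (-a) a := by
    intro n
    induction n with
    | zero => simpa [hy] using hx
    | succ n ih =>
      have : y (n+1) = D (y n) := by
        simp [hy, Function.iterate_succ_apply']
      rw [this]; exact hmaps _ ih
  have hystep : ∀ n, y (n+1) = D (y n) := by
    intro n; simp [hy, Function.iterate_succ_apply']
  have hSchn : ∀ n, h (y n) = lam ^ n * h x := by
    intro n
    induction n with
    | zero => simp [hy]
    | succ n ih =>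
      rw [hystep n, hSch _ (hyS n), ih, pow_succ]
      ring
  have hhxne : h x ≠ 0 := hhne x hx hx0
  have hyne : ∀ n, y n ≠ 0 := by
    intro n hn
    have h1 := hSchn n
    rw [hn, hh0] at h1
    exact mul_ne_zero (pow_ne_zero n (ne_of_gt hlam0)) hhxne h1.symm
  have hyabs : ∀ n, |y n| ≤ |x| := by
    intro n
    induction n with
    | zero => simp [hy]
    | succ n ih =>
      rw [hystep n]
      exact le_trans (habsle _ (hyS n)) ih
  -- h (y n) → 0, hence y n → 0
  have hhy : Tendsto (fun n => h (y n)) atTop (𝓝 0) := by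
    have : Tendsto (fun n : ℕ => lam ^ n * h x) atTop (𝓝 (0 * h x)) :=
      (tendsto_pow_atTop_nhds_zero_of_lt_one (le_of_lt hlam0) hlam1).mul_const _
    rw [zero_mul] at this
    exact this.congr (fun n => (hSchn n).symm)
  have htend : Tendsto y atTop (𝓝 0) := by
    rw [NormedAddCommGroup.tendsto_atTop]
    intro e he
    set δ : ℝ := min e |x| with hδ
    have hδpos : 0 < δ := lt_min he (abs_pos.mpr hx0)
    have hδx : δ ≤ |x| := min_le_right _ _
    have hxa : |x| < a := abs_lt.mpr ⟨hx.1, hx.2⟩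
    have hδS : δ ∈ Set.Ioo (-a) a := hmemabs δ (by rw [abs_of_pos hδpos]; linarith)
    have hnδS : -δ ∈ Set.Ioo (-a) a := hmemabs (-δ) (by rw [abs_of_neg (by linarith)]; simp; linarith)
    have hhδ : 0 < h δ := by have := hmono h0S hδS hδpos; rwa [hh0] at this
    have hhnδ : h (-δ) < 0 := by have := hmono hnδS h0S (by linarith); rwa [hh0] at this
    set m : ℝ := min (h δ) (-(h (-δ))) with hm
    have hmpos : 0 < m := lt_min hhδ (by linarith)
    have := (NormedAddCommGroup.tendsto_atTop.mp hhy) m hmpos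
    rcases this with ⟨N, hN⟩
    refine ⟨N, fun n hn => ?_⟩
    have hN' := hN n hn
    simp only [sub_zero, Real.norm_eq_abs] at hN' ⊢
    by_contra hcon
    push_neg at hcon
    have hδe : δ ≤ e := min_le_left _ _
    have hδyn : δ ≤ |y n| := le_trans hδe hcon
    rcases le_abs'.mp hδyn with hle | hle
    · -- y n ≤ -δ
      have : h (y n) ≤ h (-δ) := by
        rcases eq_or_lt_of_le hle with heq | hlt
        · rw [heq]
        · exact le_of_lt (hmono (hyS n) hnδS hlt)
      have : m ≤ |h (y n)| := by
        rw [abs_of_nonpos (by linarith)]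
        have : m ≤ -(h (-δ)) := min_le_right _ _
        linarith
      linarith
    · -- δ ≤ y n
      have : h δ ≤ h (y n) := by
        rcases eq_or_lt_of_le hle with heq | hlt
        · rw [← heq]
        · exact le_of_lt (hmono hδS (hyS n) hlt)
      have : m ≤ |h (y n)| := by
        rw [abs_of_nonneg (by linarith)]
        have : m ≤ h δ := min_le_left _ _
        linarith
      linarith
  -- invariance of gt z * deriv h z / h z along the orbit
  have hinv : ∀ n, gt (y n) * deriv h (y n) / h (y n) = gt x * deriv h x / h x := by
    intro n
    induction n with
    | zero => simp [hy]
    | succ n ih =>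
      rw [hystep n, hFkey _ (hyS n), hSch _ (hyS n),
        mul_div_mul_left _ _ (ne_of_gt hlam0)]
      exact ih
  -- limits
  have hynin : Tendsto y atTop (𝓝[≠] (0:ℝ)) :=
    tendsto_nhdsWithin_of_tendsto_nhds_of_eventually_within y htend
      (Eventually.of_forall fun n => hyne n)
  have l1 : Tendsto (fun n => gt (y n) / y n) atTop (𝓝 (deriv gt 0)) := by
    have hs := (hasDerivAt_iff_tendsto_slope.mp hgtdiff.hasDerivAt).comp hynin
    apply hs.congr
    intro n
    simp [Function.comp, slope_def_field, hgt0]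
  have l2 : Tendsto (fun n => h (y n) / y n) atTop (𝓝 1) := by
    have hd : HasDerivAt h (deriv h 0) 0 := hhdiff 0 h0S
    have hs := (hasDerivAt_iff_tendsto_slope.mp hd).comp hynin
    rw [hh'0] at hs
    apply hs.congr
    intro n
    simp [Function.comp, slope_def_field, hh0]
  have l3 : Tendsto (fun n => deriv h (y n)) atTop (𝓝 1) := by
    have hc : ContinuousOn (deriv h) (Set.Ioo (-a) a) :=
      hh.continuousOn_deriv_of_isOpen hSopen le_rfl
    have hca : ContinuousAt (deriv h) 0 :=
      hc.continuousAt (hSopen.mem_nhds h0S)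
    have := hca.tendsto.comp htend
    rwa [hh'0] at this
  have l4 : Tendsto (fun n => gt (y n) * deriv h (y n) / h (y n)) atTop
      (𝓝 (deriv gt 0)) := by
    have heq : ∀ n, gt (y n) * deriv h (y n) / h (y n)
        = (gt (y n) / y n) * deriv h (y n) / (h (y n) / y n) := by
      intro n
      have h1 : y n ≠ 0 := hyne n
      have h2 : h (y n) ≠ 0 := hhne _ (hyS n) h1
      field_simp
    have := ((l1.mul l3).div l2 one_ne_zero)
    rw [mul_one, div_one] at this
    exact this.congr (fun n => (heq n).symm)
  have hconst : Tendsto (fun _ : ℕ => gt x * deriv h x / h x) atTop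
      (𝓝 (gt x * deriv h x / h x)) := tendsto_const_nhds
  have hkey : gt x * deriv h x / h x = deriv gt 0 :=
    tendsto_nhds_unique (l4.congr hinv) hconst |>.symm
  have hdh : deriv h x ≠ 0 := ne_of_gt (hh'pos x hx)
  field_simp at hkey ⊢
  linear_combination hkey
end

section
/- For every x ∈ (-a,a), the limit lim_{n→∞} D^n(x) / ∏_{j=0}^{n-1} D'(D^j(x)) exists and equals g(x) := h(x)/h'(x). -/
/-- For every `x ∈ (-a,a)`, the limit
`lim_{n→∞} Dⁿ(x) / ∏_{j=0}^{n-1} D'(Dʲ(x))` exists and equals `g(x) := h(x)/h'(x)`. -/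
theorem julia_solution_as_limit
    (a ε : ℝ) (ha : 0 < a) (hε : 0 < ε) (D : ℝ → ℝ) (lam : ℝ)
    (hD : ContDiffOn ℝ 1 D (Set.Ioo (-a) a))
    (hHolder : ∃ k > 0, ∀ y ∈ Set.Ioo (-a) a, ∀ z ∈ Set.Ioo (-a) a,
      |deriv D z - deriv D y| ≤ k * |z - y| ^ ε)
    (hD0 : D 0 = 0)
    (hlam : deriv D 0 = lam) (hlam0 : 0 < lam) (hlam1 : lam < 1)
    (hcontract : ∀ x ∈ Set.Ioo (-a) a, x ≠ 0 → |D x| < |x|)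
    (h : ℝ → ℝ)
    (hh : ContDiffOn ℝ 1 h (Set.Ioo (-a) a))
    (hh0 : h 0 = 0) (hh'0 : deriv h 0 = 1)
    (hh'pos : ∀ x ∈ Set.Ioo (-a) a, 0 < deriv h x)
    (hSch : ∀ x ∈ Set.Ioo (-a) a, h (D x) = lam * h x) :
    ∀ x ∈ Set.Ioo (-a) a,
      Filter.Tendsto
        (fun n : ℕ => D^[n] x / ∏ j ∈ Finset.range n, deriv D (D^[j] x))
        Filter.atTop (nhds (h x / deriv h x)) := by
  have hopen : IsOpen (Set.Ioo (-a) a) := isOpen_Ioo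
  have h0mem : (0:ℝ) ∈ Set.Ioo (-a) a := ⟨by linarith, ha⟩
  have hDmaps : ∀ x ∈ Set.Ioo (-a) a, D x ∈ Set.Ioo (-a) a := by
    intro x hx
    rcases eq_or_ne x 0 with rfl | hx0
    · simpa [hD0] using h0mem
    · have h1 := hcontract x hx hx0
      have hxa : |x| < a := abs_lt.2 ⟨hx.1, hx.2⟩
      have : |D x| < a := lt_trans h1 hxa
      exact abs_lt.1 this
  have hDdiff : ∀ x ∈ Set.Ioo (-a) a, DifferentiableAt ℝ D x :=
    fun x hx => (hD.differentiableOn one_ne_zero).differentiableAt (hopen.mem_nhds hx)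
  have hhdiff : ∀ x ∈ Set.Ioo (-a) a, DifferentiableAt ℝ h x :=
    fun x hx => (hh.differentiableOn one_ne_zero).differentiableAt (hopen.mem_nhds hx)
  have hhcont : ContinuousOn h (Set.Ioo (-a) a) := hh.continuousOn
  have hh'cont : ContinuousOn (deriv h) (Set.Ioo (-a) a) :=
    hh.continuousOn_deriv_of_isOpen hopen le_rfl
  have hmono : StrictMonoOn h (Set.Ioo (-a) a) := by
    apply strictMonoOn_of_deriv_pos (convex_Ioo _ _) hhcont
    intro y hy
    rw [interior_Ioo] at hy
    exact hh'pos y hy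
  have hSch' : ∀ x ∈ Set.Ioo (-a) a, deriv h (D x) * deriv D x = lam * deriv h x := by
    intro x hx
    have hev : (fun y => h (D y)) =ᶠ[nhds x] fun y => lam * h y :=
      Filter.eventuallyEq_of_mem (hopen.mem_nhds hx) (fun y hy => hSch y hy)
    have h1 : deriv (fun y => h (D y)) x = deriv h (D x) * deriv D x := by
      rw [show (fun y => h (D y)) = h ∘ D from rfl,
        deriv_comp x (hhdiff _ (hDmaps x hx)) (hDdiff x hx)]
    have h2 : deriv (fun y => lam * h y) x = lam * deriv h x :=
      deriv_const_mul lam (hhdiff x hx)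
    rw [← h1, ← h2, hev.deriv_eq]
  intro x hx
  rcases eq_or_ne x 0 with rfl | hx0
  · have hfix : ∀ n : ℕ, D^[n] (0:ℝ) = 0 := fun n => Function.iterate_fixed hD0 n
    have : (fun n : ℕ => D^[n] (0:ℝ) / ∏ j ∈ Finset.range n, deriv D (D^[j] (0:ℝ)))
        = fun _ => (0:ℝ) := by
      funext n; simp [hfix]
    rw [this, hh0]
    simpa using tendsto_const_nhds
  -- now x ≠ 0
  have hxn : ∀ n : ℕ, D^[n] x ∈ Set.Ioo (-a) a := by
    intro n; induction n with
    | zero => simpa using hx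
    | succ n ih => rw [Function.iterate_succ_apply']; exact hDmaps _ ih
  have hSchn : ∀ n : ℕ, h (D^[n] x) = lam ^ n * h x := by
    intro n; induction n with
    | zero => simp
    | succ n ih =>
      rw [Function.iterate_succ_apply', hSch _ (hxn n), ih, pow_succ]; ring
  have hhx0 : h x ≠ 0 := by
    intro hc
    exact hx0 (hmono.injOn hx h0mem (by rw [hc, hh0]))
  have hDn0 : ∀ n : ℕ, D^[n] x ≠ 0 := by
    intro n hc
    have := hSchn n
    rw [hc, hh0] at this
    exact mul_ne_zero (pow_pos hlam0 n).ne' hhx0 this.symm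
  -- convergence of the orbit to 0
  have htend0 : Filter.Tendsto (fun n : ℕ => D^[n] x) Filter.atTop (nhds 0) := by
    rw [Metric.tendsto_atTop]
    intro δ hδ
    set δ' : ℝ := min (δ/2) (a/2) with hδ'def
    have hδ'0 : 0 < δ' := lt_min (by linarith) (by linarith)
    have hδ'a : δ' < a := lt_of_le_of_lt (min_le_right _ _) (by linarith)
    have hδ'δ : δ' < δ := lt_of_le_of_lt (min_le_left _ _) (by linarith)
    have hδ'mem : δ' ∈ Set.Ioo (-a) a := ⟨by linarith, hδ'a⟩
    have hnδ'mem : -δ' ∈ Set.Ioo (-a) a := ⟨by linarith, by linarith⟩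
    have hp : 0 < h δ' := by
      have := hmono h0mem hδ'mem hδ'0
      rwa [hh0] at this
    have hm : 0 < -h (-δ') := by
      have := hmono hnδ'mem h0mem (by linarith)
      rw [hh0] at this; linarith
    set m : ℝ := min (h δ') (-h (-δ')) with hmdef
    have hm0 : 0 < m := lt_min hp hm
    have htlam : Filter.Tendsto (fun n : ℕ => lam ^ n * |h x|) Filter.atTop (nhds 0) := by
      simpa using (tendsto_pow_atTop_nhds_zero_of_lt_one hlam0.le hlam1).mul_const |h x|
    have hev := htlam.eventually_lt_const hm0
    rw [Filter.eventually_atTop] at hev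
    obtain ⟨N, hN⟩ := hev
    refine ⟨N, fun n hn => ?_⟩
    have hlt : |h (D^[n] x)| < m := by
      rw [hSchn n, abs_mul, abs_of_pos (pow_pos hlam0 n)]
      exact hN n hn
    rw [Real.dist_eq, sub_zero]
    by_contra hcon
    push_neg at hcon
    have habs : δ' ≤ |D^[n] x| := le_trans hδ'δ.le hcon
    rcases le_abs'.mp habs with hle | hle
    · -- D^[n] x ≤ -δ'
      have := hmono.monotoneOn (hxn n) hnδ'mem hle
      have : h (D^[n] x) ≤ -m := le_trans this (by
        have : m ≤ -h (-δ') := min_le_right _ _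
        linarith)
      have := neg_le_neg this
      have : m ≤ |h (D^[n] x)| := le_trans (by linarith) (neg_le_abs _)
      linarith
    · -- δ' ≤ D^[n] x
      have hge := hmono.monotoneOn hδ'mem (hxn n) hle
      have : m ≤ h (D^[n] x) := le_trans (min_le_left _ _) hge
      have : m ≤ |h (D^[n] x)| := le_trans this (le_abs_self _)
      linarith
  -- telescoping the product
  have hh'ne : ∀ n : ℕ, deriv h (D^[n] x) ≠ 0 := fun n => (hh'pos _ (hxn n)).ne'
  have hh'xne : deriv h x ≠ 0 := (hh'pos x hx).ne'
  have hprod : ∀ n : ℕ,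
      deriv h (D^[n] x) * ∏ j ∈ Finset.range n, deriv D (D^[j] x)
        = lam ^ n * deriv h x := by
    intro n; induction n with
    | zero => simp
    | succ n ih =>
      rw [Finset.prod_range_succ, Function.iterate_succ_apply']
      calc deriv h (D (D^[n] x)) * ((∏ j ∈ Finset.range n, deriv D (D^[j] x)) * deriv D (D^[n] x))
          = (deriv h (D (D^[n] x)) * deriv D (D^[n] x)) * ∏ j ∈ Finset.range n, deriv D (D^[j] x) := by ring
        _ = (lam * deriv h (D^[n] x)) * ∏ j ∈ Finset.range n, deriv D (D^[j] x) := by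
            rw [hSch' _ (hxn n)]
        _ = lam * (deriv h (D^[n] x) * ∏ j ∈ Finset.range n, deriv D (D^[j] x)) := by ring
        _ = lam ^ (n+1) * deriv h x := by rw [ih]; ring
  have hEn : ∀ n : ℕ,
      D^[n] x / ∏ j ∈ Finset.range n, deriv D (D^[j] x)
        = (D^[n] x / h (D^[n] x)) * deriv h (D^[n] x) * (h x / deriv h x) := by
    intro n
    have h1 := hprod n
    have h2 := hSchn n
    have hPne : (∏ j ∈ Finset.range n, deriv D (D^[j] x)) ≠ 0 := by
      intro hc
      rw [hc, mul_zero] at h1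
      exact mul_ne_zero (pow_pos hlam0 n).ne' hh'xne h1.symm
    have hlamn : (lam : ℝ) ^ n ≠ 0 := (pow_pos hlam0 n).ne'
    have hPval : (∏ j ∈ Finset.range n, deriv D (D^[j] x))
        = lam ^ n * deriv h x / deriv h (D^[n] x) := by
      rw [eq_div_iff (hh'ne n)]
      linarith [h1]
    rw [hPval, h2]
    field_simp
  -- limits of the pieces
  have htendne : Filter.Tendsto (fun n : ℕ => D^[n] x) Filter.atTop (nhdsWithin 0 {0}ᶜ) :=
    tendsto_nhdsWithin_of_tendsto_nhds_of_eventually_within _ htend0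
      (Filter.Eventually.of_forall fun n => hDn0 n)
  have hslope : Filter.Tendsto (slope h 0) (nhdsWithin 0 {0}ᶜ) (nhds 1) := by
    have h1 := (hhdiff 0 h0mem).hasDerivAt
    rw [hasDerivAt_iff_tendsto_slope] at h1
    rwa [hh'0] at h1
  have hA : Filter.Tendsto (fun n : ℕ => h (D^[n] x) / D^[n] x) Filter.atTop (nhds 1) := by
    refine (hslope.comp htendne).congr fun n => ?_
    simp [slope_def_field, hh0]
  have hA' : Filter.Tendsto (fun n : ℕ => D^[n] x / h (D^[n] x)) Filter.atTop (nhds 1) := by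
    have h1 := hA.inv₀ one_ne_zero
    simpa [inv_div] using h1
  have hB : Filter.Tendsto (fun n : ℕ => deriv h (D^[n] x)) Filter.atTop (nhds 1) := by
    have hc : ContinuousAt (deriv h) 0 := hh'cont.continuousAt (hopen.mem_nhds h0mem)
    have h1 := hc.tendsto.comp htend0
    rwa [hh'0] at h1
  have final := (hA'.mul hB).mul
    (tendsto_const_nhds (x := h x / deriv h x) (f := Filter.atTop (α := ℕ)))
  refine Filter.Tendsto.congr (fun n => (hEn n).symm) ?_
  simpa using final
end

section
/- Assume additionally that D(x) ≠ 0 for every x ∈ (-a,a) with x ≠ 0. Define ρ(y) = D(y)/(D'(y)·y) for y ≠ 0 and ρ(0) = 1. Then for every x ∈ (-a,a), the infinite product ∏_{n=0}^{∞} ρ(D^n(x)) converges and g(x) := h(x)/h'(x) satisfies g(x) = x · ∏_{n=0}^{∞} ρ(D^n(x)). -/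
/-- Assume additionally `D x ≠ 0` for `x ≠ 0` in `(-a,a)`.  With
`ρ(y) = D(y)/(D'(y)·y)` for `y ≠ 0` and `ρ(0) = 1`, for every `x ∈ (-a,a)` the
infinite product `∏_{n=0}^∞ ρ(Dⁿ(x))` converges and
`g(x) := h(x)/h'(x) = x · ∏_{n=0}^∞ ρ(Dⁿ(x))`. -/
theorem julia_solution_as_infinite_product
    (a ε : ℝ) (ha : 0 < a) (hε : 0 < ε) (D : ℝ → ℝ) (lam : ℝ)
    (hD : ContDiffOn ℝ 1 D (Set.Ioo (-a) a))
    (hHolder : ∃ k > 0, ∀ y ∈ Set.Ioo (-a) a, ∀ z ∈ Set.Ioo (-a) a,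
      |deriv D z - deriv D y| ≤ k * |z - y| ^ ε)
    (hD0 : D 0 = 0)
    (hlam : deriv D 0 = lam) (hlam0 : 0 < lam) (hlam1 : lam < 1)
    (hcontract : ∀ x ∈ Set.Ioo (-a) a, x ≠ 0 → |D x| < |x|)
    (hDne : ∀ x ∈ Set.Ioo (-a) a, x ≠ 0 → D x ≠ 0)
    (h : ℝ → ℝ)
    (hh : ContDiffOn ℝ 1 h (Set.Ioo (-a) a))
    (hh0 : h 0 = 0) (hh'0 : deriv h 0 = 1)
    (hh'pos : ∀ x ∈ Set.Ioo (-a) a, 0 < deriv h x)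
    (hSch : ∀ x ∈ Set.Ioo (-a) a, h (D x) = lam * h x)
    (rho : ℝ → ℝ)
    (hrho : ∀ y : ℝ, rho y = if y = 0 then 1 else D y / (deriv D y * y)) :
    ∀ x ∈ Set.Ioo (-a) a, ∃ L : ℝ,
      Filter.Tendsto (fun n : ℕ => ∏ j ∈ Finset.range n, rho (D^[j] x))
        Filter.atTop (nhds L) ∧
      h x / deriv h x = x * L := by
  have hS : IsOpen (Set.Ioo (-a) a) := isOpen_Ioo
  have h0S : (0:ℝ) ∈ Set.Ioo (-a) a := ⟨by linarith, ha⟩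
  have habsS : ∀ y : ℝ, y ∈ Set.Ioo (-a) a → |y| < a := by
    intro y hy; exact abs_lt.mpr ⟨hy.1, hy.2⟩
  have hDmap : ∀ y ∈ Set.Ioo (-a) a, D y ∈ Set.Ioo (-a) a := by
    intro y hy
    by_cases hy0 : y = 0
    · subst hy0; simpa [hD0] using h0S
    · have := lt_trans (hcontract y hy hy0) (habsS y hy)
      exact abs_lt.mp this
  have hDdiff : ∀ y ∈ Set.Ioo (-a) a, HasDerivAt D (deriv D y) y := fun y hy =>
    ((hD.differentiableOn one_ne_zero y hy).differentiableAt (hS.mem_nhds hy)).hasDerivAt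
  have hhdiff : ∀ y ∈ Set.Ioo (-a) a, HasDerivAt h (deriv h y) y := fun y hy =>
    ((hh.differentiableOn one_ne_zero y hy).differentiableAt (hS.mem_nhds hy)).hasDerivAt
  have chain : ∀ y ∈ Set.Ioo (-a) a, deriv h (D y) * deriv D y = lam * deriv h y := by
    intro y hy
    have hc : HasDerivAt (h ∘ D) (deriv h (D y) * deriv D y) y :=
      (hhdiff _ (hDmap y hy)).comp y (hDdiff y hy)
    have heq : (fun z => lam * h z) =ᶠ[nhds y] (h ∘ D) := by
      filter_upwards [hS.mem_nhds hy] with z hz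
      exact (hSch z hz).symm
    have hc2 : HasDerivAt (fun z => lam * h z) (deriv h (D y) * deriv D y) y :=
      hc.congr_of_eventuallyEq heq
    have hc3 : HasDerivAt (fun z => lam * h z) (lam * deriv h y) y :=
      (hhdiff y hy).const_mul lam
    exact hc2.unique hc3
  have hD'pos : ∀ y ∈ Set.Ioo (-a) a, 0 < deriv D y := by
    intro y hy
    have h1 := chain y hy
    have h2 := hh'pos (D y) (hDmap y hy)
    have h3 := mul_pos hlam0 (hh'pos y hy)
    nlinarith
  have hmono : StrictMonoOn h (Set.Ioo (-a) a) := by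
    apply strictMonoOn_of_deriv_pos (convex_Ioo _ _) (hh.continuousOn)
    intro y hy
    rw [interior_Ioo] at hy
    exact hh'pos y hy
  have hne : ∀ y ∈ Set.Ioo (-a) a, y ≠ 0 → h y ≠ 0 := by
    intro y hy hy0
    rcases lt_or_gt_of_ne hy0 with hlt | hgt
    · have := hmono hy h0S hlt
      rw [hh0] at this; exact ne_of_lt this
    · have := hmono h0S hy hgt
      rw [hh0] at this; exact (ne_of_lt this).symm
  intro x hx
  by_cases hx0 : x = 0
  · subst hx0
    have hiter : ∀ j : ℕ, D^[j] (0:ℝ) = 0 := fun j => Function.iterate_fixed hD0 j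
    refine ⟨1, ?_, ?_⟩
    · have : (fun n : ℕ => ∏ j ∈ Finset.range n, rho (D^[j] (0:ℝ))) = fun _ => 1 := by
        funext n
        simp [hiter, hrho]
      rw [this]; exact tendsto_const_nhds
    · simp [hh0]
  · -- x ≠ 0
    have orbit : ∀ n : ℕ, D^[n] x ∈ Set.Ioo (-a) a ∧ D^[n] x ≠ 0 ∧ |D^[n] x| ≤ |x| := by
      intro n
      induction n with
      | zero => exact ⟨hx, hx0, le_refl _⟩
      | succ n ih =>
        obtain ⟨hm, hn0, hle⟩ := ih
        rw [Function.iterate_succ_apply']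
        exact ⟨hDmap _ hm, hDne _ hm hn0,
          le_trans (le_of_lt (hcontract _ hm hn0)) hle⟩
    have hgne : ∀ y ∈ Set.Ioo (-a) a, y ≠ 0 → h y / deriv h y ≠ 0 := fun y hy hy0 =>
      div_ne_zero (hne y hy hy0) (ne_of_gt (hh'pos y hy))
    have key : ∀ y ∈ Set.Ioo (-a) a, y ≠ 0 →
        rho y = (D y / (h (D y) / deriv h (D y))) * ((h y / deriv h y) / y) := by
      intro y hy hy0
      have hDy := hDmap y hy
      have hDy0 := hDne y hy hy0
      have h1 := chain y hy
      have h2 := hSch y hy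
      have h3 := ne_of_gt (hh'pos y hy)
      have h4 := ne_of_gt (hh'pos (D y) hDy)
      have h5 := hne y hy hy0
      have h6 := hne (D y) hDy hDy0
      have h7 : deriv D y ≠ 0 := ne_of_gt (hD'pos y hy)
      have hlamne : lam ≠ 0 := ne_of_gt hlam0
      rw [hrho, if_neg hy0]
      field_simp
      rw [h2]
      linear_combination (-(h y)) * h1
    have hprod : ∀ n : ℕ, ∏ j ∈ Finset.range n, rho (D^[j] x)
        = (h x / deriv h x) / x * (D^[n] x / (h (D^[n] x) / deriv h (D^[n] x))) := by
      intro n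
      induction n with
      | zero =>
        simp only [Finset.range_zero, Finset.prod_empty, Function.iterate_zero_apply]
        field_simp [hx0, hne x hx hx0, ne_of_gt (hh'pos x hx)]
      | succ n ih =>
        rw [Finset.prod_range_succ, ih, key (D^[n] x) (orbit n).1 (orbit n).2.1,
          Function.iterate_succ_apply']
        have hy0 := (orbit n).2.1
        have hz := orbit (n+1)
        rw [Function.iterate_succ_apply'] at hz
        field_simp [hx0, hy0, hz.2.1, hne x hx hx0, ne_of_gt (hh'pos x hx),
          hne _ (orbit n).1 hy0, ne_of_gt (hh'pos _ (orbit n).1),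
          hne _ hz.1 hz.2.1, ne_of_gt (hh'pos _ hz.1)]
    -- limits
    have hval : ∀ n : ℕ, h (D^[n] x) = lam ^ n * h x := by
      intro n
      induction n with
      | zero => simp
      | succ n ih =>
        rw [Function.iterate_succ_apply', hSch _ (orbit n).1, ih, pow_succ]
        ring
    have hconv0 : Filter.Tendsto (fun n : ℕ => D^[n] x) Filter.atTop (nhds 0) := by
      have habs : ∀ δ : ℝ, 0 < δ → ∀ᶠ n in Filter.atTop, |D^[n] x| < δ := by
        intro δ hδ
        by_cases hδx : |x| < δ
        · exact Filter.Eventually.of_forall fun n => lt_of_le_of_lt (orbit n).2.2 hδx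
        · push_neg at hδx
          have hδa : δ < a := lt_of_le_of_lt hδx (habsS x hx)
          have hδS : δ ∈ Set.Ioo (-a) a := ⟨by linarith, hδa⟩
          have hδS' : -δ ∈ Set.Ioo (-a) a := ⟨by linarith, by linarith⟩
          have hpos : 0 < h δ := by
            have := hmono h0S hδS hδ; rwa [hh0] at this
          have hneg : h (-δ) < 0 := by
            have := hmono hδS' h0S (by linarith); rwa [hh0] at this
          set c := min (h δ) (-h (-δ)) with hc
          have hcpos : 0 < c := lt_min hpos (by linarith)
          have hto : Filter.Tendsto (fun n : ℕ => h (D^[n] x)) Filter.atTop (nhds 0) := by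
            simp only [hval]
            have := (tendsto_pow_atTop_nhds_zero_of_lt_one hlam0.le hlam1).mul_const (h x)
            simpa using this
          have hev : ∀ᶠ n in Filter.atTop, |h (D^[n] x)| < c := by
            have := Metric.tendsto_atTop.mp hto c hcpos
            obtain ⟨N, hN⟩ := this
            refine Filter.eventually_atTop.mpr ⟨N, fun n hn => ?_⟩
            have := hN n hn
            rwa [Real.dist_eq, sub_zero] at this
          filter_upwards [hev] with n hn
          by_contra hcon
          push_neg at hcon
          rcases le_abs.mp hcon with h1 | h1
          · have hmem := (orbit n).1
            have : h δ ≤ h (D^[n] x) := hmono.monotoneOn hδS hmem h1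
            have habs' := (abs_lt.mp hn).2
            have := min_le_left (h δ) (-h (-δ))
            linarith
          · have hmem := (orbit n).1
            have : h (D^[n] x) ≤ h (-δ) := hmono.monotoneOn hmem hδS' (by linarith)
            have habs' := (abs_lt.mp hn).1
            have := min_le_right (h δ) (-h (-δ))
            linarith
      rw [Metric.tendsto_atTop]
      intro δ hδ
      obtain ⟨N, hN⟩ := Filter.eventually_atTop.mp (habs δ hδ)
      exact ⟨N, fun n hn => by rw [Real.dist_eq, sub_zero]; exact hN n hn⟩
    have horb : Filter.Tendsto (fun n : ℕ => D^[n] x) Filter.atTop (nhdsWithin 0 {(0:ℝ)}ᶜ) := by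
      apply tendsto_nhdsWithin_of_tendsto_nhds_of_eventually_within _ hconv0
      exact Filter.Eventually.of_forall fun n => (orbit n).2.1
    have hslope : Filter.Tendsto (fun y => h y / y) (nhdsWithin 0 {(0:ℝ)}ᶜ) (nhds 1) := by
      have hd0 := hhdiff 0 h0S
      rw [hh'0] at hd0
      have := hasDerivAt_iff_tendsto_slope.mp hd0
      refine this.congr fun y => ?_
      simp [slope_def_field, hh0]
    have hinv : Filter.Tendsto (fun y => y / h y) (nhdsWithin 0 {(0:ℝ)}ᶜ) (nhds 1) := by
      have := hslope.inv₀ one_ne_zero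
      simp only [inv_div, inv_one] at this
      exact this
    have T1 : Filter.Tendsto (fun n : ℕ => D^[n] x / h (D^[n] x)) Filter.atTop (nhds 1) :=
      hinv.comp horb
    have T2 : Filter.Tendsto (fun n : ℕ => deriv h (D^[n] x)) Filter.atTop (nhds 1) := by
      have hcont : ContinuousOn (deriv h) (Set.Ioo (-a) a) :=
        hh.continuousOn_deriv_of_isOpen hS le_rfl
      have hca : ContinuousAt (deriv h) 0 :=
        (hcont 0 h0S).continuousAt (hS.mem_nhds h0S)
      have := hca.tendsto.comp hconv0
      rwa [hh'0] at this
    have hratio : Filter.Tendsto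
        (fun n : ℕ => D^[n] x / (h (D^[n] x) / deriv h (D^[n] x))) Filter.atTop (nhds 1) := by
      have heq : (fun n : ℕ => D^[n] x / (h (D^[n] x) / deriv h (D^[n] x)))
          = fun n : ℕ => (D^[n] x / h (D^[n] x)) * deriv h (D^[n] x) := by
        funext n
        rw [div_div_eq_mul_div, div_mul_eq_mul_div]
      rw [heq]
      simpa using T1.mul T2
    refine ⟨(h x / deriv h x) / x, ?_, ?_⟩
    · have heq : (fun n : ℕ => ∏ j ∈ Finset.range n, rho (D^[j] x))
          = fun n : ℕ => (h x / deriv h x) / x * (D^[n] x / (h (D^[n] x) / deriv h (D^[n] x))) :=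
        funext hprod
      rw [heq]
      simpa using hratio.const_mul ((h x / deriv h x) / x)
    · rw [mul_comm, div_mul_cancel₀ _ hx0]
end

section
/- Let 0 ≤ a < b and let D : [a,b) → [a,b) be a C¹ function with D'(x) > 0 for all x ∈ [a,b), D(a) = a, 0 < D'(a) < 1, and D(x) < x for all x ∈ (a,b). If g₁, g₂ : [a,b) → ℝ satisfy Julia's equation gᵢ(D(x)) = D'(x) gᵢ(x) for all x ∈ [a,b), are both differentiable at a with g₁(a) = g₂(a) = 0 and g₁'(a) = g₂'(a) ≠ 0, then g₁(x) = g₂(x) for all x ∈ [a,b). -/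
/-- **Uniqueness for Julia's equation on `[a,b)` (Theorem 2.7).** Let
`D : [a,b) → [a,b)` be `C¹` with positive derivative, `D a = a`, `0 < D'(a) < 1` and
`D x < x` on `(a,b)`.  If `g₁, g₂` solve Julia's equation `gᵢ(D x) = D'(x) gᵢ(x)` on
`[a,b)`, are differentiable at `a` with `g₁ a = g₂ a = 0` and equal nonzero derivative
`c` at `a`, then `g₁ = g₂` on `[a,b)`. -/
theorem julia_unique_on_Ico
    (a b : ℝ) (ha : 0 ≤ a) (hab : a < b) (D : ℝ → ℝ)
    (hD : ContDiffOn ℝ 1 D (Set.Ico a b))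
    (hmaps : Set.MapsTo D (Set.Ico a b) (Set.Ico a b))
    (hD'pos : ∀ x ∈ Set.Ico a b, 0 < derivWithin D (Set.Ico a b) x)
    (hDa : D a = a)
    (hD'a0 : 0 < derivWithin D (Set.Ico a b) a)
    (hD'a1 : derivWithin D (Set.Ico a b) a < 1)
    (hlt : ∀ x ∈ Set.Ioo a b, D x < x)
    (g₁ g₂ : ℝ → ℝ)
    (hJ₁ : ∀ x ∈ Set.Ico a b, g₁ (D x) = derivWithin D (Set.Ico a b) x * g₁ x)
    (hJ₂ : ∀ x ∈ Set.Ico a b, g₂ (D x) = derivWithin D (Set.Ico a b) x * g₂ x)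
    (hg₁a : g₁ a = 0) (hg₂a : g₂ a = 0)
    (c : ℝ) (hc : c ≠ 0)
    (hg₁' : HasDerivWithinAt g₁ c (Set.Ico a b) a)
    (hg₂' : HasDerivWithinAt g₂ c (Set.Ico a b) a) :
    ∀ x ∈ Set.Ico a b, g₁ x = g₂ x := by
  have haI : a ∈ Set.Ico a b := ⟨le_refl a, hab⟩
  -- D is strictly monotone on [a,b)
  have hcont : ContinuousOn D (Set.Ico a b) := hD.continuousOn
  have hsm : StrictMonoOn D (Set.Ico a b) := by
    apply strictMonoOn_of_deriv_pos (convex_Ico a b) hcont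
    intro z hz
    rw [interior_Ico] at hz
    have hmem : Set.Ico a b ∈ nhds z := Ico_mem_nhds hz.1 hz.2
    have := hD'pos z ⟨le_of_lt hz.1, hz.2⟩
    rwa [derivWithin_of_mem_nhds hmem] at this
  -- D maps (a,b) to (a,b)
  have hmapsIoo : ∀ z ∈ Set.Ioo a b, D z ∈ Set.Ioo a b := by
    intro z hz
    have hz' : z ∈ Set.Ico a b := ⟨le_of_lt hz.1, hz.2⟩
    refine ⟨?_, (hmaps hz').2⟩
    have := hsm haI hz' hz.1
    rwa [hDa] at this
  intro x hx
  rcases eq_or_lt_of_le hx.1 with h | h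
  · rw [← h, hg₁a, hg₂a]
  have hxIoo : x ∈ Set.Ioo a b := ⟨h, hx.2⟩
  set y : ℕ → ℝ := fun n => D^[n] x with hy
  have hyIoo : ∀ n, y n ∈ Set.Ioo a b := by
    intro n
    induction n with
    | zero => simpa [hy] using hxIoo
    | succ n ih =>
      have : y (n+1) = D (y n) := by simp [hy, Function.iterate_succ_apply']
      rw [this]; exact hmapsIoo _ ih
  have hyIco : ∀ n, y n ∈ Set.Ico a b := fun n => ⟨le_of_lt (hyIoo n).1, (hyIoo n).2⟩
  have hsucc : ∀ n, y (n+1) = D (y n) := by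
    intro n; simp [hy, Function.iterate_succ_apply']
  -- y is antitone
  have hanti : Antitone y := by
    apply antitone_nat_of_succ_le
    intro n
    rw [hsucc n]
    exact le_of_lt (hlt _ (hyIoo n))
  have hbdd : BddBelow (Set.range y) := ⟨a, by rintro _ ⟨n, rfl⟩; exact le_of_lt (hyIoo n).1⟩
  set L := ⨅ n, y n with hL
  have hlim : Filter.Tendsto y Filter.atTop (nhds L) := tendsto_atTop_ciInf hanti hbdd
  have hLa : a ≤ L := le_ciInf fun n => le_of_lt (hyIoo n).1
  have hLb : L < b := lt_of_le_of_lt (ciInf_le hbdd 0) (hyIoo 0).2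
  have hLI : L ∈ Set.Ico a b := ⟨hLa, hLb⟩
  -- L is a fixed point of D, hence L = a
  have hDL : D L = L := by
    have h1 : Filter.Tendsto y Filter.atTop (nhdsWithin L (Set.Ico a b)) :=
      tendsto_nhdsWithin_of_tendsto_nhds_of_eventually_within _ hlim
        (Filter.Eventually.of_forall hyIco)
    have h2 : Filter.Tendsto (fun n => D (y n)) Filter.atTop (nhds (D L)) :=
      (hcont L hLI).tendsto.comp h1
    have h3 : Filter.Tendsto (fun n => y (n+1)) Filter.atTop (nhds L) :=
      hlim.comp (Filter.tendsto_add_atTop_nat 1)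
    have h4 : (fun n => D (y n)) = fun n => y (n+1) := by
      funext n; exact (hsucc n).symm
    rw [h4] at h2
    exact tendsto_nhds_unique h2 h3
  have hLeq : L = a := by
    by_contra hne
    have hLa' : a < L := lt_of_le_of_ne hLa (Ne.symm hne)
    exact absurd hDL (ne_of_lt (hlt L ⟨hLa', hLb⟩))
  rw [hLeq] at hlim
  -- the cross-multiplied Julia identity along the orbit
  have hkey : ∀ n, g₁ x * g₂ (y n) = g₂ x * g₁ (y n) := by
    intro n
    induction n with
    | zero => simp [hy]; ring
    | succ n ih =>
      rw [hsucc n, hJ₁ _ (hyIco n), hJ₂ _ (hyIco n)]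
      calc g₁ x * (derivWithin D (Set.Ico a b) (y n) * g₂ (y n))
          = derivWithin D (Set.Ico a b) (y n) * (g₁ x * g₂ (y n)) := by ring
        _ = derivWithin D (Set.Ico a b) (y n) * (g₂ x * g₁ (y n)) := by rw [ih]
        _ = g₂ x * (derivWithin D (Set.Ico a b) (y n) * g₁ (y n)) := by ring
  -- slopes tend to c
  have hyne : ∀ n, y n ∈ Set.Ico a b \ {a} := fun n =>
    ⟨hyIco n, by simp [ne_of_gt (hyIoo n).1]⟩
  have htendy : Filter.Tendsto y Filter.atTop (nhdsWithin a (Set.Ico a b \ {a})) :=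
    tendsto_nhdsWithin_of_tendsto_nhds_of_eventually_within _ hlim
      (Filter.Eventually.of_forall hyne)
  have hslope₁ : Filter.Tendsto (fun n => slope g₁ a (y n)) Filter.atTop (nhds c) :=
    ((hasDerivWithinAt_iff_tendsto_slope.mp hg₁').comp htendy)
  have hslope₂ : Filter.Tendsto (fun n => slope g₂ a (y n)) Filter.atTop (nhds c) :=
    ((hasDerivWithinAt_iff_tendsto_slope.mp hg₂').comp htendy)
  -- combine
  have heq : (fun n => g₁ x * slope g₂ a (y n)) = fun n => g₂ x * slope g₁ a (y n) := by
    funext n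
    simp only [slope_def_field, hg₁a, hg₂a, sub_zero]
    rw [div_eq_mul_inv, div_eq_mul_inv, ← mul_assoc, ← mul_assoc, hkey n]
  have h1 : Filter.Tendsto (fun n => g₁ x * slope g₂ a (y n)) Filter.atTop (nhds (g₁ x * c)) :=
    hslope₂.const_mul _
  have h2 : Filter.Tendsto (fun n => g₂ x * slope g₁ a (y n)) Filter.atTop (nhds (g₂ x * c)) :=
    hslope₁.const_mul _
  rw [heq] at h1
  have := tendsto_nhds_unique h1 h2
  exact mul_right_cancel₀ hc this
end

section
/- For every integer k ≥ 2, the conjugation h is of class C^k on (-a,a) if and only if D is of class C^k on (-a,a). -/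
open Set Filter

section AuxLemmas

lemma aux_iteratedDeriv_contDiffOn {s : Set ℝ} (hs : IsOpen s) :
    ∀ (m : ℕ) (f : ℝ → ℝ) (i : ℕ), ContDiffOn ℝ (m + i : ℕ) f s →
      ContDiffOn ℝ (i : ℕ) (iteratedDeriv m f) s := by
  intro m
  induction m with
  | zero => intro f i hf; simpa [iteratedDeriv_zero] using hf
  | succ m ih =>
    intro f i hf
    rw [iteratedDeriv_succ']
    apply ih
    apply hf.deriv_of_isOpen hs
    push_cast
    ring_nf
    exact le_refl _

lemma aux_contDiffOn_of_iteratedDeriv {s : Set ℝ} (hs : IsOpen s) :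
    ∀ (j : ℕ) (f : ℝ → ℝ), ContDiffOn ℝ (j : ℕ) f s → ContDiffOn ℝ 1 (iteratedDeriv j f) s →
      ContDiffOn ℝ (j + 1 : ℕ) f s := by
  intro j
  induction j with
  | zero => intro f _ hd; simpa [iteratedDeriv_zero] using hd
  | succ j ih =>
    intro f hf hd
    have hf' : ContDiffOn ℝ (j : ℕ) (deriv f) s := hf.deriv_of_isOpen hs (by push_cast; exact le_refl _)
    have hd' : ContDiffOn ℝ 1 (iteratedDeriv j (deriv f)) s := by
      rw [← iteratedDeriv_succ']; exact hd
    have := ih (deriv f) hf' hd'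
    have hdiff : DifferentiableOn ℝ f s := hf.differentiableOn (by simp)
    rw [show ((j + 1 + 1 : ℕ) : WithTop ℕ∞) = (j + 1 : ℕ) + 1 by push_cast; ring]
    rw [contDiffOn_succ_iff_deriv_of_isOpen hs]
    refine ⟨hdiff, by simp, this⟩

lemma aux_hasDerivAt_iteratedDeriv {f : ℝ → ℝ} {s : Set ℝ} (hs : IsOpen s) (m : ℕ)
    (hf : ContDiffOn ℝ (m + 1 : ℕ) f s) {x : ℝ} (hx : x ∈ s) :
    HasDerivAt (iteratedDeriv m f) (iteratedDeriv (m + 1) f x) x := by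
  have h1 : ContDiffOn ℝ (1 : ℕ) (iteratedDeriv m f) s := aux_iteratedDeriv_contDiffOn hs m f 1 hf
  have hdiff : DifferentiableAt ℝ (iteratedDeriv m f) x := by
    have := (h1.differentiableOn (by norm_num)).differentiableAt (hs.mem_nhds hx)
    exact this
  rw [iteratedDeriv_succ]
  exact hdiff.hasDerivAt

end AuxLemmas

noncomputable def useq (D : ℝ → ℝ) (lam : ℝ) (j : ℕ) (u0 : ℝ → ℝ) : ℕ → ℝ → ℝ
  | 0 => u0
  | n+1 => fun x => lam⁻¹ * (useq D lam j u0 n (D x)) * (deriv D x)^j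

lemma useq_succ_def (D : ℝ → ℝ) (lam : ℝ) (j : ℕ) (u0 : ℝ → ℝ) (n : ℕ) :
    useq D lam j u0 (n+1) = fun x => lam⁻¹ * (useq D lam j u0 n (D x)) * (deriv D x)^j := rfl

lemma useq_zero_def (D : ℝ → ℝ) (lam : ℝ) (j : ℕ) (u0 : ℝ → ℝ) : useq D lam j u0 0 = u0 := rfl




lemma useq_contDiffOn {D : ℝ → ℝ} {lam : ℝ} {j : ℕ} {u0 : ℝ → ℝ} {U : Set ℝ}
    (hU : IsOpen U) (hD2 : ContDiffOn ℝ 2 D U) (hDU : Set.MapsTo D U U)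
    (hu0 : ContDiffOn ℝ 1 u0 U) : ∀ n, ContDiffOn ℝ 1 (useq D lam j u0 n) U := by
  intro n
  induction n with
  | zero => exact hu0
  | succ n ih =>
    show ContDiffOn ℝ 1 (fun x => lam⁻¹ * (useq D lam j u0 n (D x)) * (deriv D x)^j) U
    have hD1 : ContDiffOn ℝ 1 D U := hD2.of_le (by norm_num)
    have hD'1 : ContDiffOn ℝ 1 (deriv D) U := hD2.deriv_of_isOpen hU (by norm_num)
    exact ((contDiffOn_const.mul (ih.comp hD1 hDU)).mul (hD'1.pow j))

lemma useq_hasDerivAt {D : ℝ → ℝ} {lam : ℝ} {j : ℕ} {u0 : ℝ → ℝ} {U : Set ℝ}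
    (hU : IsOpen U) (hD2 : ContDiffOn ℝ 2 D U) (hDU : Set.MapsTo D U U)
    (hu0 : ContDiffOn ℝ 1 u0 U) (n : ℕ) {x : ℝ} (hx : x ∈ U) :
    HasDerivAt (useq D lam j u0 n) (deriv (useq D lam j u0 n) x) x := by
  have h1 := useq_contDiffOn (lam := lam) (j := j) hU hD2 hDU hu0 n
  exact ((h1.differentiableOn (by norm_num)).differentiableAt (hU.mem_nhds hx)).hasDerivAt

/-- Derivative formula for `useq (n+1)`. -/
lemma useq_deriv_formula {D : ℝ → ℝ} {lam : ℝ} {j : ℕ} {u0 : ℝ → ℝ} {U : Set ℝ}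
    (hU : IsOpen U) (hD2 : ContDiffOn ℝ 2 D U) (hDU : Set.MapsTo D U U)
    (hu0 : ContDiffOn ℝ 1 u0 U) (n : ℕ) {x : ℝ} (hx : x ∈ U) :
    deriv (useq D lam j u0 (n+1)) x =
      lam⁻¹ * (deriv (useq D lam j u0 n) (D x) * deriv D x) * (deriv D x)^j
      + lam⁻¹ * useq D lam j u0 n (D x) *
          ((j : ℝ) * (deriv D x)^(j-1) * deriv (deriv D) x) := by
  have hD1 : ContDiffOn ℝ 1 D U := hD2.of_le (by norm_num)
  have hDx : HasDerivAt D (deriv D x) x :=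
    ((hD1.differentiableOn (by norm_num)).differentiableAt (hU.mem_nhds hx)).hasDerivAt
  have hD'x : HasDerivAt (deriv D) (deriv (deriv D) x) x := by
    have : ContDiffOn ℝ 1 (deriv D) U := hD2.deriv_of_isOpen hU (by norm_num)
    exact ((this.differentiableOn (by norm_num)).differentiableAt (hU.mem_nhds hx)).hasDerivAt
  have hun : HasDerivAt (useq D lam j u0 n) (deriv (useq D lam j u0 n) (D x)) (D x) :=
    useq_hasDerivAt (lam := lam) (j := j) hU hD2 hDU hu0 n (hDU hx)
  have h1 : HasDerivAt (fun y => useq D lam j u0 n (D y))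
      (deriv (useq D lam j u0 n) (D x) * deriv D x) x := hun.comp x hDx
  have h2 : HasDerivAt (fun y => (deriv D y)^j) ((j : ℝ) * (deriv D x)^(j-1) * deriv (deriv D) x) x := by
    simpa [mul_comm, mul_assoc, mul_left_comm] using (hD'x.fun_pow j)
  have h3 : HasDerivAt (fun y => lam⁻¹ * useq D lam j u0 n (D y))
      (lam⁻¹ * (deriv (useq D lam j u0 n) (D x) * deriv D x)) x := h1.const_mul _
  have h4 := h3.mul h2
  have : deriv (useq D lam j u0 (n+1)) x =
      lam⁻¹ * (deriv (useq D lam j u0 n) (D x) * deriv D x) * (deriv D x)^j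
      + lam⁻¹ * useq D lam j u0 n (D x) * ((j : ℝ) * (deriv D x)^(j-1) * deriv (deriv D) x) := by
    have h5 : HasDerivAt (useq D lam j u0 (n+1))
        (lam⁻¹ * (deriv (useq D lam j u0 n) (D x) * deriv D x) * (deriv D x)^j
          + lam⁻¹ * useq D lam j u0 n (D x) * ((j : ℝ) * (deriv D x)^(j-1) * deriv (deriv D) x)) x := by
      show HasDerivAt (fun y => lam⁻¹ * useq D lam j u0 n (D y) * (deriv D y)^j) _ x
      exact h4
    exact h5.deriv
  exact this


/-- Main series lemma: under geometric bounds on `useq` and its derivatives on `Icc (-δ) δ`,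
the sum `g = ∑' n, useq n` is `C^1` on `Ioo (-δ) δ`, continuous on `Icc`, and satisfies the
shift identity. -/
lemma useq_series {D : ℝ → ℝ} {lam : ℝ} {j : ℕ} {u0 : ℝ → ℝ} {U : Set ℝ} {δ A t : ℝ}
    (hU : IsOpen U) (hD2 : ContDiffOn ℝ 2 D U) (hDU : Set.MapsTo D U U)
    (hu0 : ContDiffOn ℝ 1 u0 U) (hδ : 0 < δ) (hJU : Set.Icc (-δ) δ ⊆ U)
    (hmaps : ∀ x ∈ Set.Icc (-δ) δ, D x ∈ Set.Icc (-δ) δ)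
    (ht0 : 0 ≤ t) (ht1 : t < 1)
    (hbound : ∀ n, ∀ x ∈ Set.Icc (-δ) δ, |useq D lam j u0 n x| ≤ A * t^n ∧
      |deriv (useq D lam j u0 n) x| ≤ A * t^n) :
    ∃ g : ℝ → ℝ, (∀ x, g x = ∑' n, useq D lam j u0 n x) ∧
      ContDiffOn ℝ 1 g (Set.Ioo (-δ) δ) ∧ ContinuousOn g (Set.Icc (-δ) δ) ∧
      (∀ x ∈ Set.Icc (-δ) δ, g x = u0 x + lam⁻¹ * g (D x) * (deriv D x)^j) := by
  set J := Set.Icc (-δ) δ with hJ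
  set I := Set.Ioo (-δ) δ with hI
  have hIJ : I ⊆ J := Set.Ioo_subset_Icc_self
  have hIU : I ⊆ U := hIJ.trans hJU
  have hIopen : IsOpen I := isOpen_Ioo
  have h0I : (0:ℝ) ∈ I := by constructor <;> simp [hδ] <;> linarith
  have hgeom : Summable (fun n : ℕ => A * t^n) :=
    (summable_geometric_of_lt_one ht0 ht1).mul_left A
  have hsum : ∀ x ∈ J, Summable (fun n => useq D lam j u0 n x) := by
    intro x hx
    exact hgeom.of_norm_bounded (fun n => by
      simpa [Real.norm_eq_abs] using (hbound n x hx).1)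
  refine ⟨fun x => ∑' n, useq D lam j u0 n x, fun x => rfl, ?_, ?_, ?_⟩
  · -- C^1 on I
    have hder : ∀ x ∈ I, HasDerivAt (fun y => ∑' n, useq D lam j u0 n y)
        (∑' n, deriv (useq D lam j u0 n) x) x := by
      intro x hx
      refine hasDerivAt_tsum_of_isPreconnected hgeom hIopen (isPreconnected_Ioo)
        (fun n y hy => useq_hasDerivAt hU hD2 hDU hu0 n (hIU hy))
        (fun n y hy => by simpa [Real.norm_eq_abs] using (hbound n y (hIJ hy)).2)
        h0I (hsum 0 (hIJ h0I)) hx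
    have hcontd : ContinuousOn (fun x => ∑' n, deriv (useq D lam j u0 n) x) I := by
      have := tendstoUniformlyOn_tsum hgeom
        (f := fun n x => deriv (useq D lam j u0 n) x) (s := I)
        (fun n x hx => by simpa [Real.norm_eq_abs] using (hbound n x (hIJ hx)).2)
      apply this.continuousOn
      refine Filter.Frequently.of_forall (fun N => ?_)
      apply continuousOn_finset_sum
      intro n _
      exact ((useq_contDiffOn hU hD2 hDU hu0 n).continuousOn_deriv_of_isOpen hU le_rfl).mono hIU
    rw [show (1 : WithTop ℕ∞) = 0 + 1 from rfl, contDiffOn_succ_iff_deriv_of_isOpen hIopen]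
    refine ⟨fun x hx => ((hder x hx).differentiableAt).differentiableWithinAt, by simp, ?_⟩
    rw [contDiffOn_zero]
    apply hcontd.congr
    intro x hx
    exact (hder x hx).deriv
  · -- continuity on J
    have := tendstoUniformlyOn_tsum hgeom (f := fun n x => useq D lam j u0 n x) (s := J)
      (fun n x hx => by simpa [Real.norm_eq_abs] using (hbound n x hx).1)
    apply this.continuousOn
    refine Filter.Frequently.of_forall (fun N => ?_)
    apply continuousOn_finset_sum
    intro n _
    exact ((useq_contDiffOn hU hD2 hDU hu0 n).continuousOn).mono hJU
  · -- shift identity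
    intro x hx
    have hsx := hsum x hx
    have hsDx := hsum (D x) (hmaps x hx)
    show ∑' n, useq D lam j u0 n x = u0 x + lam⁻¹ * (∑' n, useq D lam j u0 n (D x)) * deriv D x ^ j
    rw [hsx.tsum_eq_zero_add]
    congr 1
    calc ∑' n, useq D lam j u0 (n+1) x
          = ∑' n, lam⁻¹ * (useq D lam j u0 n (D x)) * (deriv D x)^j := rfl
        _ = lam⁻¹ * (∑' n, useq D lam j u0 n (D x)) * (deriv D x)^j := by
            simp_rw [mul_assoc]
            rw [tsum_mul_left, tsum_mul_right]


/-- Geometric bounds for the case `j ≥ 2`: plain sup-norm contraction. -/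
lemma useq_bound_j2 {D : ℝ → ℝ} {lam : ℝ} {j : ℕ} {u0 : ℝ → ℝ} {U : Set ℝ}
    {δ ν M B a0 : ℝ}
    (hU : IsOpen U) (hD2 : ContDiffOn ℝ 2 D U) (hDU : Set.MapsTo D U U)
    (hu0 : ContDiffOn ℝ 1 u0 U) (hδ : 0 < δ) (hJU : Set.Icc (-δ) δ ⊆ U)
    (hmaps : ∀ x ∈ Set.Icc (-δ) δ, D x ∈ Set.Icc (-δ) δ)
    (hlam0 : 0 < lam) (hν0 : 0 < ν) (hν1 : ν < 1) (hM : 0 ≤ M)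
    (hD' : ∀ x ∈ Set.Icc (-δ) δ, |deriv D x| ≤ ν)
    (hD'' : ∀ x ∈ Set.Icc (-δ) δ, |deriv (deriv D) x| ≤ M)
    (hθ : ν^j / lam < 1)
    (hB : ∀ x ∈ Set.Icc (-δ) δ, |u0 x| ≤ B)
    (ha0 : ∀ x ∈ Set.Icc (-δ) δ, |deriv u0 x| ≤ a0) :
    ∃ A, ∀ n, ∀ x ∈ Set.Icc (-δ) δ, |useq D lam j u0 n x| ≤ A * (ν^j/lam)^n ∧
      |deriv (useq D lam j u0 n) x| ≤ A * (ν^j/lam)^n := by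
  set J := Set.Icc (-δ) δ
  set θ := ν^j/lam with hθdef
  have hθ0 : 0 < θ := div_pos (pow_pos hν0 j) hlam0
  have hB0 : 0 ≤ B := le_trans (abs_nonneg _) (hB 0 (by constructor <;> [linarith; linarith]))
  have ha00 : 0 ≤ a0 := le_trans (abs_nonneg _) (ha0 0 (by constructor <;> [linarith; linarith]))
  -- first: |useq n x| ≤ B * θ^n
  have hub : ∀ n, ∀ x ∈ J, |useq D lam j u0 n x| ≤ B * θ^n := by
    intro n
    induction n with
    | zero => intro x hx; simpa [useq_zero_def] using hB x hx
    | succ n ih =>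
      intro x hx
      rw [useq_succ_def]
      have h1 : |lam⁻¹ * useq D lam j u0 n (D x) * deriv D x ^ j|
          = lam⁻¹ * |useq D lam j u0 n (D x)| * |deriv D x|^j := by
        rw [abs_mul, abs_mul, abs_pow, abs_inv, abs_of_pos hlam0]
      rw [h1]
      calc lam⁻¹ * |useq D lam j u0 n (D x)| * |deriv D x|^j
          ≤ lam⁻¹ * (B * θ^n) * ν^j := by
            apply mul_le_mul
            · apply mul_le_mul_of_nonneg_left (ih (D x) (hmaps x hx))
              positivity
            · exact pow_le_pow_left₀ (abs_nonneg _) (hD' x hx) j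
            · positivity
            · positivity
        _ = B * θ^(n+1) := by rw [hθdef]; ring
  -- dominant recursion for the derivative
  set q := ν^(j+1)/lam with hqdef
  set C := B * (j : ℝ) * ν^(j-1) * M / lam with hCdef
  have hq0 : 0 ≤ q := by positivity
  have hqθ : q < θ := by
    rw [hqdef, hθdef, div_lt_div_iff_of_pos_right hlam0]
    calc ν^(j+1) = ν^j * ν := by ring
      _ < ν^j * 1 := by
          apply mul_lt_mul_of_pos_left hν1 (pow_pos hν0 j)
      _ = ν^j := by ring
  have hC0 : 0 ≤ C := by positivity
  set A := max a0 (C/(θ - q)) with hAdef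
  have hA0 : 0 ≤ A := le_trans ha00 (le_max_left _ _)
  have hAd : ∀ n, ∀ x ∈ J, |deriv (useq D lam j u0 n) x| ≤ A * θ^n := by
    intro n
    induction n with
    | zero =>
      intro x hx
      rw [useq_zero_def]
      have hstep : |deriv u0 x| ≤ A := le_trans (ha0 x hx) (le_max_left _ _)
      simpa using hstep
    | succ n ih =>
      intro x hx
      rw [useq_deriv_formula hU hD2 hDU hu0 n (hJU hx)]
      have hDx : |deriv D x| ≤ ν := hD' x hx
      have key : |lam⁻¹ * (deriv (useq D lam j u0 n) (D x) * deriv D x) * deriv D x ^ j +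
          lam⁻¹ * useq D lam j u0 n (D x) * ((j:ℝ) * deriv D x ^ (j-1) * deriv (deriv D) x)|
          ≤ lam⁻¹ * ((A * θ^n) * ν) * ν^j + lam⁻¹ * (B * θ^n) * ((j:ℝ) * ν^(j-1) * M) := by
        apply le_trans (abs_add_le _ _)
        apply add_le_add
        · rw [abs_mul, abs_mul, abs_inv, abs_of_pos hlam0, abs_mul, abs_pow]
          apply mul_le_mul
          · apply mul_le_mul_of_nonneg_left _ (by positivity)
            exact mul_le_mul (ih (D x) (hmaps x hx)) hDx (abs_nonneg _) (by positivity)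
          · exact pow_le_pow_left₀ (abs_nonneg _) hDx j
          · positivity
          · positivity
        · rw [abs_mul, abs_mul, abs_inv, abs_of_pos hlam0, abs_mul, abs_mul, abs_pow]
          apply mul_le_mul
          · exact mul_le_mul_of_nonneg_left (hub n (D x) (hmaps x hx)) (by positivity)
          · apply mul_le_mul
            · rw [abs_of_nonneg (by positivity : (0:ℝ) ≤ (j:ℝ))]
              exact mul_le_mul_of_nonneg_left
                (pow_le_pow_left₀ (abs_nonneg _) hDx (j-1)) (by positivity)
            · exact hD'' x hx
            · exact abs_nonneg _
            · positivity
          · positivity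
          · positivity
      apply le_trans key
      have e1 : lam⁻¹ * ((A * θ^n) * ν) * ν^j = (q * θ^n) * A := by
        rw [hqdef]; field_simp; ring
      have e2 : lam⁻¹ * (B * θ^n) * ((j:ℝ) * ν^(j-1) * M) = C * θ^n := by
        rw [hCdef]; field_simp
      rw [e1, e2]
      have hAC : q * A + C ≤ A * θ := by
        have h2 : C / (θ - q) ≤ A := le_max_right _ _
        have h3 : C ≤ A * (θ - q) := by
          rw [div_le_iff₀ (by linarith)] at h2; linarith [h2]
        nlinarith
      calc q * θ^n * A + C * θ^n = (q * A + C) * θ^n := by ring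
        _ ≤ (A * θ) * θ^n := by
            apply mul_le_mul_of_nonneg_right hAC (by positivity)
        _ = A * θ^(n+1) := by ring
  refine ⟨max B A, fun n x hx => ⟨?_, ?_⟩⟩
  · exact le_trans (hub n x hx) (mul_le_mul_of_nonneg_right (le_max_left _ _) (by positivity))
  · exact le_trans (hAd n x hx) (mul_le_mul_of_nonneg_right (le_max_right _ _) (by positivity))


/-- Geometric bounds for the case `j = 1`, with `u0 = lam⁻¹ * D' - 1`. -/
lemma useq_bound_j1 {D : ℝ → ℝ} {lam : ℝ} {U : Set ℝ} {δ ν M : ℝ}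
    (hU : IsOpen U) (hD2 : ContDiffOn ℝ 2 D U) (hDU : Set.MapsTo D U U)
    (hδ : 0 < δ) (hJU : Set.Icc (-δ) δ ⊆ U)
    (hmaps : ∀ x ∈ Set.Icc (-δ) δ, D x ∈ Set.Icc (-δ) δ)
    (hlam0 : 0 < lam) (hν0 : 0 < ν) (hM : 0 ≤ M)
    (hD0 : D 0 = 0) (hD'0 : deriv D 0 = lam)
    (hD' : ∀ x ∈ Set.Icc (-δ) δ, |deriv D x| ≤ ν)
    (hD'' : ∀ x ∈ Set.Icc (-δ) δ, |deriv (deriv D) x| ≤ M) :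
    (∀ n, useq D lam 1 (fun x => lam⁻¹ * deriv D x - 1) n 0 = 0) ∧
    (∀ n, ∀ x ∈ Set.Icc (-δ) δ,
      |useq D lam 1 (fun x => lam⁻¹ * deriv D x - 1) n x|
        ≤ (δ * (M/lam)) * ((ν^2 + M*δ)/lam)^n ∧
      |deriv (useq D lam 1 (fun x => lam⁻¹ * deriv D x - 1) n) x|
        ≤ (M/lam) * ((ν^2 + M*δ)/lam)^n) := by
  set J := Set.Icc (-δ) δ with hJdef
  set u0 : ℝ → ℝ := fun x => lam⁻¹ * deriv D x - 1 with hu0def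
  set θ := (ν^2 + M*δ)/lam with hθdef
  have hθ0 : 0 ≤ θ := by positivity
  have h0J : (0:ℝ) ∈ J := Set.mem_Icc.mpr ⟨by linarith, le_of_lt hδ⟩
  have hu0C : ContDiffOn ℝ 1 u0 U := by
    apply ContDiffOn.sub _ contDiffOn_const
    exact contDiffOn_const.mul (hD2.deriv_of_isOpen hU (by norm_num))
  -- derivative of u0
  have hu0d : ∀ x ∈ U, deriv u0 x = lam⁻¹ * deriv (deriv D) x := by
    intro x hx
    have hD'x : HasDerivAt (deriv D) (deriv (deriv D) x) x := by
      have h1 : ContDiffOn ℝ 1 (deriv D) U := hD2.deriv_of_isOpen hU (by norm_num)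
      exact ((h1.differentiableOn (by norm_num)).differentiableAt (hU.mem_nhds hx)).hasDerivAt
    exact ((hD'x.const_mul lam⁻¹).sub_const 1).deriv
  -- main simultaneous induction
  have main : ∀ n, useq D lam 1 u0 n 0 = 0 ∧
      (∀ x ∈ J, |deriv (useq D lam 1 u0 n) x| ≤ (M/lam) * θ^n) := by
    intro n
    induction n with
    | zero =>
      constructor
      · rw [useq_zero_def, hu0def]
        simp [hD'0]
        field_simp; norm_num
      · intro x hx
        rw [useq_zero_def, hu0d x (hJU hx)]
        rw [abs_mul, abs_inv, abs_of_pos hlam0]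
        simp only [pow_zero, mul_one]
        rw [div_eq_inv_mul]
        exact mul_le_mul_of_nonneg_left (hD'' x hx) (by positivity)
    | succ n ih =>
      obtain ⟨ih0, ihd⟩ := ih
      -- sup bound via MVT
      have hsup : ∀ x ∈ J, |useq D lam 1 u0 n x| ≤ (δ * (M/lam)) * θ^n := by
        intro x hx
        have := Convex.norm_image_sub_le_of_norm_hasDerivWithin_le
          (f := useq D lam 1 u0 n) (f' := deriv (useq D lam 1 u0 n)) (s := J)
          (fun y hy => (useq_hasDerivAt hU hD2 hDU hu0C n (hJU hy)).hasDerivWithinAt)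
          (fun y hy => by simpa [Real.norm_eq_abs] using ihd y hy)
          (hs := convex_Icc _ _) h0J hx
        rw [ih0, sub_zero, sub_zero] at this
        simp only [Real.norm_eq_abs] at this
        calc |useq D lam 1 u0 n x| ≤ (M/lam) * θ^n * |x| := this
          _ ≤ (M/lam) * θ^n * δ := by
              apply mul_le_mul_of_nonneg_left _ (by positivity)
              rw [abs_le]; exact ⟨hx.1, hx.2⟩
          _ = (δ * (M/lam)) * θ^n := by ring
      constructor
      · rw [useq_succ_def]
        simp only [hD0, ih0, mul_zero, zero_mul]
      · intro x hx
        rw [useq_deriv_formula hU hD2 hDU hu0C n (hJU hx)]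
        have hDx : |deriv D x| ≤ ν := hD' x hx
        apply le_trans (abs_add_le _ _)
        have h1 : |lam⁻¹ * (deriv (useq D lam 1 u0 n) (D x) * deriv D x) * deriv D x ^ 1|
            ≤ lam⁻¹ * (((M/lam) * θ^n) * ν) * ν := by
          rw [abs_mul, abs_mul, abs_inv, abs_of_pos hlam0, abs_mul, pow_one]
          apply mul_le_mul
          · apply mul_le_mul_of_nonneg_left _ (by positivity)
            exact mul_le_mul (ihd (D x) (hmaps x hx)) hDx (abs_nonneg _) (by positivity)
          · exact hDx
          · exact abs_nonneg _
          · positivity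
        have h2 : |lam⁻¹ * useq D lam 1 u0 n (D x) * ((1:ℕ) * deriv D x ^ (1-1) * deriv (deriv D) x)|
            ≤ lam⁻¹ * ((δ * (M/lam)) * θ^n) * M := by
          simp only [Nat.cast_one, pow_zero, one_mul]
          rw [abs_mul, abs_mul, abs_inv, abs_of_pos hlam0]
          apply mul_le_mul
          · exact mul_le_mul_of_nonneg_left (hsup (D x) (hmaps x hx)) (by positivity)
          · calc |deriv D x ^ (1-1) * deriv (deriv D) x|
                = |deriv (deriv D) x| := by norm_num
              _ ≤ M := hD'' x hx
          · exact abs_nonneg _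
          · positivity
        apply le_trans (add_le_add h1 h2)
        have : lam⁻¹ * ((M/lam) * θ^n * ν) * ν + lam⁻¹ * ((δ * (M/lam)) * θ^n) * M
            = (M/lam) * θ^n * ((ν^2 + M*δ)/lam) := by field_simp
        rw [this, ← hθdef]
        calc (M/lam) * θ^n * θ = (M/lam) * θ^(n+1) := by ring
          _ ≤ (M/lam) * θ^(n+1) := le_refl _
  refine ⟨fun n => (main n).1, fun n x hx => ⟨?_, (main n).2 x hx⟩⟩
  -- sup bound from deriv bound (same MVT argument)
  obtain ⟨ih0, ihd⟩ := main n
  have := Convex.norm_image_sub_le_of_norm_hasDerivWithin_le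
    (f := useq D lam 1 u0 n) (f' := deriv (useq D lam 1 u0 n)) (s := J)
    (fun y hy => (useq_hasDerivAt hU hD2 hDU hu0C n (hJU hy)).hasDerivWithinAt)
    (fun y hy => by simpa [Real.norm_eq_abs] using ihd y hy)
    (hs := convex_Icc _ _) h0J hx
  rw [ih0, sub_zero, sub_zero] at this
  simp only [Real.norm_eq_abs] at this
  calc |useq D lam 1 u0 n x| ≤ (M/lam) * θ^n * |x| := this
    _ ≤ (M/lam) * θ^n * δ := by
        apply mul_le_mul_of_nonneg_left _ (by positivity)
        rw [abs_le]; exact ⟨hx.1, hx.2⟩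
    _ = (δ * (M/lam)) * θ^n := by ring


/-- Uniqueness, contraction case (used for `j ≥ 2`). -/
lemma uniq_contraction {D w : ℝ → ℝ} {lam δ ν : ℝ} {j : ℕ}
    (hδ : 0 < δ) (hlam0 : 0 < lam) (hν0 : 0 < ν)
    (hmaps : ∀ x ∈ Set.Icc (-δ) δ, D x ∈ Set.Icc (-δ) δ)
    (hD' : ∀ x ∈ Set.Icc (-δ) δ, |deriv D x| ≤ ν)
    (hθ : ν^j / lam < 1)
    (hw : ContinuousOn w (Set.Icc (-δ) δ))
    (heq : ∀ x ∈ Set.Icc (-δ) δ, w x = lam⁻¹ * w (D x) * (deriv D x)^j) :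
    ∀ x ∈ Set.Icc (-δ) δ, w x = 0 := by
  set J := Set.Icc (-δ) δ with hJdef
  have hJc : IsCompact J := isCompact_Icc
  have hJne : J.Nonempty := Set.nonempty_Icc.mpr (by linarith)
  obtain ⟨z, hz, hmax⟩ := hJc.exists_isMaxOn hJne hw.abs
  have hmax' : ∀ y ∈ J, |w y| ≤ |w z| := fun y hy => hmax hy
  have hkey : |w z| ≤ (ν^j/lam) * |w z| := by
    calc |w z| = |lam⁻¹ * w (D z) * (deriv D z)^j| := by rw [heq z hz]
      _ = lam⁻¹ * |w (D z)| * |deriv D z|^j := by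
          rw [abs_mul, abs_mul, abs_inv, abs_of_pos hlam0, abs_pow]
      _ ≤ lam⁻¹ * |w z| * ν^j := by
          apply mul_le_mul
          · exact mul_le_mul_of_nonneg_left (hmax' (D z) (hmaps z hz)) (by positivity)
          · exact pow_le_pow_left₀ (abs_nonneg _) (hD' z hz) j
          · positivity
          · positivity
      _ = (ν^j/lam) * |w z| := by field_simp
  have hwz : |w z| ≤ 0 := by nlinarith [abs_nonneg (w z)]
  intro x hx
  have := le_trans (hmax' x hx) hwz
  have := abs_nonneg (w x)
  have : |w x| = 0 := le_antisymm ‹|w x| ≤ 0› this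
  exact abs_eq_zero.mp this

/-- Uniqueness, product case (used for `j = 1`). -/
lemma uniq_product {D w : ℝ → ℝ} {lam δ ν M : ℝ}
    (hδ : 0 < δ) (hlam0 : 0 < lam) (hν0 : 0 < ν) (hν1 : ν < 1) (hM : 0 ≤ M)
    (hmaps : ∀ x ∈ Set.Icc (-δ) δ, D x ∈ Set.Icc (-δ) δ)
    (hcontr : ∀ x ∈ Set.Icc (-δ) δ, |D x| ≤ ν * |x|)
    (hD'lip : ∀ x ∈ Set.Icc (-δ) δ, |deriv D x - lam| ≤ M * |x|)
    (hw : ContinuousOn w (Set.Icc (-δ) δ)) (hw0 : w 0 = 0)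
    (heq : ∀ x ∈ Set.Icc (-δ) δ, w x = lam⁻¹ * w (D x) * deriv D x) :
    ∀ x ∈ Set.Icc (-δ) δ, w x = 0 := by
  set J := Set.Icc (-δ) δ with hJdef
  intro x hx
  set F : ℕ → ℝ := fun n => D^[n] x with hFdef
  have hFJ : ∀ n, F n ∈ J ∧ |F n| ≤ ν^n * δ := by
    intro n
    induction n with
    | zero =>
      refine ⟨hx, ?_⟩
      simp only [hFdef, Function.iterate_zero, id_eq, pow_zero, one_mul]
      rw [abs_le]; exact ⟨hx.1, hx.2⟩
    | succ n ih =>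
      obtain ⟨h1, h2⟩ := ih
      have hF1 : F (n+1) = D (F n) := by
        simp only [hFdef, Function.iterate_succ_apply']
      constructor
      · rw [hF1]; exact hmaps _ h1
      · rw [hF1]
        calc |D (F n)| ≤ ν * |F n| := hcontr _ h1
          _ ≤ ν * (ν^n * δ) := mul_le_mul_of_nonneg_left h2 (le_of_lt hν0)
          _ = ν^(n+1) * δ := by ring
  -- iterated inequality
  have key : ∀ n, |w x| ≤ Real.exp ((M/lam) * δ * ∑ i ∈ Finset.range n, ν^i) * |w (F n)| := by
    intro n
    induction n with
    | zero =>
      simp [hFdef]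
    | succ n ih =>
      obtain ⟨hFn, hFb⟩ := hFJ n
      have step : |w (F n)| ≤ Real.exp ((M/lam) * δ * ν^n) * |w (F (n+1))| := by
        have hF1 : F (n+1) = D (F n) := by
          simp only [hFdef, Function.iterate_succ_apply']
        have hD'b : |deriv D (F n)| ≤ lam * (1 + (M/lam) * δ * ν^n) := by
          have := hD'lip (F n) hFn
          have habs : |deriv D (F n)| ≤ lam + M * |F n| := by
            calc |deriv D (F n)| = |lam + (deriv D (F n) - lam)| := by ring_nf
              _ ≤ |lam| + |deriv D (F n) - lam| := abs_add_le _ _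
              _ ≤ lam + M * |F n| := by
                  rw [abs_of_pos hlam0]
                  linarith [hD'lip (F n) hFn]
          calc |deriv D (F n)| ≤ lam + M * |F n| := habs
            _ ≤ lam + M * (ν^n * δ) := by
                apply add_le_add le_rfl
                exact mul_le_mul_of_nonneg_left hFb hM
            _ = lam * (1 + (M/lam) * δ * ν^n) := by field_simp
        calc |w (F n)| = lam⁻¹ * |w (D (F n))| * |deriv D (F n)| := by
              rw [heq (F n) hFn, abs_mul, abs_mul, abs_inv, abs_of_pos hlam0]
          _ ≤ lam⁻¹ * |w (D (F n))| * (lam * (1 + (M/lam) * δ * ν^n)) := by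
              apply mul_le_mul_of_nonneg_left hD'b (by positivity)
          _ = (1 + (M/lam) * δ * ν^n) * |w (F (n+1))| := by
              rw [hF1]; field_simp
          _ ≤ Real.exp ((M/lam) * δ * ν^n) * |w (F (n+1))| := by
              apply mul_le_mul_of_nonneg_right _ (abs_nonneg _)
              have := Real.add_one_le_exp ((M/lam) * δ * ν^n)
              linarith
      calc |w x| ≤ Real.exp ((M/lam) * δ * ∑ i ∈ Finset.range n, ν^i) * |w (F n)| := ih
        _ ≤ Real.exp ((M/lam) * δ * ∑ i ∈ Finset.range n, ν^i) *
              (Real.exp ((M/lam) * δ * ν^n) * |w (F (n+1))|) := by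
            apply mul_le_mul_of_nonneg_left step (by positivity)
        _ = Real.exp ((M/lam) * δ * ∑ i ∈ Finset.range (n+1), ν^i) * |w (F (n+1))| := by
            rw [Finset.sum_range_succ, mul_add, Real.exp_add]
            ring
  -- uniform bound on the exponential
  set E := Real.exp ((M/lam) * δ * (1-ν)⁻¹) with hEdef
  have hsumb : ∀ n, (∑ i ∈ Finset.range n, ν^i) ≤ (1-ν)⁻¹ := by
    intro n
    have hsummable : Summable (fun i : ℕ => ν^i) := summable_geometric_of_lt_one (le_of_lt hν0) hν1
    calc (∑ i ∈ Finset.range n, ν^i) ≤ ∑' i, ν^i :=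
          hsummable.sum_le_tsum _ (fun i _ => by positivity)
      _ = (1-ν)⁻¹ := tsum_geometric_of_lt_one (le_of_lt hν0) hν1
  have key2 : ∀ n, |w x| ≤ E * |w (F n)| := by
    intro n
    apply le_trans (key n)
    apply mul_le_mul_of_nonneg_right _ (abs_nonneg _)
    rw [hEdef]
    apply Real.exp_le_exp.mpr
    apply mul_le_mul_of_nonneg_left (hsumb n) (by positivity)
  -- limit
  have hFlim : Filter.Tendsto F Filter.atTop (nhds 0) := by
    have h1 : Filter.Tendsto (fun n => ν^n * δ) Filter.atTop (nhds 0) := by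
      have := tendsto_pow_atTop_nhds_zero_of_lt_one (le_of_lt hν0) hν1
      simpa using this.mul_const δ
    apply squeeze_zero_norm (fun n => (hFJ n).2) h1
  have hwcont : Filter.Tendsto (fun n => w (F n)) Filter.atTop (nhds (w 0)) := by
    have h0J : (0:ℝ) ∈ J := Set.mem_Icc.mpr ⟨by linarith, le_of_lt hδ⟩
    have := (hw 0 h0J).tendsto
    exact this.comp (tendsto_nhdsWithin_iff.mpr ⟨hFlim, Filter.Eventually.of_forall (fun n => (hFJ n).1)⟩)
  rw [hw0] at hwcont
  have hlim : Filter.Tendsto (fun n => E * |w (F n)|) Filter.atTop (nhds 0) := by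
    have := hwcont.abs
    simpa using (this.const_mul E)
  have : |w x| ≤ 0 := ge_of_tendsto' hlim key2
  exact abs_eq_zero.mp (le_antisymm this (abs_nonneg _))


lemma schroder_iterated_deriv {D h : ℝ → ℝ} {lam : ℝ} {U : Set ℝ} {k j : ℕ}
    (hU : IsOpen U) (hDU : Set.MapsTo D U U) (hlam : lam ≠ 0)
    (hDk : ContDiffOn ℝ k D U) (hhj : ContDiffOn ℝ j h U)
    (hj1 : 1 ≤ j) (hjk : j + 1 ≤ k)
    (hSch : ∀ x ∈ U, h (D x) = lam * h x) :
    ∃ r, ContDiffOn ℝ 1 r U ∧ ∀ x ∈ U,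
      iteratedDeriv j h x = lam⁻¹ * iteratedDeriv j h (D x) * (deriv D x)^j + r x := by
  have hDdiff : ∀ x ∈ U, HasDerivAt D (deriv D x) x := by
    intro x hx
    have h1 : ContDiffOn ℝ 1 D U := hDk.of_le (by exact_mod_cast le_trans (by norm_num) hjk)
    exact ((h1.differentiableOn one_ne_zero).differentiableAt (hU.mem_nhds hx)).hasDerivAt
  have hD'diff : ∀ x ∈ U, HasDerivAt (deriv D) (deriv (deriv D) x) x := by
    intro x hx
    have h2 : ContDiffOn ℝ 2 D U := hDk.of_le (by exact_mod_cast le_trans (by omega : 2 ≤ j + 1) hjk)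
    have h1 : ContDiffOn ℝ 1 (deriv D) U := h2.deriv_of_isOpen hU (by norm_num)
    exact ((h1.differentiableOn one_ne_zero).differentiableAt (hU.mem_nhds hx)).hasDerivAt
  have main : ∀ m : ℕ, 1 ≤ m → m ≤ j → ∃ r, ContDiffOn ℝ (j - m + 1 : ℕ) r U ∧
      ∀ x ∈ U, iteratedDeriv m h x
        = lam⁻¹ * iteratedDeriv m h (D x) * (deriv D x)^m + r x := by
    intro m
    induction m with
    | zero => omega
    | succ m ih =>
      intro _ hmj
      by_cases hm0 : m = 0
      · -- base case m + 1 = 1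
        subst hm0
        refine ⟨fun _ => 0, contDiffOn_const, ?_⟩
        intro x hx
        have hhdiff : ∀ y ∈ U, HasDerivAt h (deriv h y) y := by
          intro y hy
          have h1 : ContDiffOn ℝ 1 h U := hhj.of_le (by exact_mod_cast hj1)
          exact ((h1.differentiableOn one_ne_zero).differentiableAt (hU.mem_nhds hy)).hasDerivAt
        have hcomp : HasDerivAt (fun y => h (D y)) (deriv h (D x) * deriv D x) x :=
          (hhdiff (D x) (hDU hx)).comp x (hDdiff x hx)
        have hright : HasDerivAt (fun y => lam * h y) (lam * deriv h x) x :=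
          (hhdiff x hx).const_mul lam
        have heqn : (fun y => h (D y)) =ᶠ[nhds x] (fun y => lam * h y) := by
          filter_upwards [hU.mem_nhds hx] with y hy
          exact hSch y hy
        have hcomp' : HasDerivAt (fun y => lam * h y) (deriv h (D x) * deriv D x) x :=
          hcomp.congr_of_eventuallyEq heqn.symm
        have huniq : deriv h (D x) * deriv D x = lam * deriv h x := hcomp'.unique hright
        rw [iteratedDeriv_one]
        field_simp
        simp only [zero_add, pow_one, mul_zero, add_zero]; linarith [huniq]
      · -- inductive step
        have hm1 : 1 ≤ m := Nat.one_le_iff_ne_zero.mpr hm0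
        obtain ⟨r, hrC, hreq⟩ := ih hm1 (by omega)
        have hjm : (m:ℕ) + (j - m) = j := by omega
        have hitd : ContDiffOn ℝ (j - m : ℕ) (iteratedDeriv m h) U := by
          apply aux_iteratedDeriv_contDiffOn hU m h (j - m)
          rw [show m + (j - m) = j from hjm]
          exact hhj
        have hDsm : ContDiffOn ℝ (j - m : ℕ) D U :=
          hDk.of_le (by exact_mod_cast (by omega : j - m ≤ k))
        have hD'sm : ContDiffOn ℝ (j - m : ℕ) (deriv D) U := by
          apply hDk.deriv_of_isOpen hU
          exact_mod_cast (by omega : (j - m) + 1 ≤ k)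
        have hD''sm : ContDiffOn ℝ (j - m : ℕ) (deriv (deriv D)) U := by
          have h1 : ContDiffOn ℝ ((j - m + 1 : ℕ)) (deriv D) U := by
            apply hDk.deriv_of_isOpen hU
            exact_mod_cast (by omega : (j - m + 1) + 1 ≤ k)
          apply h1.deriv_of_isOpen hU
          exact_mod_cast le_refl (j - m + 1)
        have hrd : ContDiffOn ℝ (j - m : ℕ) (deriv r) U := by
          apply hrC.deriv_of_isOpen hU
          exact_mod_cast le_refl (j - m + 1)
        refine ⟨fun x => lam⁻¹ * iteratedDeriv m h (D x) *
            ((m:ℝ) * (deriv D x)^(m-1) * deriv (deriv D) x) + deriv r x, ?_, ?_⟩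
        · have e1 : (j - (m+1) + 1 : ℕ) = (j - m : ℕ) := by omega
          rw [e1]
          apply ContDiffOn.add _ hrd
          apply ContDiffOn.mul
          · exact contDiffOn_const.mul (hitd.comp hDsm hDU)
          · exact (contDiffOn_const.mul (hD'sm.pow (m-1))).mul hD''sm
        · intro x hx
          have hLHS : HasDerivAt (iteratedDeriv m h) (iteratedDeriv (m+1) h x) x := by
            apply aux_hasDerivAt_iteratedDeriv hU m _ hx
            exact hhj.of_le (by exact_mod_cast (by omega : m + 1 ≤ j))
          have hitd' : HasDerivAt (iteratedDeriv m h) (iteratedDeriv (m+1) h (D x)) (D x) := by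
            apply aux_hasDerivAt_iteratedDeriv hU m _ (hDU hx)
            exact hhj.of_le (by exact_mod_cast (by omega : m + 1 ≤ j))
          have t1 : HasDerivAt (fun y => iteratedDeriv m h (D y))
              (iteratedDeriv (m+1) h (D x) * deriv D x) x := hitd'.comp x (hDdiff x hx)
          have t2 : HasDerivAt (fun y => (deriv D y)^m)
              ((m:ℝ) * (deriv D x)^(m-1) * deriv (deriv D) x) x := by
            simpa [mul_comm, mul_assoc, mul_left_comm] using ((hD'diff x hx).fun_pow m)
          have t3 : HasDerivAt r (deriv r x) x := by
            have : DifferentiableAt ℝ r x := by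
              apply DifferentiableOn.differentiableAt _ (hU.mem_nhds hx)
              apply hrC.differentiableOn
              simp
            exact this.hasDerivAt
          have t4 : HasDerivAt (fun y => lam⁻¹ * iteratedDeriv m h (D y) * (deriv D y)^m + r y)
              ((lam⁻¹ * (iteratedDeriv (m+1) h (D x) * deriv D x)) * (deriv D x)^m
                + (lam⁻¹ * iteratedDeriv m h (D x)) *
                    ((m:ℝ) * (deriv D x)^(m-1) * deriv (deriv D) x) + deriv r x) x :=
            (((t1.const_mul lam⁻¹).mul t2)).add t3
          have heqn : iteratedDeriv m h =ᶠ[nhds x]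
              (fun y => lam⁻¹ * iteratedDeriv m h (D y) * (deriv D y)^m + r y) := by
            filter_upwards [hU.mem_nhds hx] with y hy
            exact hreq y hy
          have hLHS' : HasDerivAt (iteratedDeriv m h)
              ((lam⁻¹ * (iteratedDeriv (m+1) h (D x) * deriv D x)) * (deriv D x)^m
                + (lam⁻¹ * iteratedDeriv m h (D x)) *
                    ((m:ℝ) * (deriv D x)^(m-1) * deriv (deriv D) x) + deriv r x) x :=
            t4.congr_of_eventuallyEq heqn
          have huniq := hLHS.unique hLHS'
          rw [huniq]
          ring
  obtain ⟨r, hrC, hreq⟩ := main j hj1 le_rfl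
  refine ⟨r, ?_, hreq⟩
  have : (j - j + 1 : ℕ) = 1 := by omega
  rwa [this] at hrC


open Set Filter

/-- Orbits of the contraction tend to `0`. -/
lemma orbit_tendsto {D : ℝ → ℝ} {a : ℝ} (ha : 0 < a) (hD0 : D 0 = 0)
    (hDcont : ContinuousOn D (Ioo (-a) a))
    (hcontract : ∀ x ∈ Ioo (-a) a, x ≠ 0 → |D x| < |x|)
    {x : ℝ} (hx : x ∈ Ioo (-a) a) :
    Tendsto (fun n => D^[n] x) atTop (nhds 0) := by
  have habs : ∀ y, y ∈ Ioo (-a) a ↔ |y| < a := by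
    intro y; rw [abs_lt]; exact ⟨fun h => ⟨h.1, h.2⟩, fun h => ⟨h.1, h.2⟩⟩
  have hle : ∀ y ∈ Ioo (-a) a, |D y| ≤ |y| := by
    intro y hy
    by_cases hy0 : y = 0
    · subst hy0; simp [hD0]
    · exact le_of_lt (hcontract y hy hy0)
  set s : ℕ → ℝ := fun n => D^[n] x with hsdef
  have hs : ∀ n, s n ∈ Ioo (-a) a ∧ |s (n+1)| ≤ |s n| ∧ |s n| ≤ |x| := by
    intro n
    induction n with
    | zero =>
      refine ⟨hx, ?_, le_refl _⟩
      simpa [hsdef] using hle x hx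
    | succ n ih =>
      obtain ⟨h1, h2, h3⟩ := ih
      have hmem : s (n+1) ∈ Ioo (-a) a := by
        rw [habs]
        exact lt_of_le_of_lt h2 ((habs _).mp h1)
      refine ⟨hmem, ?_, le_trans h2 h3⟩
      have : s (n+2) = D (s (n+1)) := by
        simp only [hsdef, Function.iterate_succ_apply']
      rw [this]
      exact hle _ hmem
  have hanti : Antitone (fun n => |s n|) :=
    antitone_nat_of_succ_le (fun n => (hs n).2.1)
  have hbdd : BddBelow (Set.range (fun n => |s n|)) :=
    ⟨0, fun y ⟨n, hn⟩ => hn ▸ abs_nonneg _⟩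
  set L := ⨅ n, |s n| with hLdef
  have hLlim : Tendsto (fun n => |s n|) atTop (nhds L) :=
    tendsto_atTop_ciInf hanti hbdd
  have hL0 : 0 ≤ L := le_ciInf (fun n => abs_nonneg _)
  -- compactness
  have hsK : ∀ n, s n ∈ Icc (-|x|) (|x|) := by
    intro n
    rw [Set.mem_Icc, ← abs_le]
    exact (hs n).2.2
  obtain ⟨y, hyK, φ, hφ, hconv⟩ := isCompact_Icc.tendsto_subseq hsK
  have hyabs : |y| = L := by
    have h1 : Tendsto (fun n => |s (φ n)|) atTop (nhds |y|) := hconv.abs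
    have h2 : Tendsto (fun n => |s (φ n)|) atTop (nhds L) :=
      hLlim.comp hφ.tendsto_atTop
    exact tendsto_nhds_unique h1 h2
  have hyIoo : y ∈ Ioo (-a) a := by
    rw [habs]
    rw [Set.mem_Icc, ← abs_le] at hyK
    calc |y| ≤ |x| := hyK
      _ < a := (habs x).mp hx
  have hLzero : L = 0 := by
    by_contra hL
    have hy0 : y ≠ 0 := by
      intro hy; rw [hy] at hyabs; simp at hyabs; exact hL hyabs.symm
    have hconv' : Tendsto (fun n => s (φ n + 1)) atTop (nhds (D y)) := by
      have hDC : ContinuousAt D y := hDcont.continuousAt (isOpen_Ioo.mem_nhds hyIoo)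
      have : (fun n => s (φ n + 1)) = (fun n => D (s (φ n))) := by
        funext n; simp only [hsdef, Function.iterate_succ_apply']
      rw [this]
      exact hDC.tendsto.comp hconv
    have h2 : Tendsto (fun n => |s (φ n + 1)|) atTop (nhds L) := by
      apply hLlim.comp
      exact tendsto_atTop_mono (fun n => Nat.le_succ (φ n)) hφ.tendsto_atTop
    have h3 : |D y| = L := tendsto_nhds_unique hconv'.abs h2
    have := hcontract y hyIoo hy0
    rw [h3, hyabs] at this
    exact lt_irrefl _ this
  rw [hLzero] at hLlim
  exact squeeze_zero_norm (fun n => le_refl _) hLlim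

/-- Propagation of local smoothness at `0` to the whole interval. -/
lemma propagate_smoothness {D h : ℝ → ℝ} {lam a δ : ℝ} {m : ℕ}
    (ha : 0 < a) (hδ : 0 < δ) (hδa : δ ≤ a) (hlam : lam ≠ 0)
    (hDm : ContDiffOn ℝ m D (Ioo (-a) a)) (hm1 : 1 ≤ m)
    (hDU : Set.MapsTo D (Ioo (-a) a) (Ioo (-a) a))
    (hD0 : D 0 = 0)
    (hcontract : ∀ x ∈ Ioo (-a) a, x ≠ 0 → |D x| < |x|)
    (hSch : ∀ x ∈ Ioo (-a) a, h (D x) = lam * h x)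
    (hloc : ContDiffOn ℝ m h (Ioo (-δ) δ)) :
    ContDiffOn ℝ m h (Ioo (-a) a) := by
  set U := Ioo (-a) a with hUdef
  have hUopen : IsOpen U := isOpen_Ioo
  have hDcont : ContinuousOn D U := hDm.continuousOn
  -- iterates are smooth and map U to U
  have hDN : ∀ N : ℕ, ContDiffOn ℝ m (D^[N]) U ∧ Set.MapsTo (D^[N]) U U := by
    intro N
    induction N with
    | zero => simpa using ⟨contDiffOn_id, Set.mapsTo_id U⟩
    | succ N ih =>
      constructor
      · rw [Function.iterate_succ]
        exact (ih.1.comp hDm hDU)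
      · rw [Function.iterate_succ]
        exact ih.2.comp hDU
  -- Schröder iterated
  have hIter : ∀ N : ℕ, ∀ y ∈ U, h (D^[N] y) = lam^N * h y := by
    intro N
    induction N with
    | zero => intro y hy; simp
    | succ N ih =>
      intro y hy
      rw [Function.iterate_succ]
      simp only [Function.comp_apply]
      rw [ih (D y) (hDU hy), hSch y hy, pow_succ]
      ring
  intro x hx
  have horb := orbit_tendsto ha hD0 hDcont hcontract hx
  have hev : ∀ᶠ n in atTop, D^[n] x ∈ Ioo (-δ) δ :=
    horb (isOpen_Ioo.mem_nhds (by constructor <;> simp [hδ] <;> linarith))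
  obtain ⟨N, hN⟩ := hev.exists
  set V := U ∩ (D^[N]) ⁻¹' (Ioo (-δ) δ) with hVdef
  have hVopen : IsOpen V := (hDN N).1.continuousOn.isOpen_inter_preimage hUopen isOpen_Ioo
  have hxV : x ∈ V := ⟨hx, hN⟩
  have hVsub : V ⊆ U := Set.inter_subset_left
  have hcomp : ContDiffOn ℝ m (fun y => (lam^N)⁻¹ * h (D^[N] y)) V := by
    have hin : ContDiffOn ℝ m (fun y => h (D^[N] y)) V :=
      hloc.comp ((hDN N).1.mono hVsub) (fun y hy => hy.2)
    exact contDiffOn_const.mul hin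
  have heq : ∀ y ∈ V, h y = (lam^N)⁻¹ * h (D^[N] y) := by
    intro y hy
    rw [hIter N y (hVsub hy)]
    field_simp
  have hhV : ContDiffOn ℝ m h V := hcomp.congr heq
  exact (hhV.contDiffAt (hVopen.mem_nhds hxV)).contDiffWithinAt

/-- Direction 1: if `h` is `C^k` then `D = h⁻¹ ∘ (lam • h)` is `C^k`. -/
lemma direction_one {D h : ℝ → ℝ} {lam a : ℝ} {k : ℕ}
    (ha : 0 < a)
    (hD1 : ContDiffOn ℝ 1 D (Ioo (-a) a))
    (hDU : Set.MapsTo D (Ioo (-a) a) (Ioo (-a) a))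
    (hhk : ContDiffOn ℝ k h (Ioo (-a) a)) (hk1 : 1 ≤ k)
    (hh' : ∀ x ∈ Ioo (-a) a, deriv h x ≠ 0)
    (hSch : ∀ x ∈ Ioo (-a) a, h (D x) = lam * h x) :
    ContDiffOn ℝ k D (Ioo (-a) a) := by
  set U := Ioo (-a) a with hUdef
  have hUopen : IsOpen U := isOpen_Ioo
  intro x₀ hx₀
  set y₀ := D x₀ with hy₀def
  have hy₀ : y₀ ∈ U := hDU hx₀
  have hC : ContDiffAt ℝ k h y₀ := hhk.contDiffAt (hUopen.mem_nhds hy₀)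
  have hd : deriv h y₀ ≠ 0 := hh' y₀ hy₀
  have hder : HasDerivAt h (deriv h y₀) y₀ := by
    have h1 : ContDiffOn ℝ 1 h U := hhk.of_le (by exact_mod_cast hk1)
    exact ((h1.differentiableOn one_ne_zero).differentiableAt (hUopen.mem_nhds hy₀)).hasDerivAt
  have hfd : HasFDerivAt h
      (↑(ContinuousLinearEquiv.unitsEquivAut ℝ (Units.mk0 (deriv h y₀) hd)) : ℝ →L[ℝ] ℝ) y₀ :=
    hder.hasFDerivAt_equiv hd
  have hk1' : (k : WithTop ℕ∞) ≠ 0 := by exact_mod_cast (by omega : k ≠ 0)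
  set g := hC.localInverse hfd hk1' with hgdef
  have hgC : ContDiffAt ℝ k g (h y₀) := hC.to_localInverse hfd hk1'
  have hleft : ∀ᶠ z in nhds y₀, g (h z) = z :=
    (hC.hasStrictFDerivAt' hfd hk1').eventually_left_inverse
  have hDcont : ContinuousAt D x₀ :=
    (hD1.continuousOn.continuousAt (hUopen.mem_nhds hx₀))
  have hev1 : ∀ᶠ y in nhds x₀, g (h (D y)) = D y := hDcont.eventually hleft
  have hev2 : ∀ᶠ y in nhds x₀, h (D y) = lam * h y := by
    filter_upwards [hUopen.mem_nhds hx₀] with y hy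
    exact hSch y hy
  have hev : ∀ᶠ y in nhds x₀, D y = g (lam * h y) := by
    filter_upwards [hev1, hev2] with y h1 h2
    rw [← h1, h2]
  have hinner : ContDiffAt ℝ k (fun y => lam * h y) x₀ := by
    exact (hhk.contDiffAt (hUopen.mem_nhds hx₀)).const_smul lam
  have harg : lam * h x₀ = h y₀ := (hSch x₀ hx₀).symm
  have hcomp : ContDiffAt ℝ k (fun y => g (lam * h y)) x₀ := by
    apply ContDiffAt.comp
    · rw [show lam * h x₀ = h y₀ from harg] at *
      exact hgC
    · exact hinner
  exact ((hcomp.congr_of_eventuallyEq hev).contDiffWithinAt)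


lemma schroder_deriv_one {D h : ℝ → ℝ} {lam : ℝ} {U : Set ℝ}
    (hU : IsOpen U) (hDU : Set.MapsTo D U U) (hlam : lam ≠ 0)
    (hD1 : ContDiffOn ℝ 1 D U) (hh1 : ContDiffOn ℝ 1 h U)
    (hSch : ∀ x ∈ U, h (D x) = lam * h x) :
    ∀ x ∈ U, deriv h x = lam⁻¹ * deriv h (D x) * deriv D x := by
  intro x hx
  have hhdiff : ∀ y ∈ U, HasDerivAt h (deriv h y) y := by
    intro y hy
    exact ((hh1.differentiableOn one_ne_zero).differentiableAt (hU.mem_nhds hy)).hasDerivAt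
  have hDdiff : HasDerivAt D (deriv D x) x :=
    ((hD1.differentiableOn one_ne_zero).differentiableAt (hU.mem_nhds hx)).hasDerivAt
  have hcomp : HasDerivAt (fun y => h (D y)) (deriv h (D x) * deriv D x) x :=
    (hhdiff (D x) (hDU hx)).comp x hDdiff
  have hright : HasDerivAt (fun y => lam * h y) (lam * deriv h x) x :=
    (hhdiff x hx).const_mul lam
  have heqn : (fun y => h (D y)) =ᶠ[nhds x] (fun y => lam * h y) := by
    filter_upwards [hU.mem_nhds hx] with y hy
    exact hSch y hy
  have hcomp' : HasDerivAt (fun y => lam * h y) (deriv h (D x) * deriv D x) x :=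
    hcomp.congr_of_eventuallyEq heqn.symm
  have huniq : deriv h (D x) * deriv D x = lam * deriv h x := hcomp'.unique hright
  field_simp
  linarith [huniq]

set_option maxHeartbeats 2000000 in
/-- **Proposition 3.1 (regularity).** For every integer `k ≥ 2`, the conjugation `h`
is of class `C^k` on `(-a,a)` if and only if `D` is of class `C^k` on `(-a,a)`. -/
theorem conjugation_regularity
    (a ε : ℝ) (ha : 0 < a) (hε : 0 < ε) (D : ℝ → ℝ) (lam : ℝ)
    (hD : ContDiffOn ℝ 1 D (Set.Ioo (-a) a))
    (hHolder : ∃ k > 0, ∀ y ∈ Set.Ioo (-a) a, ∀ z ∈ Set.Ioo (-a) a,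
      |deriv D z - deriv D y| ≤ k * |z - y| ^ ε)
    (hD0 : D 0 = 0)
    (hlam : deriv D 0 = lam) (hlam0 : 0 < lam) (hlam1 : lam < 1)
    (hcontract : ∀ x ∈ Set.Ioo (-a) a, x ≠ 0 → |D x| < |x|)
    (h : ℝ → ℝ)
    (hh : ContDiffOn ℝ 1 h (Set.Ioo (-a) a))
    (hh0 : h 0 = 0) (hh'0 : deriv h 0 = 1)
    (hh'pos : ∀ x ∈ Set.Ioo (-a) a, 0 < deriv h x)
    (hSch : ∀ x ∈ Set.Ioo (-a) a, h (D x) = lam * h x)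
    (k : ℕ) (hk : 2 ≤ k) :
    ContDiffOn ℝ k h (Set.Ioo (-a) a) ↔ ContDiffOn ℝ k D (Set.Ioo (-a) a) := by
  have hU : IsOpen (Set.Ioo (-a) a) := isOpen_Ioo
  have h0U : (0:ℝ) ∈ Set.Ioo (-a) a := ⟨by linarith, ha⟩
  have hlamne : lam ≠ 0 := ne_of_gt hlam0
  have hDU : Set.MapsTo D (Set.Ioo (-a) a) (Set.Ioo (-a) a) := by
    intro x hx
    by_cases hx0 : x = 0
    · subst hx0; rw [hD0]; exact h0U
    · have h1 : |D x| < |x| := hcontract x hx hx0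
      have h2 : |x| < a := abs_lt.mpr ⟨hx.1, hx.2⟩
      exact abs_lt.mp (lt_trans h1 h2)
  have hh'ne : ∀ x ∈ Set.Ioo (-a) a, deriv h x ≠ 0 := fun x hx => ne_of_gt (hh'pos x hx)
  constructor
  · intro hhk
    exact direction_one ha hD hDU hhk (by omega) hh'ne hSch
  · intro hDk
    -- ===== setup =====
    have hk2' : ((2:ℕ) : WithTop ℕ∞) ≤ (k : ℕ) := by exact_mod_cast hk
    have hD2 : ContDiffOn ℝ 2 D (Set.Ioo (-a) a) := by
      have := hDk.of_le hk2'
      exact_mod_cast this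
    have hD'C1 : ContDiffOn ℝ 1 (deriv D) (Set.Ioo (-a) a) := by
      apply hDk.deriv_of_isOpen hU
      exact_mod_cast (by exact_mod_cast hk : ((1+1 : ℕ) : WithTop ℕ∞) ≤ (k:ℕ))
    have hD'cont : ContinuousOn (deriv D) (Set.Ioo (-a) a) := hD'C1.continuousOn
    have hD''cont : ContinuousOn (deriv (deriv D)) (Set.Ioo (-a) a) :=
      hD'C1.continuousOn_deriv_of_isOpen hU le_rfl
    -- choice of ν
    set ν := (lam + Real.sqrt lam)/2 with hνdef
    have hsq : Real.sqrt lam * Real.sqrt lam = lam := Real.mul_self_sqrt (le_of_lt hlam0)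
    have hsqpos : 0 < Real.sqrt lam := Real.sqrt_pos.mpr hlam0
    have hsq1 : Real.sqrt lam < 1 := by nlinarith
    have hls : lam < Real.sqrt lam := by nlinarith
    have hν0 : 0 < ν := by rw [hνdef]; linarith
    have hνl : lam < ν := by rw [hνdef]; linarith
    have hν1 : ν < 1 := by rw [hνdef]; linarith
    have hν2 : ν^2 < lam := by
      have : ν < Real.sqrt lam := by rw [hνdef]; linarith
      nlinarith
    -- bound for D'' on Icc (-(a/2)) (a/2)
    have hJ0U : Set.Icc (-(a/2)) (a/2) ⊆ Set.Ioo (-a) a := by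
      intro y hy
      constructor <;> [linarith [hy.1]; linarith [hy.2]]
    obtain ⟨M0, hM0⟩ := (isCompact_Icc (a := -(a/2)) (b := a/2)).exists_bound_of_continuousOn
      (hD''cont.mono hJ0U)
    set M := max M0 0 with hMdef
    have hM : 0 ≤ M := le_max_right _ _
    have hM0' : ∀ y ∈ Set.Icc (-(a/2)) (a/2), |deriv (deriv D) y| ≤ M := by
      intro y hy
      calc |deriv (deriv D) y| ≤ M0 := by simpa [Real.norm_eq_abs] using hM0 y hy
        _ ≤ M := le_max_left _ _
    -- continuity of D' at 0
    have hca : ContinuousAt (deriv D) 0 := hD'cont.continuousAt (hU.mem_nhds h0U)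
    obtain ⟨δ₁, hδ₁pos, hδ₁⟩ := Metric.continuousAt_iff.mp hca (ν - lam) (by linarith)
    -- choice of δ
    set δ := min (a/2) (min (δ₁/2) ((lam - ν^2)/(2*(M+1)))) with hδdef
    have hδpos : 0 < δ := by
      apply lt_min (by linarith)
      apply lt_min (by linarith)
      apply div_pos (by linarith) (by linarith)
    have hδa2 : δ ≤ a/2 := min_le_left _ _
    have hδδ₁ : δ < δ₁ := lt_of_le_of_lt (le_trans (min_le_right _ _) (min_le_left _ _)) (by linarith)
    have hδM : ν^2 + M*δ < lam := by
      have h1 : δ ≤ (lam - ν^2)/(2*(M+1)) := le_trans (min_le_right _ _) (min_le_right _ _)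
      have h2 : M*δ ≤ M * ((lam - ν^2)/(2*(M+1))) := mul_le_mul_of_nonneg_left h1 hM
      have h3 : M * ((lam - ν^2)/(2*(M+1))) < lam - ν^2 := by
        rw [div_eq_inv_mul, ← mul_assoc]
        have hM1 : 0 < M + 1 := by linarith
        rw [show M * (2*(M+1))⁻¹ * (lam - ν^2) < lam - ν^2 ↔
          (M * (2*(M+1))⁻¹) * (lam - ν^2) < 1 * (lam - ν^2) by rw [one_mul]]
        apply mul_lt_mul_of_pos_right _ (by linarith)
        rw [mul_inv_lt_iff₀ (by linarith)]
        linarith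
      linarith
    set J := Set.Icc (-δ) δ with hJdef
    have hJU : J ⊆ Set.Ioo (-a) a := by
      intro y hy
      constructor
      · calc -a < -(a/2) := by linarith
          _ ≤ -δ := by linarith
          _ ≤ y := hy.1
      · calc y ≤ δ := hy.2
          _ ≤ a/2 := hδa2
          _ < a := by linarith
    have hJJ0 : J ⊆ Set.Icc (-(a/2)) (a/2) := by
      intro y hy
      exact ⟨by linarith [hy.1], by linarith [hy.2]⟩
    have hD'ν : ∀ y ∈ J, |deriv D y| ≤ ν := by
      intro y hy
      have hdist : dist y 0 < δ₁ := by
        rw [Real.dist_eq, sub_zero]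
        calc |y| ≤ δ := abs_le.mpr ⟨hy.1, hy.2⟩
          _ < δ₁ := hδδ₁
      have := hδ₁ hdist
      rw [Real.dist_eq, hlam] at this
      calc |deriv D y| = |lam + (deriv D y - lam)| := by ring_nf
        _ ≤ |lam| + |deriv D y - lam| := abs_add_le _ _
        _ ≤ lam + (ν - lam) := by
            rw [abs_of_pos hlam0]
            linarith [le_of_lt this]
        _ = ν := by ring
    have hD''M : ∀ y ∈ J, |deriv (deriv D) y| ≤ M := fun y hy => hM0' y (hJJ0 hy)
    -- |D y| ≤ ν |y| on J via MVT
    have hDlip : ∀ y ∈ J, |D y| ≤ ν * |y| := by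
      intro y hy
      have h0J : (0:ℝ) ∈ J := Set.mem_Icc.mpr ⟨by linarith, le_of_lt hδpos⟩
      have := Convex.norm_image_sub_le_of_norm_hasDerivWithin_le
        (f := D) (f' := deriv D) (s := J)
        (fun z hz => (((hD2.differentiableOn (by norm_num)).differentiableAt
          (hU.mem_nhds (hJU hz))).hasDerivAt).hasDerivWithinAt)
        (fun z hz => by simpa [Real.norm_eq_abs] using hD'ν z hz)
        (hs := convex_Icc _ _) h0J hy
      rw [hD0, sub_zero, sub_zero] at this
      simpa [Real.norm_eq_abs] using this
    have hmapsJ : ∀ y ∈ J, D y ∈ J := by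
      intro y hy
      have h1 : |D y| ≤ ν * |y| := hDlip y hy
      have h2 : |y| ≤ δ := abs_le.mpr ⟨hy.1, hy.2⟩
      have h3 : |D y| ≤ δ := by nlinarith
      exact Set.mem_Icc.mpr (abs_le.mp h3)
    -- |D' y - lam| ≤ M |y| on J via MVT for D'
    have hD'lip : ∀ y ∈ J, |deriv D y - lam| ≤ M * |y| := by
      intro y hy
      have h0J : (0:ℝ) ∈ J := Set.mem_Icc.mpr ⟨by linarith, le_of_lt hδpos⟩
      have := Convex.norm_image_sub_le_of_norm_hasDerivWithin_le
        (f := deriv D) (f' := deriv (deriv D)) (s := J)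
        (fun z hz => (((hD'C1.differentiableOn one_ne_zero).differentiableAt
          (hU.mem_nhds (hJU hz))).hasDerivAt).hasDerivWithinAt)
        (fun z hz => by simpa [Real.norm_eq_abs] using hD''M z hz)
        (hs := convex_Icc _ _) h0J hy
      rw [hlam, sub_zero] at this
      simpa [Real.norm_eq_abs] using this
    have hIU : Set.Ioo (-δ) δ ⊆ Set.Ioo (-a) a := fun y hy => hJU (Set.Ioo_subset_Icc_self hy)
    -- ===== outer induction =====
    have claim : ∀ j : ℕ, 1 ≤ j → j ≤ k → ContDiffOn ℝ j h (Set.Ioo (-a) a) := by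
      intro j
      induction j with
      | zero => omega
      | succ j ih =>
        intro _ hjk
        by_cases hj0 : j = 0
        · subst hj0; exact_mod_cast hh
        have hj1 : 1 ≤ j := Nat.one_le_iff_ne_zero.mpr hj0
        have hhj : ContDiffOn ℝ j h (Set.Ioo (-a) a) := ih hj1 (by omega)
        have hDjk : ContDiffOn ℝ (j+1 : ℕ) D (Set.Ioo (-a) a) :=
          hDk.of_le (by exact_mod_cast hjk)
        -- we will produce local C^{j+1} smoothness on Ioo (-δ) δ, then propagate
        suffices hloc : ContDiffOn ℝ (j+1 : ℕ) h (Set.Ioo (-δ) δ) by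
          apply propagate_smoothness ha hδpos (by linarith) hlamne hDjk (by omega) hDU hD0
            hcontract hSch hloc
        by_cases hj1' : j = 1
        · -- ===== case j = 1 =====
          subst hj1'
          set u0 : ℝ → ℝ := fun x => lam⁻¹ * deriv D x - 1 with hu0def
          have hu0C : ContDiffOn ℝ 1 u0 (Set.Ioo (-a) a) :=
            (contDiffOn_const.mul hD'C1).sub contDiffOn_const
          obtain ⟨hzero, hbnd⟩ := useq_bound_j1 hU hD2 hDU hδpos hJU hmapsJ hlam0 hν0 hM
            hD0 hlam hD'ν hD''M
          set θ := (ν^2 + M*δ)/lam with hθdef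
          have hθ0 : 0 ≤ θ := by positivity
          have hθ1 : θ < 1 := (div_lt_one hlam0).mpr hδM
          set A := max (δ * (M/lam)) (M/lam) with hAdef
          have hbound : ∀ n, ∀ x ∈ J, |useq D lam 1 u0 n x| ≤ A * θ^n ∧
              |deriv (useq D lam 1 u0 n) x| ≤ A * θ^n := by
            intro n x hx
            obtain ⟨b1, b2⟩ := hbnd n x hx
            constructor
            · exact le_trans b1 (mul_le_mul_of_nonneg_right (le_max_left _ _) (by positivity))
            · exact le_trans b2 (mul_le_mul_of_nonneg_right (le_max_right _ _) (by positivity))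
          obtain ⟨g, hgdef, hgC1, hgcont, hgshift⟩ :=
            useq_series hU hD2 hDU hu0C hδpos hJU hmapsJ hθ0 hθ1 hbound
          have hg0 : g 0 = 0 := by
            rw [hgdef 0]
            calc ∑' n, useq D lam 1 u0 n 0 = ∑' (n : ℕ), (0:ℝ) := by
                  congr 1; funext n; exact hzero n
              _ = 0 := tsum_zero
          set G : ℝ → ℝ := fun x => 1 + g x with hGdef
          have hGfix : ∀ x ∈ J, G x = lam⁻¹ * G (D x) * deriv D x := by
            intro x hx
            have hs := hgshift x hx
            rw [pow_one] at hs
            show 1 + g x = lam⁻¹ * (1 + g (D x)) * deriv D x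
            rw [hs, hu0def]
            ring
          have hE1 := schroder_deriv_one hU hDU hlamne (hD2.of_le (by norm_num)) hh hSch
          set w : ℝ → ℝ := fun x => deriv h x - G x with hwdef
          have hweq : ∀ x ∈ J, w x = lam⁻¹ * w (D x) * deriv D x := by
            intro x hx
            show deriv h x - G x = lam⁻¹ * (deriv h (D x) - G (D x)) * deriv D x
            rw [hE1 x (hJU hx), hGfix x hx]
            ring
          have hwcont : ContinuousOn w J := by
            apply ContinuousOn.sub
            · exact (hh.continuousOn_deriv_of_isOpen hU le_rfl).mono hJU
            · exact continuousOn_const.add hgcont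
          have hw0 : w 0 = 0 := by
            show deriv h 0 - (1 + g 0) = 0
            rw [hh'0, hg0]; ring
          have hwzero := uniq_product hδpos hlam0 hν0 hν1 hM hmapsJ hDlip hD'lip hwcont hw0 hweq
          have hderiv_eq : ∀ x ∈ Set.Ioo (-δ) δ, deriv h x = G x := by
            intro x hx
            have := hwzero x (Set.Ioo_subset_Icc_self hx)
            show deriv h x = G x
            have : deriv h x - G x = 0 := this
            linarith
          have hGC1 : ContDiffOn ℝ 1 G (Set.Ioo (-δ) δ) := contDiffOn_const.add hgC1
          apply aux_contDiffOn_of_iteratedDeriv isOpen_Ioo 1 h (by exact_mod_cast hh.mono hIU)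
          rw [iteratedDeriv_one]
          exact hGC1.congr hderiv_eq
        · -- ===== case j ≥ 2 =====
          have hj2 : 2 ≤ j := by omega
          have hθj : ν^j / lam < 1 := by
            rw [div_lt_one hlam0]
            calc ν^j ≤ ν^2 := pow_le_pow_of_le_one (le_of_lt hν0) (le_of_lt hν1) hj2
              _ < lam := hν2
          obtain ⟨r, hrC, hreq⟩ := schroder_iterated_deriv hU hDU hlamne hDk hhj hj1
            (by exact_mod_cast hjk) hSch
          set u0 : ℝ → ℝ := fun x => lam⁻¹ * r (D x) * (deriv D x)^j with hu0def
          have hu0C : ContDiffOn ℝ 1 u0 (Set.Ioo (-a) a) := by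
            apply ContDiffOn.mul
            · exact contDiffOn_const.mul (hrC.comp (hD2.of_le (by norm_num)) hDU)
            · exact hD'C1.pow j
          obtain ⟨B, hB⟩ := (isCompact_Icc (a := -δ) (b := δ)).exists_bound_of_continuousOn
            (hu0C.continuousOn.mono hJU)
          obtain ⟨a0, ha0⟩ := (isCompact_Icc (a := -δ) (b := δ)).exists_bound_of_continuousOn
            ((hu0C.continuousOn_deriv_of_isOpen hU le_rfl).mono hJU)
          obtain ⟨A, hA⟩ := useq_bound_j2 hU hD2 hDU hu0C hδpos hJU hmapsJ hlam0 hν0 hν1 hM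
            hD'ν hD''M hθj
            (fun x hx => by simpa [Real.norm_eq_abs] using hB x hx)
            (fun x hx => by simpa [Real.norm_eq_abs] using ha0 x hx)
          have hθ0 : 0 ≤ ν^j/lam := by positivity
          obtain ⟨g, hgdef, hgC1, hgcont, hgshift⟩ :=
            useq_series hU hD2 hDU hu0C hδpos hJU hmapsJ hθ0 hθj hA
          set G : ℝ → ℝ := fun x => r x + g x with hGdef
          have hGfix : ∀ x ∈ J, G x = lam⁻¹ * G (D x) * (deriv D x)^j + r x := by
            intro x hx
            have hs := hgshift x hx
            show r x + g x = lam⁻¹ * (r (D x) + g (D x)) * (deriv D x)^j + r x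
            rw [hs, hu0def]
            ring
          set w : ℝ → ℝ := fun x => iteratedDeriv j h x - G x with hwdef
          have hweq : ∀ x ∈ J, w x = lam⁻¹ * w (D x) * (deriv D x)^j := by
            intro x hx
            show iteratedDeriv j h x - G x = lam⁻¹ * (iteratedDeriv j h (D x) - G (D x)) * (deriv D x)^j
            rw [hreq x (hJU hx), hGfix x hx]
            ring
          have hitdcont : ContinuousOn (iteratedDeriv j h) (Set.Ioo (-a) a) := by
            have := aux_iteratedDeriv_contDiffOn hU j h 0 (by simpa using hhj)
            exact this.continuousOn
          have hwcont : ContinuousOn w J := by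
            apply ContinuousOn.sub (hitdcont.mono hJU)
            exact (hrC.continuousOn.mono hJU).add hgcont
          have hwzero := uniq_contraction hδpos hlam0 hν0 hmapsJ hD'ν hθj hwcont hweq
          have hitd_eq : ∀ x ∈ Set.Ioo (-δ) δ, iteratedDeriv j h x = G x := by
            intro x hx
            have : iteratedDeriv j h x - G x = 0 := hwzero x (Set.Ioo_subset_Icc_self hx)
            linarith
          have hGC1 : ContDiffOn ℝ 1 G (Set.Ioo (-δ) δ) := (hrC.mono hIU).add hgC1
          apply aux_contDiffOn_of_iteratedDeriv isOpen_Ioo j h (hhj.mono hIU)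
          exact hGC1.congr hitd_eq
    exact claim k (by omega) le_rfl
end

section
/- Assume moreover that (D'(x))² x − D(x) · (d/dx)(D'(x) x) > 0 for all x ∈ (0,a], i.e. the function ρ(x) = D(x)/(D'(x) x) has positive derivative on (0,a]. Then the solution g of Julia's equation is strictly increasing on (0,a]: for all x, y ∈ (0,a] with x < y, g(x) < g(y). -/
/-- **Monotonicity (Lemma 3.4).** Let `D : [0,a] → ℝ` be `C²` with `D 0 = 0`,
`0 < D' < d < 1` on `[0,a]`, `D x < x` on `(0,a]`, `D''(0) ≠ 0`, and let `g` be the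
solution of Julia's equation with `g 0 = 0`, `g'(0) = 1`, given by the convergent
infinite product `g(x) = x ∏_{n=0}^∞ ρ(Dⁿ(x))` with `ρ(y) = D(y)/(D'(y) y)` for
`y ≠ 0`, `ρ(0) = 1`.  If `(D'(x))² x − D(x) (D'(x) x)' > 0` on `(0,a]` then `g` is
strictly increasing on `(0,a]`. -/
theorem julia_solution_strictMono
    (a d : ℝ) (ha : 0 < a) (hd0 : 0 < d) (hd1 : d < 1) (D : ℝ → ℝ)
    (hD : ContDiffOn ℝ 2 D (Set.Icc 0 a))
    (hD0 : D 0 = 0)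
    (hD' : ∀ x ∈ Set.Icc 0 a,
      0 < derivWithin D (Set.Icc 0 a) x ∧ derivWithin D (Set.Icc 0 a) x < d)
    (hDlt : ∀ x ∈ Set.Ioc 0 a, D x < x)
    (hD''0 : derivWithin (derivWithin D (Set.Icc 0 a)) (Set.Icc 0 a) 0 ≠ 0)
    (rho : ℝ → ℝ)
    (hrho : ∀ y : ℝ,
      rho y = if y = 0 then 1 else D y / (derivWithin D (Set.Icc 0 a) y * y))
    (g : ℝ → ℝ)
    (hg0 : g 0 = 0)
    (hg'0 : HasDerivWithinAt g 1 (Set.Icc 0 a) 0)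
    (hJ : ∀ x ∈ Set.Icc 0 a, g (D x) = derivWithin D (Set.Icc 0 a) x * g x)
    (hgprod : ∀ x ∈ Set.Icc 0 a,
      Filter.Tendsto (fun n : ℕ => x * ∏ j ∈ Finset.range n, rho (D^[j] x))
        Filter.atTop (nhds (g x)))
    (hmono : ∀ x ∈ Set.Ioc 0 a,
      0 < (derivWithin D (Set.Icc 0 a) x) ^ 2 * x -
        D x * derivWithin (fun y => derivWithin D (Set.Icc 0 a) y * y)
          (Set.Icc 0 a) x) :
    StrictMonoOn g (Set.Ioc 0 a) := by
  set s := Set.Icc (0:ℝ) a with hsdef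
  set D' := derivWithin D s with hD'def
  have hmem : ∀ x ∈ Set.Ioc 0 a, x ∈ s := fun x hx => ⟨hx.1.le, hx.2⟩
  have h0s : (0:ℝ) ∈ s := ⟨le_rfl, ha.le⟩
  have hDdiff : DifferentiableOn ℝ D s := hD.differentiableOn two_ne_zero
  have hD'c1 : ContDiffOn ℝ 1 D' s := hD.derivWithin (uniqueDiffOn_Icc ha) (by norm_num)
  have hD'diff : DifferentiableOn ℝ D' s := hD'c1.differentiableOn one_ne_zero
  have hnhds : ∀ x ∈ Set.Ioo 0 a, s ∈ nhds x := fun x hx => Icc_mem_nhds hx.1 hx.2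
  have hderivD : ∀ x ∈ Set.Ioo 0 a, HasDerivAt D (D' x) x := fun x hx =>
    ((hDdiff x ⟨hx.1.le, hx.2.le⟩).hasDerivWithinAt).hasDerivAt (hnhds x hx)
  -- D strictly monotone on [0,a]
  have hmonoD : StrictMonoOn D s :=
    strictMonoOn_of_deriv_pos (convex_Icc 0 a) hD.continuousOn (fun x hx => by
      rw [interior_Icc] at hx
      rw [(hderivD x hx).deriv]
      exact (hD' x ⟨hx.1.le, hx.2.le⟩).1)
  have hDpos : ∀ x ∈ Set.Ioc 0 a, 0 < D x := fun x hx => by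
    have := hmonoD h0s (hmem x hx) hx.1
    rwa [hD0] at this
  have hmaps : ∀ x ∈ Set.Ioc 0 a, D x ∈ Set.Ioc 0 a := fun x hx =>
    ⟨hDpos x hx, (hDlt x hx).le.trans hx.2⟩
  -- D t < d * t on (0,a]
  have hDd : ∀ t ∈ Set.Ioc 0 a, D t ≤ d * t := by
    intro t ht
    have hh : StrictMonoOn (fun t => d * t - D t) s := by
      apply strictMonoOn_of_deriv_pos (convex_Icc 0 a)
      · exact (continuousOn_const.mul continuousOn_id).sub hD.continuousOn
      · intro x hx
        rw [interior_Icc] at hx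
        have h1 : HasDerivAt (fun t => d * t - D t) (d - D' x) x := by
          exact (((hasDerivAt_id' x).const_mul d).sub (hderivD x hx)).congr_deriv (by ring)
        rw [h1.deriv]
        have := (hD' x ⟨hx.1.le, hx.2.le⟩).2
        linarith
    have := hh h0s (hmem t ht) ht.1
    simp only [hD0, mul_zero, sub_zero] at this
    linarith
  -- iterates stay in (0,a] and are bounded by d^n * x
  have hiterm : ∀ (n : ℕ), ∀ z ∈ Set.Ioc 0 a, D^[n] z ∈ Set.Ioc 0 a := by
    intro n
    induction n with
    | zero => simpa using fun z hz => hz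
    | succ n ih =>
      intro z hz
      rw [Function.iterate_succ_apply']
      exact hmaps _ (ih z hz)
  have hiterb : ∀ (n : ℕ), ∀ z ∈ Set.Ioc 0 a, D^[n] z ≤ d ^ n * z := by
    intro n
    induction n with
    | zero => simp
    | succ n ih =>
      intro z hz
      rw [Function.iterate_succ_apply']
      calc D (D^[n] z) ≤ d * D^[n] z := hDd _ (hiterm n z hz)
        _ ≤ d * (d ^ n * z) := by
            have := ih z hz
            nlinarith
        _ = d ^ (n + 1) * z := by ring
  have hiter0 : ∀ z ∈ Set.Ioc 0 a, Filter.Tendsto (fun n => D^[n] z) Filter.atTop (nhds 0) := by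
    intro z hz
    apply squeeze_zero (fun n => (hiterm n z hz).1.le) (fun n => hiterb n z hz)
    have := (tendsto_pow_atTop_nhds_zero_of_lt_one hd0.le hd1).mul_const z
    simpa using this
  -- rho positive on (0,a]
  have hrhopos : ∀ y ∈ Set.Ioc 0 a, 0 < rho y := by
    intro y hy
    rw [hrho y, if_neg hy.1.ne']
    exact div_pos (hDpos y hy) (mul_pos (hD' y (hmem y hy)).1 hy.1)
  -- rho strictly monotone on (0,a]
  have hphidiff : DifferentiableOn ℝ (fun y => D' y * y) s :=
    hD'diff.mul differentiableOn_id
  have hrho_eq : Set.EqOn rho (fun y => D y / (D' y * y)) (Set.Ioc 0 a) := fun y hy => by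
    rw [hrho y, if_neg hy.1.ne']
  have hrho_mono : StrictMonoOn rho (Set.Ioc 0 a) := by
    apply strictMonoOn_of_deriv_pos (convex_Ioc 0 a)
    · apply ContinuousOn.congr _ hrho_eq
      apply ContinuousOn.div
      · exact hD.continuousOn.mono (fun y hy => hmem y hy)
      · exact (hphidiff.continuousOn).mono (fun y hy => hmem y hy)
      · intro y hy
        exact (mul_pos (hD' y (hmem y hy)).1 hy.1).ne'
    · intro x hx
      rw [interior_Ioc] at hx
      have hxs : x ∈ s := ⟨hx.1.le, hx.2.le⟩
      have hxIoc : x ∈ Set.Ioc 0 a := ⟨hx.1, hx.2.le⟩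
      have hphi : HasDerivAt (fun y => D' y * y) (derivWithin (fun y => D' y * y) s x) x :=
        ((hphidiff x hxs).hasDerivWithinAt).hasDerivAt (hnhds x hx)
      have hDx : HasDerivAt D (D' x) x := hderivD x hx
      have hpphi : 0 < D' x * x := mul_pos (hD' x hxs).1 hx.1
      have hq : HasDerivAt (fun y => D y / (D' y * y))
          ((D' x * (D' x * x) - D x * derivWithin (fun y => D' y * y) s x) / (D' x * x) ^ 2) x :=
        hDx.div hphi hpphi.ne'
      have heq : rho =ᶠ[nhds x] fun y => D y / (D' y * y) := by
        filter_upwards [Ioo_mem_nhds hx.1 hx.2] with y hy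
        exact hrho_eq ⟨hy.1, hy.2.le⟩
      rw [heq.deriv_eq, hq.deriv]
      apply div_pos _ (pow_pos hpphi 2)
      have := hmono x hxIoc
      nlinarith
  -- iterate monotonicity
  have hitermono : ∀ (n : ℕ), ∀ x ∈ Set.Ioc 0 a, ∀ y ∈ Set.Ioc 0 a, x < y →
      D^[n] x < D^[n] y := by
    intro n
    induction n with
    | zero => simpa using fun x _ y _ h => h
    | succ n ih =>
      intro x hx y hy hxy
      rw [Function.iterate_succ_apply', Function.iterate_succ_apply']
      exact hmonoD (hmem _ (hiterm n x hx)) (hmem _ (hiterm n y hy)) (ih x hx y hy hxy)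
  -- g positive near 0
  have hslope : Filter.Tendsto (slope g 0) (nhdsWithin 0 (s \ {0})) (nhds 1) :=
    hasDerivWithinAt_iff_tendsto_slope.1 hg'0
  have hev : ∀ᶠ t in nhdsWithin 0 (s \ {0}), 0 < slope g 0 t :=
    hslope (Ioi_mem_nhds zero_lt_one)
  have hev' : ∀ᶠ t in nhds 0, t ∈ s \ {0} → 0 < slope g 0 t :=
    eventually_nhdsWithin_iff.1 hev
  obtain ⟨ε, hε, hball⟩ := Metric.eventually_nhds_iff.1 hev'
  have hgsmall : ∀ t, 0 < t → t < ε → t ≤ a → 0 < g t := by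
    intro t ht0 htε hta
    have hts : t ∈ s \ {0} := ⟨⟨ht0.le, hta⟩, ht0.ne'⟩
    have hdist : dist t 0 < ε := by
      rw [Real.dist_eq, sub_zero, abs_of_pos ht0]; exact htε
    have hsl := hball hdist hts
    rw [slope_def_field] at hsl
    have : 0 < (g t - g 0) / (t - 0) := hsl
    rw [hg0, sub_zero, sub_zero] at this
    exact (div_pos_iff.1 this).resolve_right (fun h => absurd ht0 (not_lt.2 h.2.le)) |>.1
  -- descending positivity through Julia's equation
  have hdesc : ∀ (n : ℕ), ∀ x ∈ Set.Ioc 0 a, 0 < g (D^[n] x) → 0 < g x := by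
    intro n
    induction n with
    | zero => simpa using fun x _ h => h
    | succ n ih =>
      intro x hx hpos
      rw [Function.iterate_succ_apply] at hpos
      have hgDx : 0 < g (D x) := ih (D x) (hmaps x hx) hpos
      have hJx := hJ x (hmem x hx)
      have hd'pos := (hD' x (hmem x hx)).1
      nlinarith [hJx ▸ hgDx]
  have hgpos : ∀ x ∈ Set.Ioc 0 a, 0 < g x := by
    intro x hx
    have hlt := (hiter0 x hx).eventually_lt_const hε
    obtain ⟨n, hn⟩ := hlt.exists
    have hDn := hiterm n x hx
    exact hdesc n x hx (hgsmall _ hDn.1 hn hDn.2)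
  -- main argument
  intro x hx y hy hxy
  set c := (y * rho y) / (x * rho x) with hcdef
  have hxρ : 0 < x * rho x := mul_pos hx.1 (hrhopos x hx)
  have hyρ : 0 < y * rho y := mul_pos hy.1 (hrhopos y hy)
  have hlt : x * rho x < y * rho y :=
    mul_lt_mul'' hxy (hrho_mono hx hy hxy) hx.1.le (hrhopos x hx).le
  have hc1 : (1:ℝ) < c := (one_lt_div hxρ).2 hlt
  have hcc : c * (x * rho x) = y * rho y := div_mul_cancel₀ _ hxρ.ne'
  have hPle : ∀ n : ℕ,
      c * ((fun n : ℕ => x * ∏ j ∈ Finset.range n, rho (D^[j] x)) (n + 1)) ≤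
      (fun n : ℕ => y * ∏ j ∈ Finset.range n, rho (D^[j] y)) (n + 1) := by
    intro n
    simp only
    rw [Finset.prod_range_succ', Finset.prod_range_succ']
    simp only [Function.iterate_zero_apply]
    have hprodle : ∏ j ∈ Finset.range n, rho (D^[j + 1] x) ≤
        ∏ j ∈ Finset.range n, rho (D^[j + 1] y) := by
      apply Finset.prod_le_prod
      · intro j _
        exact (hrhopos _ (hiterm (j + 1) x hx)).le
      · intro j _
        exact (hrho_mono (hiterm (j + 1) x hx) (hiterm (j + 1) y hy)
          (hitermono (j + 1) x hx y hy hxy)).le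
    calc c * (x * ((∏ j ∈ Finset.range n, rho (D^[j + 1] x)) * rho x))
        = (c * (x * rho x)) * ∏ j ∈ Finset.range n, rho (D^[j + 1] x) := by ring
      _ = (y * rho y) * ∏ j ∈ Finset.range n, rho (D^[j + 1] x) := by rw [hcc]
      _ ≤ (y * rho y) * ∏ j ∈ Finset.range n, rho (D^[j + 1] y) :=
          mul_le_mul_of_nonneg_left hprodle hyρ.le
      _ = y * ((∏ j ∈ Finset.range n, rho (D^[j + 1] y)) * rho y) := by ring
  have h1 := ((hgprod x (hmem x hx)).const_mul c).comp (Filter.tendsto_add_atTop_nat 1)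
  have h2 := (hgprod y (hmem y hy)).comp (Filter.tendsto_add_atTop_nat 1)
  have hle : c * g x ≤ g y := le_of_tendsto_of_tendsto' h1 h2 hPle
  have hgx := hgpos x hx
  nlinarith
end

section
/- Let B > 0, r > 0, and let D₁, D₂ : [0,B] → ℝ be strictly increasing functions with D₁(0) = D₂(0) = 0, D₁ of class C¹, D₂ of class C², Dᵢ'(x) ≥ r for all x ∈ [0,B] (i = 1,2), and D₁(B) ≤ D₂(B). Then for every s ∈ [0, D₁(B)], |D₁'(D₁^{-1}(s)) − D₂'(D₂^{-1}(s))| ≤ sup_{x ∈ [0,B]} |D₁'(x) − D₂'(x)| + (1/r) · sup_{x ∈ [0,B]} |D₂''(x)| · sup_{x ∈ [0,B]} |D₁(x) − D₂(x)|. -/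
/-- **Lemma 4.1(ii).** Let `D₁, D₂ : [0,B] → ℝ` be strictly increasing with
`D₁ 0 = D₂ 0 = 0`, `D₁` of class `C¹`, `D₂` of class `C²`, `Dᵢ' ≥ r > 0` on `[0,B]`
(`i = 1,2`) and `D₁ B ≤ D₂ B`.  Then for every `s ∈ [0, D₁ B]`,
`|D₁'(D₁⁻¹ s) − D₂'(D₂⁻¹ s)| ≤ ‖D₁' − D₂'‖_∞ + (1/r)‖D₂''‖_∞ ‖D₁ − D₂‖_∞`. -/
theorem inverse_derivative_stability
    (B r : ℝ) (hB : 0 < B) (hr : 0 < r)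
    (D₁ D₂ Dinv₁ Dinv₂ : ℝ → ℝ)
    (hD₁ : ContDiffOn ℝ 1 D₁ (Set.Icc 0 B)) (hD₂ : ContDiffOn ℝ 2 D₂ (Set.Icc 0 B))
    (hD₁mono : StrictMonoOn D₁ (Set.Icc 0 B)) (hD₂mono : StrictMonoOn D₂ (Set.Icc 0 B))
    (hD₁0 : D₁ 0 = 0) (hD₂0 : D₂ 0 = 0)
    (hD₁' : ∀ x ∈ Set.Icc 0 B, r ≤ derivWithin D₁ (Set.Icc 0 B) x)
    (hD₂' : ∀ x ∈ Set.Icc 0 B, r ≤ derivWithin D₂ (Set.Icc 0 B) x)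
    (hDB : D₁ B ≤ D₂ B)
    (hinv₁l : ∀ x ∈ Set.Icc 0 B, Dinv₁ (D₁ x) = x)
    (hinv₁r : ∀ s ∈ Set.Icc 0 (D₁ B), Dinv₁ s ∈ Set.Icc 0 B ∧ D₁ (Dinv₁ s) = s)
    (hinv₂l : ∀ x ∈ Set.Icc 0 B, Dinv₂ (D₂ x) = x)
    (hinv₂r : ∀ s ∈ Set.Icc 0 (D₂ B), Dinv₂ s ∈ Set.Icc 0 B ∧ D₂ (Dinv₂ s) = s) :
    ∀ s ∈ Set.Icc 0 (D₁ B),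
      |derivWithin D₁ (Set.Icc 0 B) (Dinv₁ s) - derivWithin D₂ (Set.Icc 0 B) (Dinv₂ s)| ≤
        (⨆ x : Set.Icc (0 : ℝ) B,
          |derivWithin D₁ (Set.Icc 0 B) x - derivWithin D₂ (Set.Icc 0 B) x|) +
        (1 / r) *
          (⨆ x : Set.Icc (0 : ℝ) B,
            |derivWithin (derivWithin D₂ (Set.Icc 0 B)) (Set.Icc 0 B) x|) *
          (⨆ x : Set.Icc (0 : ℝ) B, |D₁ x - D₂ x|) := by
  intro s hs
  set I : Set ℝ := Set.Icc (0 : ℝ) B with hIdef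
  have hud : UniqueDiffOn ℝ I := uniqueDiffOn_Icc hB
  have hs₂ : s ∈ Set.Icc 0 (D₂ B) := ⟨hs.1, hs.2.trans hDB⟩
  obtain ⟨hx₁mem, hx₁⟩ := hinv₁r s hs
  obtain ⟨hx₂mem, hx₂⟩ := hinv₂r s hs₂
  set x₁ := Dinv₁ s with hx₁def
  set x₂ := Dinv₂ s with hx₂def
  set d₁ := derivWithin D₁ I with hd₁def
  set d₂ := derivWithin D₂ I with hd₂def
  set d₂' := derivWithin d₂ I with hd₂'def
  -- boundedness helper
  have key : ∀ f : ℝ → ℝ, ContinuousOn f I →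
      BddAbove (Set.range fun x : I => |f x|) := by
    intro f hf
    have h1 : (Set.range fun x : I => |f x|) = (fun x => |f x|) '' I :=
      Set.range_restrict (fun x => |f x|) I
    rw [h1]
    exact (isCompact_Icc.image_of_continuousOn hf.abs).bddAbove
  have hd₁cont : ContinuousOn d₁ I :=
    hD₁.continuousOn_derivWithin hud le_rfl
  have hd₂smooth : ContDiffOn ℝ 1 d₂ I :=
    hD₂.derivWithin hud (by norm_num)
  have hd₂cont : ContinuousOn d₂ I := hd₂smooth.continuousOn
  have hd₂diff : DifferentiableOn ℝ d₂ I := hd₂smooth.differentiableOn (by norm_num)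
  have hd₂'cont : ContinuousOn d₂' I :=
    hd₂smooth.continuousOn_derivWithin hud le_rfl
  have hbdd₁ : BddAbove (Set.range fun x : I => |d₁ x - d₂ x|) :=
    key _ (hd₁cont.sub hd₂cont)
  have hbdd₂ : BddAbove (Set.range fun x : I => |d₂' x|) := by
    have := key d₂' hd₂'cont
    simpa using this
  have hbdd₃ : BddAbove (Set.range fun x : I => |D₁ x - D₂ x|) :=
    key _ (hD₁.continuousOn.sub hD₂.continuousOn)
  set S₁ := ⨆ x : I, |d₁ x - d₂ x| with hS₁
  set S₂ := ⨆ x : I, |d₂' x| with hS₂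
  set S₃ := ⨆ x : I, |D₁ x - D₂ x| with hS₃
  have hS₂nonneg : 0 ≤ S₂ := by
    have := le_ciSup hbdd₂ (⟨0, Set.mem_Icc.mpr ⟨le_rfl, hB.le⟩⟩ : I)
    exact le_trans (abs_nonneg _) this
  -- second derivative bound (MVT)
  have hmvt2 : |d₂ x₁ - d₂ x₂| ≤ S₂ * |x₁ - x₂| := by
    have hbound : ∀ x ∈ I, ‖derivWithin d₂ I x‖ ≤ S₂ := by
      intro x hx
      have := le_ciSup hbdd₂ (⟨x, hx⟩ : I)
      simpa [Real.norm_eq_abs] using this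
    have := (convex_Icc (0:ℝ) B).norm_image_sub_le_of_norm_derivWithin_le
      hd₂diff hbound hx₂mem hx₁mem
    simpa [Real.norm_eq_abs] using this
  -- bound on |x₁ - x₂| via r ≤ D₂'
  have hmvtr : ∀ x ∈ I, ∀ y ∈ I, x ≤ y → r * (y - x) ≤ D₂ y - D₂ x := by
    apply (convex_Icc (0:ℝ) B).mul_sub_le_image_sub_of_le_deriv hD₂.continuousOn
      ((hD₂.differentiableOn (by norm_num)).mono interior_subset)
    intro x hx
    rw [interior_Icc] at hx
    have heq : derivWithin D₂ I x = deriv D₂ x :=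
      derivWithin_of_mem_nhds (Icc_mem_nhds hx.1 hx.2)
    rw [← heq]
    exact hD₂' x (Set.mem_Icc_of_Ioo hx)
  have hxdist : r * |x₁ - x₂| ≤ |D₂ x₁ - D₂ x₂| := by
    rcases le_total x₁ x₂ with h | h
    · have := hmvtr x₁ hx₁mem x₂ hx₂mem h
      rw [abs_sub_comm x₁ x₂, abs_of_nonneg (by linarith),
        abs_sub_comm (D₂ x₁) (D₂ x₂), abs_of_nonneg (by nlinarith)]
      linarith
    · have := hmvtr x₂ hx₂mem x₁ hx₁mem h
      rw [abs_of_nonneg (by linarith), abs_of_nonneg (by nlinarith)]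
      linarith
  have hDval : |D₂ x₁ - D₂ x₂| ≤ S₃ := by
    have : D₂ x₂ = D₁ x₁ := by rw [hx₂, hx₁]
    rw [this, abs_sub_comm]
    exact le_ciSup hbdd₃ (⟨x₁, hx₁mem⟩ : I)
  have hxdist' : |x₁ - x₂| ≤ (1 / r) * S₃ := by
    rw [one_div, inv_mul_eq_div, le_div_iff₀ hr]
    nlinarith [hxdist, hDval]
  have hterm1 : |d₁ x₁ - d₂ x₁| ≤ S₁ :=
    le_ciSup hbdd₁ (⟨x₁, hx₁mem⟩ : I)
  have habs : |d₁ x₁ - d₂ x₂| ≤ |d₁ x₁ - d₂ x₁| + |d₂ x₁ - d₂ x₂| :=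
    abs_sub_le _ _ _
  have hterm2 : |d₂ x₁ - d₂ x₂| ≤ (1 / r) * S₂ * S₃ := by
    calc |d₂ x₁ - d₂ x₂| ≤ S₂ * |x₁ - x₂| := hmvt2
      _ ≤ S₂ * ((1 / r) * S₃) :=
          mul_le_mul_of_nonneg_left hxdist' hS₂nonneg
      _ = (1 / r) * S₂ * S₃ := by ring
  linarith
end
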